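/- arXiv:2401.15831 — 5 statements merged into one kernel-verified Lean document; each statement's English description precedes it below -/
import Mathlib

section
/- Let N ≥ 2, let μ₁,…,μ_N > 0 be constants, let P₁,…,P_N ∈ ℕ, and let β ≥ 0. Then there exists a constant ε₀ = ε₀(μ₁,…,μ_N; P₁,…,P_N; β) > 0 with the following property: whenever real constants β_{ij} = β_{ji} (for i ≠ j, i,j = 1,…,N) satisfy β_{ij} ∈ [−ε₀, β], and u₁,…,u_N : ℝ³ → ℝ are radial functions of class C² such that for every j one has |u_j(x)| ≤ 1 for all x ∈ ℝ³, u_j is either identically zero or changes sign at most P_j times, and −Δu_j = μ_j u_j³ + Σ_{i≠j} β_{ij} u_i² u_j holds pointwise in ℝ³, then u_j ≡ 0 for every j = 1,…,N. -/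
open scoped BigOperators

/-- The Laplacian on `ℝ³`, written as the sum of second partial derivatives. -/
noncomputable def lap3 (u : EuclideanSpace ℝ (Fin 3) → ℝ) (x : EuclideanSpace ℝ (Fin 3)) : ℝ :=
  ∑ i : Fin 3, fderiv ℝ (fun y => fderiv ℝ u y (EuclideanSpace.single i 1)) x
    (EuclideanSpace.single i 1)

/-- A function on `ℝ³` is radial if it only depends on the norm. -/
def IsRadial (u : EuclideanSpace ℝ (Fin 3) → ℝ) : Prop :=
  ∃ v : ℝ → ℝ, ∀ x, u x = v ‖x‖

/-- There are `k + 1` points of `S`, with positive and strictly increasing norms, on which `u`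
successively changes sign `k` times. -/
def SignChangeWitnessOn (u : EuclideanSpace ℝ (Fin 3) → ℝ) (S : Set (EuclideanSpace ℝ (Fin 3))) (k : ℕ) : Prop :=
  ∃ x : Fin (k + 1) → EuclideanSpace ℝ (Fin 3),
    (∀ i, x i ∈ S) ∧ (∀ i, 0 < ‖x i‖) ∧
    (∀ i j : Fin (k + 1), i < j → ‖x i‖ < ‖x j‖) ∧
    (∀ i : Fin k, u (x i.castSucc) * u (x i.succ) < 0)

/-- A radial function changes sign at most `P` times on `S`. -/
def ChangesSignAtMostOn (u : EuclideanSpace ℝ (Fin 3) → ℝ) (S : Set (EuclideanSpace ℝ (Fin 3))) (P : ℕ) : Prop :=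
  ¬ SignChangeWitnessOn u S (P + 1)

/-- A radial function changes sign exactly `P` times on `S`. -/
def ChangesSignExactlyOn (u : EuclideanSpace ℝ (Fin 3) → ℝ) (S : Set (EuclideanSpace ℝ (Fin 3))) (P : ℕ) : Prop :=
  SignChangeWitnessOn u S P ∧ ¬ SignChangeWitnessOn u S (P + 1)


set_option linter.unusedVariables false
set_option linter.deprecated false

noncomputable def e₁ : EuclideanSpace ℝ (Fin 3) := EuclideanSpace.single (0:Fin 3) (1:ℝ)

lemma norm_smul_e₁ (r : ℝ) : ‖r • e₁‖ = |r| := by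
  rw [norm_smul, e₁, EuclideanSpace.norm_single]
  simp

lemma cube_bound (a b : ℝ) (ha : 0 ≤ a) (hb : 0 ≤ b) : a^2*b ≤ a^3 + b^3 := by
  rcases le_total a b with h | h
  · have h1 : a^2 ≤ b^2 := by nlinarith
    have h2 : a^2*b ≤ b^2*b := mul_le_mul_of_nonneg_right h1 hb
    nlinarith [pow_nonneg ha 3]
  · have h2 : a^2*b ≤ a^2*a := mul_le_mul_of_nonneg_left h (sq_nonneg a)
    nlinarith [pow_nonneg hb 3]

lemma sq_le_one_of_abs (x : ℝ) (h : |x| ≤ 1) : x^2 ≤ 1 := by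
  have h2 := abs_le.mp h
  nlinarith [h2.1, h2.2]


section
variable (u : EuclideanSpace ℝ (Fin 3) → ℝ)

lemma second_dir (hu : ContDiff ℝ 2 u) (x w : EuclideanSpace ℝ (Fin 3)) :
    fderiv ℝ (fun y => fderiv ℝ u y w) x w
      = deriv (deriv (fun t : ℝ => u (x + t • w))) 0 := by
  have hu1 : Differentiable ℝ u := hu.differentiable (by norm_num)
  have hF : Differentiable ℝ (fderiv ℝ u) :=
    (hu.fderiv_right (m := 1) (by norm_num)).differentiable (by norm_num)
  have hline : ∀ t : ℝ, HasDerivAt (fun t : ℝ => x + t • w) w t := by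
    intro t
    simpa using ((hasDerivAt_id t).smul_const w).const_add x
  -- first derivative of g
  have hg' : ∀ t : ℝ, HasDerivAt (fun t : ℝ => u (x + t • w))
      (fderiv ℝ u (x + t • w) w) t := by
    intro t
    exact ((hu1 (x + t • w)).hasFDerivAt).comp_hasDerivAt t (hline t)
  have hderivg : deriv (fun t : ℝ => u (x + t • w)) = fun t => fderiv ℝ u (x + t • w) w :=
    funext fun t => (hg' t).deriv
  -- second derivative
  have hh : HasDerivAt (fun t : ℝ => fderiv ℝ u (x + t • w)) (fderiv ℝ (fderiv ℝ u) x w) 0 := by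
    have hx0 : x + (0:ℝ) • w = x := by simp
    have := ((hF (x + (0:ℝ) • w)).hasFDerivAt).comp_hasDerivAt 0 (hline 0)
    rw [hx0] at this
    exact this
  have hh2 : HasDerivAt (fun t : ℝ => fderiv ℝ u (x + t • w) w)
      (fderiv ℝ (fderiv ℝ u) x w w) 0 := by
    have := hh.clm_apply (hasDerivAt_const 0 w)
    simpa using this
  rw [hderivg, hh2.deriv]
  rw [fderiv_clm_apply (hF x) (differentiableAt_const w)]
  simp

end

lemma sqrt_hasDeriv (r : ℝ) (hr : 0 < r) (t : ℝ) :
    HasDerivAt (fun t : ℝ => Real.sqrt (r^2 + t^2)) (t / Real.sqrt (r^2 + t^2)) t := by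
  have hpos : 0 < r^2 + t^2 := by positivity
  have h1 : HasDerivAt (fun t : ℝ => r^2 + t^2) (2*t) t := by
    simpa using ((hasDerivAt_pow 2 t).const_add (r^2))
  have h2 := (Real.hasDerivAt_sqrt (ne_of_gt hpos)).comp t h1
  refine h2.congr_deriv ?_
  field_simp

lemma lap3_radial (u : EuclideanSpace ℝ (Fin 3) → ℝ) (hu : ContDiff ℝ 2 u) (v : ℝ → ℝ)
    (hrad : ∀ x, u x = v ‖x‖) (r : ℝ) (hr : 0 < r) :
    lap3 u (r • e₁)
      = deriv (deriv (fun t => u (t • e₁))) r + 2 * (deriv (fun t => u (t • e₁)) r / r) := by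
  set V : ℝ → ℝ := fun t => u (t • e₁) with hVdef
  have hV : ContDiff ℝ 2 V := hu.comp (contDiff_id.smul contDiff_const)
  have hV' : ContDiff ℝ (1+1) V := by norm_num; exact hV
  have hV1 : Differentiable ℝ V := hV.differentiable (by norm_num)
  have hVd : ContDiff ℝ 1 (deriv V) := (contDiff_succ_iff_deriv.mp hV').2.2
  have hV2 : Differentiable ℝ (deriv V) := hVd.differentiable one_ne_zero
  have hVv : ∀ s : ℝ, 0 ≤ s → V s = v s := by
    intro s hs
    have : ‖s • e₁‖ = s := by
      rw [norm_smul, e₁, EuclideanSpace.norm_single]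
      simp [abs_of_nonneg hs]
    rw [hVdef]; simp only []
    rw [hrad, this]
  have key : ∀ i : Fin 3,
      deriv (deriv (fun t : ℝ => u (r • e₁ + t • EuclideanSpace.single i (1:ℝ)))) 0
        = if i = 0 then deriv (deriv V) r else deriv V r / r := by
    intro i
    by_cases hi : i = 0
    · subst hi
      have hfun : (fun t : ℝ => u (r • e₁ + t • EuclideanSpace.single (0:Fin 3) (1:ℝ)))
          = fun t => V (r + t) := by
        funext t
        have : r • e₁ + t • EuclideanSpace.single (0:Fin 3) (1:ℝ) = (r + t) • e₁ := by
          rw [e₁, add_smul]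
        rw [this]
      rw [hfun]
      simp only [if_pos rfl]
      have h1 : deriv (fun t : ℝ => V (r + t)) = fun t => deriv V (r + t) := by
        funext t
        have := ((hV1 (r + t)).hasDerivAt).comp t ((hasDerivAt_id t).const_add r)
        simpa [Function.comp_def] using this.deriv
      rw [h1]
      have := ((hV2 (r + 0)).hasDerivAt).comp 0 ((hasDerivAt_id 0).const_add r)
      simpa [Function.comp_def] using this.deriv
    · -- i ≠ 0
      have hnorm : ∀ t : ℝ, ‖(r • e₁ + t • EuclideanSpace.single i (1:ℝ))‖
          = Real.sqrt (r^2 + t^2) := by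
        intro t
        rw [EuclideanSpace.norm_eq]
        congr 1
        fin_cases i <;> simp_all [e₁, Fin.sum_univ_three, EuclideanSpace.single_apply,
          Real.norm_eq_abs, sq_abs] <;> ring
      set φ : ℝ → ℝ := fun t => Real.sqrt (r^2 + t^2) with hφdef
      have hφpos : ∀ t, 0 < φ t := fun t => Real.sqrt_pos.mpr (by positivity)
      have hφ0 : φ 0 = r := by
        rw [hφdef]; simp only []
        rw [Real.sqrt_eq_iff_eq_sq] <;> nlinarith [hr]
      have hfun : (fun t : ℝ => u (r • e₁ + t • EuclideanSpace.single i (1:ℝ)))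
          = fun t => V (φ t) := by
        funext t
        rw [hrad, hnorm t, hVv _ (Real.sqrt_nonneg _)]
      rw [hfun, if_neg hi]
      have hφ' : ∀ t, HasDerivAt φ (t / φ t) t := fun t => sqrt_hasDeriv r hr t
      have h1 : deriv (fun t => V (φ t)) = fun t => deriv V (φ t) * (t * (φ t)⁻¹) := by
        funext t
        have h := ((hV1 (φ t)).hasDerivAt).comp t (hφ' t)
        have h2 : HasDerivAt (fun t => V (φ t)) (deriv V (φ t) * (t / φ t)) t := h
        rw [h2.deriv, div_eq_mul_inv]
      rw [h1]
      have hA : HasDerivAt (fun t => deriv V (φ t)) (deriv (deriv V) (φ 0) * (0 / φ 0)) 0 :=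
        ((hV2 (φ 0)).hasDerivAt).comp 0 (hφ' 0)
      have hB : HasDerivAt (fun t : ℝ => t * (φ t)⁻¹)
          (1 * (φ 0)⁻¹ + 0 * (-(0 / φ 0) / (φ 0)^2)) 0 := by
        exact (hasDerivAt_id 0).mul ((hφ' 0).inv (ne_of_gt (hφpos 0)))
      have hAB := hA.fun_mul hB
      rw [hAB.deriv]
      rw [hφ0]
      simp
      ring
  -- assemble
  rw [lap3]
  have heq : ∀ i : Fin 3,
      fderiv ℝ (fun y => fderiv ℝ u y (EuclideanSpace.single i 1)) (r • e₁)
        (EuclideanSpace.single i 1)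
      = if i = 0 then deriv (deriv V) r else deriv V r / r := by
    intro i
    rw [second_dir u hu (r • e₁) (EuclideanSpace.single i 1)]
    exact key i
  rw [Fin.sum_univ_three, heq 0, heq 1, heq 2, if_pos rfl,
    if_neg (by decide : ¬(1:Fin 3) = 0), if_neg (by decide : ¬(2:Fin 3) = 0)]
  ring


lemma uc (f q : ℝ → ℝ) (hf1 : Differentiable ℝ f) (hf2 : Differentiable ℝ (deriv f))
    (Q : ℝ) (hQ : ∀ r, |q r| ≤ Q)
    (hode : ∀ r : ℝ, 0 < r → deriv (deriv f) r = -(2/r) * deriv f r - q r * f r)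
    (b : ℝ) (hfb : f b = 0) (hfb' : deriv f b = 0)
    (a : ℝ) (ha : 0 < a) (hab : a < b) : f a = 0 := by
  have hQ0 : 0 ≤ Q := le_trans (abs_nonneg _) (hQ 0)
  set K : ℝ := 1 + Q + 4 / a with hK
  set E : ℝ → ℝ := fun r => (f r) ^ 2 + (deriv f r) ^ 2 with hE
  set G : ℝ → ℝ := fun r => Real.exp (K * r) * E r with hG
  have hEderiv : ∀ r : ℝ, HasDerivAt E
      (2 * f r * deriv f r + 2 * deriv f r * deriv (deriv f) r) r := by
    intro r
    have h1 : HasDerivAt (fun r => (f r) ^ 2) (2 * f r * deriv f r) r := by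
      simpa [mul_comm, mul_assoc] using ((hf1 r).hasDerivAt.fun_pow 2)
    have h2 : HasDerivAt (fun r => (deriv f r) ^ 2) (2 * deriv f r * deriv (deriv f) r) r := by
      simpa [mul_comm, mul_assoc] using ((hf2 r).hasDerivAt.fun_pow 2)
    exact h1.add h2
  have hGderiv : ∀ r : ℝ, HasDerivAt G
      (K * Real.exp (K * r) * E r +
        Real.exp (K * r) * (2 * f r * deriv f r + 2 * deriv f r * deriv (deriv f) r)) r := by
    intro r
    have hexp : HasDerivAt (fun r : ℝ => Real.exp (K * r)) (K * Real.exp (K * r)) r := by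
      have := ((hasDerivAt_id r).const_mul K).exp
      simpa [mul_comm] using this
    exact hexp.mul (hEderiv r)
  have hGmono : MonotoneOn G (Set.Icc a b) := by
    apply monotoneOn_of_deriv_nonneg (convex_Icc a b)
    · exact fun r _ => ((hGderiv r).differentiableAt.continuousAt).continuousWithinAt
    · intro r _
      exact (hGderiv r).differentiableAt.differentiableWithinAt
    · intro r hr
      rw [interior_Icc] at hr
      rw [(hGderiv r).deriv]
      have hra : a ≤ r := le_of_lt hr.1
      have hrpos : 0 < r := lt_of_lt_of_le ha hra
      have hodeq := hode r hrpos
      have hqr := abs_le.mp (hQ r)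
      have h2ff : |2 * f r * deriv f r| ≤ (f r)^2 + (deriv f r)^2 := by
        rw [abs_le]
        constructor <;> nlinarith [sq_nonneg (f r + deriv f r), sq_nonneg (f r - deriv f r)]
      have habs2 : |q r * (2 * f r * deriv f r)| ≤ Q * ((f r)^2 + (deriv f r)^2) := by
        rw [abs_mul]
        exact mul_le_mul (hQ r) h2ff (abs_nonneg _) hQ0
      have hq2 : -(Q * ((f r)^2 + (deriv f r)^2)) ≤ q r * (2 * f r * deriv f r) :=
        le_trans (neg_le_neg habs2) (neg_abs_le _)
      have h2ffl : -((f r)^2 + (deriv f r)^2) ≤ 2 * f r * deriv f r :=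
        le_trans (neg_le_neg h2ff) (neg_abs_le _)
      have hq2' : q r * (2 * f r * deriv f r) ≤ Q * ((f r)^2 + (deriv f r)^2) :=
        le_trans (le_abs_self _) habs2
      have hrr : 2 / r * (2 * (deriv f r)^2) ≤ 4 / a * ((f r)^2 + (deriv f r)^2) := by
        have h1 : 2 / r ≤ 2 / a := by
          rw [div_le_div_iff₀ hrpos ha]; nlinarith
        have h2 := mul_le_mul_of_nonneg_right h1 (by positivity : (0:ℝ) ≤ 2 * (deriv f r)^2)
        have h3 : (0:ℝ) ≤ 4 / a := by positivity
        have h4 : 2 / a * (2 * (deriv f r)^2) ≤ 4 / a * ((f r)^2 + (deriv f r)^2) := by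
          have h5 : 4 / a * ((f r)^2 + (deriv f r)^2) - 2 / a * (2 * (deriv f r)^2)
              = 4 / a * (f r)^2 := by ring
          nlinarith [mul_nonneg h3 (sq_nonneg (f r))]
        linarith
      have hexppos : 0 < Real.exp (K * r) := Real.exp_pos _
      rw [hodeq]
      have hEnonneg : 0 ≤ E r := by positivity
      have key : 0 ≤ K * E r + (2 * f r * deriv f r +
          2 * deriv f r * (-(2/r) * deriv f r - q r * f r)) := by
        have expand : 2 * deriv f r * (-(2/r) * deriv f r - q r * f r)
            = -(2/r) * (2 * (deriv f r)^2) - q r * (2 * f r * deriv f r) := by ring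
        have hKE : K * E r = ((f r)^2 + (deriv f r)^2) + Q * ((f r)^2 + (deriv f r)^2)
            + 4 / a * ((f r)^2 + (deriv f r)^2) := by
          simp only [hK, hE]; ring
        rw [hKE, expand]
        linarith [h2ffl, hrr, hq2']
      nlinarith [mul_le_mul_of_nonneg_left key hexppos.le]
  have hGb : G b = 0 := by simp [hG, hE, hfb, hfb']
  have hstep := hGmono (Set.mem_Icc.mpr ⟨le_refl a, le_of_lt hab⟩)
    (Set.mem_Icc.mpr ⟨le_of_lt hab, le_refl b⟩) (le_of_lt hab)
  rw [hGb] at hstep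
  have hexa : 0 < Real.exp (K * a) := Real.exp_pos _
  have hEa : E a ≤ 0 := by
    by_contra h
    push_neg at h
    simp only [hG] at hstep
    nlinarith [mul_pos hexa h]
  have : (f a)^2 ≤ 0 := by
    have : 0 ≤ (deriv f a)^2 := sq_nonneg _
    simp only [hE] at hEa
    nlinarith
  nlinarith [sq_nonneg (f a)]





lemma eventual_sign (u : EuclideanSpace ℝ (Fin 3) → ℝ) (k : ℕ)
    (h : ¬ SignChangeWitnessOn u Set.univ k) :
    ∃ R : ℝ, 0 ≤ R ∧ ∀ r r' : ℝ, R < r → R < r' →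
      ¬ (u (r • e₁) * u (r' • e₁) < 0) := by
  by_contra hcon
  push_neg at hcon
  have h2 : ∀ R : ℝ, 0 ≤ R → ∃ p : ℝ × ℝ, R < p.1 ∧ R < p.2 ∧
      u (p.1 • e₁) * u (p.2 • e₁) < 0 := by
    intro R hR
    obtain ⟨r, r', hr, hr', hprod⟩ := hcon R hR
    exact ⟨(r, r'), hr, hr', hprod⟩
  -- step function
  have next_exists : ∀ r : ℝ, 0 ≤ r → u (r • e₁) ≠ 0 →
      ∃ r', r < r' ∧ u (r • e₁) * u (r' • e₁) < 0 := by
    intro r hr hne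
    obtain ⟨⟨p, p'⟩, hp, hp', hprod⟩ := h2 (max r 0) (le_max_right _ _)
    have hpr : r < p := lt_of_le_of_lt (le_max_left r 0) hp
    have hpr' : r < p' := lt_of_le_of_lt (le_max_left r 0) hp'
    by_cases hc : u (r • e₁) * u (p • e₁) < 0
    · exact ⟨p, hpr, hc⟩
    · push_neg at hc
      refine ⟨p', hpr', ?_⟩
      have hpne : u (p • e₁) ≠ 0 := by
        intro hz; rw [hz] at hprod; simp at hprod
      have hppos : 0 < u (r • e₁) * u (p • e₁) :=
        lt_of_le_of_ne hc (by
          intro hz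
          exact hpne (by
            rcases mul_eq_zero.mp hz.symm with h' | h'
            · exact absurd h' hne
            · exact h'))
      nlinarith [sq_nonneg (u (p • e₁)), mul_pos hppos (neg_pos.mpr hprod)]
  classical
  set nextf : ℝ → ℝ := fun r =>
    if hcond : 0 ≤ r ∧ u (r • e₁) ≠ 0 then
      Classical.choose (next_exists r hcond.1 hcond.2)
    else 0 with hnextf
  have step : ∀ r : ℝ, 0 < r → u (r • e₁) ≠ 0 →
      r < nextf r ∧ u (r • e₁) * u (nextf r • e₁) < 0 := by
    intro r hr hne
    have hcond : 0 ≤ r ∧ u (r • e₁) ≠ 0 := ⟨hr.le, hne⟩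
    rw [hnextf]
    simp only [dif_pos hcond]
    exact Classical.choose_spec (next_exists r hcond.1 hcond.2)
  -- initial point
  obtain ⟨⟨p, p'⟩, hp, hp', hprod0⟩ := h2 0 le_rfl
  have hpne : u (p • e₁) ≠ 0 := by
    intro hz; rw [hz] at hprod0; simp at hprod0
  set f : ℕ → ℝ := fun n => Nat.rec p (fun _ ih => nextf ih) n with hf
  have hf0 : f 0 = p := rfl
  have hfs : ∀ n, f (n + 1) = nextf (f n) := fun n => rfl
  have inv : ∀ n, 0 < f n ∧ u (f n • e₁) ≠ 0 := by
    intro n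
    induction n with
    | zero => exact ⟨hp, hpne⟩
    | succ n ih =>
      obtain ⟨hpos, hne⟩ := ih
      obtain ⟨hlt, hprod⟩ := step (f n) hpos hne
      rw [hfs]
      constructor
      · exact lt_trans hpos hlt
      · intro hz; rw [hz] at hprod; simp at hprod
  have hmono : StrictMono f := by
    apply strictMono_nat_of_lt_succ
    intro n
    obtain ⟨hpos, hne⟩ := inv n
    rw [hfs]
    exact (step (f n) hpos hne).1
  have hprodn : ∀ n, u (f n • e₁) * u (f (n+1) • e₁) < 0 := by
    intro n
    obtain ⟨hpos, hne⟩ := inv n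
    rw [hfs]
    exact (step (f n) hpos hne).2
  -- build witness
  apply h
  refine ⟨fun i => f i • e₁, fun i => Set.mem_univ _, ?_, ?_, ?_⟩
  · intro i
    rw [norm_smul_e₁, abs_of_pos (inv i).1]
    exact (inv i).1
  · intro i j hij
    rw [norm_smul_e₁, norm_smul_e₁, abs_of_pos (inv i).1, abs_of_pos (inv j).1]
    exact hmono (by exact_mod_cast hij)
  · intro i
    have h1 : (i.castSucc : Fin (k+1)).val = i.val := rfl
    have h2 : (i.succ : Fin (k+1)).val = i.val + 1 := rfl
    simp only [h1, h2]
    exact hprodn i.val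


lemma pow_mean {N : ℕ} (hN : 0 < N) (a : Fin N → ℝ) (ha : ∀ j, 0 ≤ a j) :
    (∑ j, a j)^3 ≤ (N:ℝ)^3 * ∑ j, (a j)^3 := by
  haveI : NeZero N := ⟨hN.ne'⟩
  obtain ⟨j₀, -, hj₀⟩ := Finset.exists_max_image Finset.univ a Finset.univ_nonempty
  have h1 : ∑ j, a j ≤ (N:ℝ) * a j₀ := by
    calc ∑ j, a j ≤ ∑ _j : Fin N, a j₀ :=
          Finset.sum_le_sum (fun i _ => hj₀ i (Finset.mem_univ i))
    _ = (N:ℝ) * a j₀ := by simp [Finset.sum_const, Finset.card_univ, mul_comm]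
  have h2 : (a j₀)^3 ≤ ∑ j, (a j)^3 :=
    Finset.single_le_sum (fun j _ => pow_nonneg (ha j) 3) (Finset.mem_univ j₀)
  have hN3 : (0:ℝ) ≤ (N:ℝ)^3 := by positivity
  calc (∑ j, a j)^3 ≤ ((N:ℝ)*a j₀)^3 :=
        pow_le_pow_left₀ (Finset.sum_nonneg fun j _ => ha j) h1 3
  _ = (N:ℝ)^3 * (a j₀)^3 := by ring
  _ ≤ (N:ℝ)^3 * ∑ j, (a j)^3 := mul_le_mul_of_nonneg_left h2 hN3

set_option maxHeartbeats 1000000 in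
lemma no_positive_bump (N : ℕ) (hN : 0 < N) (c : ℝ) (hc : 0 < c)
    (V : Fin N → ℝ → ℝ)
    (hV1 : ∀ j, Differentiable ℝ (V j)) (hV2 : ∀ j, Differentiable ℝ (deriv (V j)))
    (R : ℝ) (hR : 0 ≤ R)
    (s : Fin N → ℝ)
    (hsV : ∀ j r, R < r → 0 ≤ s j * V j r)
    (hode2 : ∀ r, R < r →
      (∑ j, s j * (2 * deriv (V j) r + r * deriv (deriv (V j)) r))
        ≤ -c * r * ∑ j, (s j * V j r)^3)
    (r₁ : ℝ) (hr₁ : R < r₁) (j₁ : Fin N) (hpos : 0 < s j₁ * V j₁ r₁) :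
    False := by
  haveI : NeZero N := ⟨hN.ne'⟩
  set k : ℝ := c / (N:ℝ)^3 with hkdef
  have hNpos : (0:ℝ) < (N:ℝ)^3 := by positivity
  have hk : 0 < k := div_pos hc hNpos
  have hkN : k * (N:ℝ)^3 = c := by rw [hkdef]; field_simp
  set W : ℝ → ℝ := fun r => ∑ j, s j * (r * V j r) with hWdef
  set W1 : ℝ → ℝ := fun r => ∑ j, s j * (V j r + r * deriv (V j) r) with hW1def
  set W2 : ℝ → ℝ := fun r => ∑ j, s j * (2 * deriv (V j) r + r * deriv (deriv (V j)) r)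
    with hW2def
  have hWd : ∀ r, HasDerivAt W (W1 r) r := by
    intro r
    apply HasDerivAt.fun_sum
    intro j _
    have h : HasDerivAt (fun y : ℝ => s j * (y * V j y))
        (s j * (1 * V j r + r * deriv (V j) r)) r :=
      ((hasDerivAt_id r).mul ((hV1 j r).hasDerivAt)).const_mul (s j)
    refine h.congr_deriv ?_
    ring
  have hW1d : ∀ r, HasDerivAt W1 (W2 r) r := by
    intro r
    apply HasDerivAt.fun_sum
    intro j _
    have h : HasDerivAt (fun y : ℝ => s j * (V j y + y * deriv (V j) y))
        (s j * (deriv (V j) r + (1 * deriv (V j) r + r * deriv (deriv (V j)) r))) r :=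
      (((hV1 j r).hasDerivAt).add
        ((hasDerivAt_id r).mul ((hV2 j r).hasDerivAt))).const_mul (s j)
    refine h.congr_deriv ?_
    ring
  have hWnn : ∀ r, R < r → 0 ≤ W r := by
    intro r hr
    apply Finset.sum_nonneg
    intro j _
    have h0 : (0:ℝ) < r := lt_of_le_of_lt hR hr
    have h1 := hsV j r hr
    nlinarith
  have hW2le : ∀ r, R < r → r^2 * W2 r ≤ -k * (W r)^3 := by
    intro r hr
    have h0 : (0:ℝ) < r := lt_of_le_of_lt hR hr
    set A : ℝ := ∑ j, s j * V j r with hAdef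
    set S : ℝ := ∑ j, (s j * V j r)^3 with hSdef
    have h1 : W2 r ≤ -c * r * S := hode2 r hr
    have h2 : A^3 ≤ (N:ℝ)^3 * S := pow_mean hN (fun j => s j * V j r) (fun j => hsV j r hr)
    have hWa : W r = r * A := by
      rw [hWdef, hAdef, Finset.mul_sum]
      apply Finset.sum_congr rfl
      intros; ring
    have h3 : k * A^3 ≤ c * S := by
      calc k * A^3 ≤ k * ((N:ℝ)^3 * S) := by nlinarith
      _ = c * S := by rw [← hkN]; ring
    have h4 := mul_le_mul_of_nonneg_left h1 (sq_nonneg r)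
    rw [hWa]
    nlinarith [mul_le_mul_of_nonneg_right h3 (pow_nonneg h0.le 3)]
  have hW2np : ∀ r, R < r → W2 r ≤ 0 := by
    intro r hr
    have h0 : (0:ℝ) < r := lt_of_le_of_lt hR hr
    have h1 := hW2le r hr
    nlinarith [pow_nonneg (hWnn r hr) 3, sq_nonneg r, mul_pos h0 h0]
  have hW1anti : AntitoneOn W1 (Set.Ioi R) := by
    apply antitoneOn_of_deriv_nonpos (convex_Ioi R)
    · exact fun r _ => ((hW1d r).differentiableAt.continuousAt).continuousWithinAt
    · intro r _
      exact (hW1d r).differentiableAt.differentiableWithinAt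
    · intro r hr
      rw [interior_Ioi] at hr
      rw [(hW1d r).deriv]
      exact hW2np r hr
  have hW1nn : ∀ p, R < p → 0 ≤ W1 p := by
    intro p hp
    by_contra hneg
    push_neg at hneg
    have hWp : 0 ≤ W p := hWnn p hp
    set r : ℝ := p + (W p + 1) / (-W1 p) with hrdef
    have hd : 0 < (W p + 1) / (-W1 p) := div_pos (by linarith) (by linarith)
    have hpr : p < r := by rw [hrdef]; linarith
    obtain ⟨ξ, hξ, hslope⟩ := exists_hasDerivAt_eq_slope W W1 hpr
      (fun x _ => (hWd x).differentiableAt.continuousAt.continuousWithinAt)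
      (fun x _ => hWd x)
    have hξR : ξ ∈ Set.Ioi R := lt_trans hp hξ.1
    have h7 : W1 ξ ≤ W1 p := hW1anti (Set.mem_Ioi.mpr hp) hξR (le_of_lt hξ.1)
    rw [eq_div_iff (ne_of_gt (by linarith : (0:ℝ) < r - p))] at hslope
    -- hslope : W1 ξ * (r - p) = W r - W p
    have h8 : W r ≤ W p + W1 p * (r - p) := by
      nlinarith [mul_le_mul_of_nonneg_right h7 (by linarith : (0:ℝ) ≤ r - p)]
    have h9 : W1 p * (r - p) = -(W p + 1) := by
      have hrp : r - p = (W p + 1) / (-W1 p) := by rw [hrdef]; ring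
      have hne : -W1 p ≠ 0 := ne_of_gt (by linarith)
      rw [hrp]
      field_simp
      rw [div_self (neg_ne_zero.mp hne)]
    have h10 : 0 ≤ W r := hWnn r (lt_trans hp hpr)
    rw [h9] at h8
    linarith
  have hWmono : MonotoneOn W (Set.Ioi R) := by
    apply monotoneOn_of_deriv_nonneg (convex_Ioi R)
    · exact fun r _ => ((hWd r).differentiableAt.continuousAt).continuousWithinAt
    · intro r _
      exact (hWd r).differentiableAt.differentiableWithinAt
    · intro r hr
      rw [interior_Ioi] at hr
      rw [(hWd r).deriv]
      exact hW1nn r hr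
  have hr₁0 : (0:ℝ) < r₁ := lt_of_le_of_lt hR hr₁
  have hδ : 0 < W r₁ := by
    have hterm : s j₁ * (r₁ * V j₁ r₁) ≤ W r₁ :=
      Finset.single_le_sum (f := fun j => s j * (r₁ * V j r₁))
        (fun j _ => by
          have h1 := hsV j r₁ hr₁
          show 0 ≤ s j * (r₁ * V j r₁)
          nlinarith) (Finset.mem_univ j₁)
    nlinarith
  have hWpos : ∀ r, r₁ ≤ r → 0 < W r := by
    intro r h
    have := hWmono (Set.mem_Ioi.mpr hr₁) (Set.mem_Ioi.mpr (lt_of_lt_of_le hr₁ h)) h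
    linarith
  -- lower bound on W1
  have hW1lb : ∀ r, r₁ ≤ r → k * (W r)^3 ≤ 4 * r * W1 r := by
    intro r hrr
    have hrR : R < r := lt_of_lt_of_le hr₁ hrr
    have h0 : (0:ℝ) < r := lt_of_le_of_lt hR hrR
    have h2r : r < 2*r := by linarith
    obtain ⟨ξ, hξ, hslope⟩ := exists_hasDerivAt_eq_slope W1 W2 h2r
      (fun x _ => (hW1d x).differentiableAt.continuousAt.continuousWithinAt)
      (fun x _ => hW1d x)
    have hξR : R < ξ := lt_trans hrR hξ.1
    have hξpos : (0:ℝ) < ξ := lt_of_le_of_lt hR hξR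
    have hWξ : W r ≤ W ξ := hWmono (Set.mem_Ioi.mpr hrR) (Set.mem_Ioi.mpr hξR) hξ.1.le
    have hWr : 0 ≤ W r := hWnn r hrR
    have hc3 : (W r)^3 ≤ (W ξ)^3 := pow_le_pow_left₀ hWr hWξ 3
    have h1 := hW2le ξ hξR
    have hW2ξnp : W2 ξ ≤ 0 := hW2np ξ hξR
    have hξlt : ξ ≤ 2*r := hξ.2.le
    have hξsq : ξ^2 ≤ 4*r^2 := by nlinarith
    -- 4r² W2 ξ ≤ ξ² W2 ξ ≤ -k Wξ³ ≤ -k Wr³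
    have h5 : 4*r^2 * W2 ξ ≤ -k * (W r)^3 := by
      have h6 : 4*r^2 * W2 ξ ≤ ξ^2 * W2 ξ := by nlinarith
      linarith [h6, h1, mul_le_mul_of_nonneg_left hc3 hk.le]
    rw [eq_div_iff (ne_of_gt (by linarith : (0:ℝ) < 2*r - r))] at hslope
    -- hslope : W2 ξ * (2r - r) = W1 (2r) - W1 r
    have h11 : 0 ≤ W1 (2*r) := hW1nn (2*r) (by linarith)
    have h12 : 4*r^2 * W2 ξ = 4*r*W1 (2*r) - 4*r*W1 r := by linear_combination 4*r*hslope
    have h13 : 0 ≤ 4*r*W1 (2*r) := mul_nonneg (by linarith) h11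
    linarith [h5, h12, h13]
  -- final contradiction via H = (W²)⁻¹ + (k/2) log
  set H : ℝ → ℝ := fun r => ((W r)^2)⁻¹ + (k/2) * Real.log r with hHdef
  have hHd : ∀ r, r₁ ≤ r → HasDerivAt H
      (-(2 * W r * W1 r)/((W r)^2)^2 + (k/2) * r⁻¹) r := by
    intro r h
    have h0 : (0:ℝ) < r := lt_of_lt_of_le hr₁0 h
    have hW0 : 0 < W r := hWpos r h
    have hsq : HasDerivAt (fun r => (W r)^2) (2 * W r * W1 r) r := by
      have h : HasDerivAt (fun r => (W r)^2) (((2:ℕ):ℝ) * W r ^ (2-1) * W1 r) r :=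
        (hWd r).pow 2
      convert h using 1
      push_cast
      ring
    have h1 := hsq.inv (pow_ne_zero 2 (ne_of_gt hW0))
    have h2 : HasDerivAt (fun r => (k/2) * Real.log r) ((k/2) * r⁻¹) r := by
      simpa [mul_comm] using ((Real.hasDerivAt_log (ne_of_gt h0)).const_mul (k/2))
    exact h1.add h2
  have hHanti : AntitoneOn H (Set.Ici r₁) := by
    apply antitoneOn_of_deriv_nonpos (convex_Ici r₁)
    · exact fun r hr => ((hHd r hr).differentiableAt.continuousAt).continuousWithinAt
    · intro r hr
      rw [interior_Ici] at hr
      exact (hHd r hr.le).differentiableAt.differentiableWithinAt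
    · intro r hr
      rw [interior_Ici] at hr
      rw [(hHd r hr.le).deriv]
      have h0 : (0:ℝ) < r := lt_of_lt_of_le hr₁0 hr.le
      have hW0 : 0 < W r := hWpos r hr.le
      have hb := hW1lb r hr.le
      have key : (k/2) * r⁻¹ ≤ (2 * W r * W1 r)/((W r)^2)^2 := by
        rw [← div_eq_mul_inv, div_div, div_le_div_iff₀ (by positivity) (by positivity)]
        nlinarith [mul_le_mul_of_nonneg_right hb hW0.le]
      rw [neg_div]
      linarith [key]
  -- choose ρ
  set ρ : ℝ := r₁ * Real.exp ((2/k) * ((W r₁)^2)⁻¹ + 1) with hρdef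
  have hexp1 : (1:ℝ) ≤ Real.exp ((2/k) * ((W r₁)^2)⁻¹ + 1) := by
    apply Real.one_le_exp
    have : (0:ℝ) ≤ (2/k) * ((W r₁)^2)⁻¹ := by positivity
    linarith
  have hρge : r₁ ≤ ρ := by
    rw [hρdef]
    nlinarith
  have hHle : H ρ ≤ H r₁ := hHanti (Set.mem_Ici.mpr le_rfl) (Set.mem_Ici.mpr hρge) hρge
  have hlogρ : Real.log ρ = Real.log r₁ + ((2/k) * ((W r₁)^2)⁻¹ + 1) := by
    rw [hρdef, Real.log_mul (ne_of_gt hr₁0) (ne_of_gt (Real.exp_pos _)), Real.log_exp]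
  have hWρ : 0 < W ρ := hWpos ρ hρge
  have hWr₁ : 0 < W r₁ := hδ
  have hinvρ : 0 < ((W ρ)^2)⁻¹ := by positivity
  have hfinal : ((W ρ)^2)⁻¹ ≤ -(k/2) := by
    have e : (k/2) * ((2/k) * ((W r₁)^2)⁻¹ + 1) = ((W r₁)^2)⁻¹ + k/2 := by
      field_simp
    simp only [hHdef] at hHle
    rw [hlogρ] at hHle
    nlinarith [hHle, e]
  linarith

theorem liouville_R3 (N : ℕ) (hN : 2 ≤ N) (μ : Fin N → ℝ) (hμ : ∀ j, 0 < μ j)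
    (P : Fin N → ℕ) (β : ℝ) (hβ : 0 ≤ β) :
    ∃ ε₀ : ℝ, 0 < ε₀ ∧
      ∀ B : Fin N → Fin N → ℝ,
        (∀ i j, i ≠ j → B i j = B j i) →
        (∀ i j, i ≠ j → -ε₀ ≤ B i j ∧ B i j ≤ β) →
        ∀ u : Fin N → EuclideanSpace ℝ (Fin 3) → ℝ,
          (∀ j, IsRadial (u j)) →
          (∀ j, ContDiff ℝ 2 (u j)) →
          (∀ j x, |u j x| ≤ 1) →
          (∀ j, (∀ x, u j x = 0) ∨ ChangesSignAtMostOn (u j) Set.univ (P j)) →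
          (∀ j x, -lap3 (u j) x =
              μ j * u j x ^ 3 + ∑ i ∈ Finset.univ.erase j, B i j * u i x ^ 2 * u j x) →
          ∀ j x, u j x = 0 := by
  classical
  have hNpos : 0 < N := by omega
  haveI : NeZero N := ⟨by omega⟩
  have hNcast : (0:ℝ) < (N:ℝ) := by exact_mod_cast hNpos
  have hnonempty : (Finset.univ : Finset (Fin N)).Nonempty := Finset.univ_nonempty
  set μm : ℝ := Finset.univ.inf' hnonempty μ with hμmdef
  have hμm : 0 < μm := (Finset.lt_inf'_iff hnonempty).mpr fun i _ => hμ i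
  have hμmle : ∀ j, μm ≤ μ j := fun j => Finset.inf'_le μ (Finset.mem_univ j)
  set ε₀ : ℝ := μm / (4 * (N:ℝ)) with hε₀def
  have hε₀pos : 0 < ε₀ := by rw [hε₀def]; positivity
  have hε₀N : ε₀ * (2*(N:ℝ)) = μm/2 := by
    rw [hε₀def]; field_simp; ring
  refine ⟨ε₀, hε₀pos, ?_⟩
  intro B hBsymm hBrange u hrad hreg hbound hsign hpde
  set V : Fin N → ℝ → ℝ := fun j t => u j (t • e₁) with hVdef
  have hVcont2 : ∀ j, ContDiff ℝ 2 (V j) :=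
    fun j => (hreg j).comp (contDiff_id.smul contDiff_const)
  have hV1 : ∀ j, Differentiable ℝ (V j) := fun j => (hVcont2 j).differentiable (by norm_num)
  have hV2 : ∀ j, Differentiable ℝ (deriv (V j)) := by
    intro j
    have h : ContDiff ℝ (1+1) (V j) := by norm_num; exact hVcont2 j
    exact ((contDiff_succ_iff_deriv.mp h).2.2).differentiable one_ne_zero
  have hVbound : ∀ j r, |V j r| ≤ 1 := fun j r => hbound j _
  have hval : ∀ j x, u j x = V j ‖x‖ := by
    intro j x
    obtain ⟨v, hv⟩ := hrad j
    have h1 : V j ‖x‖ = v ‖(‖x‖ • e₁)‖ := hv _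
    rw [norm_smul_e₁, abs_of_nonneg (norm_nonneg x)] at h1
    rw [hv x, h1]
  -- the radial ODE
  have hode : ∀ j r, 0 < r → deriv (deriv (V j)) r + 2 * (deriv (V j) r / r)
      = -(μ j * V j r ^ 3 + ∑ i ∈ Finset.univ.erase j, B i j * V i r ^ 2 * V j r) := by
    intro j r hr
    obtain ⟨v, hv⟩ := hrad j
    have hL := lap3_radial (u j) (hreg j) v hv r hr
    have hP := hpde j (r • e₁)
    have hfold : (fun t => u j (t • e₁)) = V j := rfl
    rw [hfold] at hL
    have hPV : ∀ i : Fin N, u i (r • e₁) = V i r := fun i => rfl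
    simp only [hPV] at hP
    rw [hL] at hP
    linarith [hP]
  -- eventual sign constancy radii
  have hsigns : ∀ j, ∃ R, 0 ≤ R ∧ ∀ r r', R < r → R < r' → ¬(V j r * V j r' < 0) := by
    intro j
    rcases hsign j with hzero | hms
    · refine ⟨0, le_rfl, fun r r' _ _ => ?_⟩
      have h1 : V j r = 0 := hzero _
      rw [h1, zero_mul]
      exact lt_irrefl 0
    · exact eventual_sign (u j) (P j + 1) hms
  choose Rf hRf0 hRfp using hsigns
  set R : ℝ := Finset.univ.sup' hnonempty Rf with hRdef
  have hRj : ∀ j, Rf j ≤ R := fun j => Finset.le_sup' Rf (Finset.mem_univ j)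
  have hR0 : 0 ≤ R := le_trans (hRf0 ⟨0, hNpos⟩) (hRj ⟨0, hNpos⟩)
  -- the core claim
  have hV0 : ∀ j r, 0 < r → V j r = 0 := by
    by_contra hex
    push_neg at hex
    obtain ⟨j₀, r₀, hr₀pos, hr₀ne⟩ := hex
    by_cases hall : ∀ j r, R < r → V j r = 0
    · -- unique continuation case
      apply hr₀ne
      by_cases hcmp : R < r₀
      · exact hall j₀ r₀ hcmp
      · push_neg at hcmp
        set q : ℝ → ℝ := fun r => μ j₀ * (V j₀ r)^2
            + ∑ i ∈ Finset.univ.erase j₀, B i j₀ * (V i r)^2 with hqdef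
        have hode' : ∀ r, 0 < r →
            deriv (deriv (V j₀)) r = -(2/r) * deriv (V j₀) r - q r * V j₀ r := by
          intro r hr
          have h := hode j₀ r hr
          have hexpand : q r * V j₀ r = μ j₀ * V j₀ r ^ 3
              + ∑ i ∈ Finset.univ.erase j₀, B i j₀ * V i r ^ 2 * V j₀ r := by
            show (μ j₀ * (V j₀ r)^2 + ∑ i ∈ Finset.univ.erase j₀, B i j₀ * (V i r)^2) * V j₀ r = _
            rw [add_mul, Finset.sum_mul]
            congr 1
            ring
          have h2r : 2 * (deriv (V j₀) r / r) = (2/r) * deriv (V j₀) r := by ring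
          rw [h2r] at h
          rw [hexpand]
          linarith [h]
        set Q : ℝ := μ j₀ + ∑ i ∈ Finset.univ.erase j₀, |B i j₀| with hQdef
        have hQb : ∀ r, |q r| ≤ Q := by
          intro r
          have hqa : |q r| ≤ μ j₀ * (V j₀ r)^2
              + ∑ i ∈ Finset.univ.erase j₀, |B i j₀| * (V i r)^2 := by
            refine le_trans (abs_add_le _ _) (add_le_add ?_ ?_)
            · rw [abs_of_nonneg (mul_nonneg (hμ j₀).le (sq_nonneg _))]
            · refine le_trans (Finset.abs_sum_le_sum_abs _ _) ?_
              apply Finset.sum_le_sum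
              intro i _
              rw [abs_mul, abs_pow, sq_abs]
          have h2 : μ j₀ * (V j₀ r)^2 ≤ μ j₀ :=
            mul_le_of_le_one_right (hμ j₀).le (sq_le_one_of_abs _ (hVbound j₀ r))
          have h3 : ∑ i ∈ Finset.univ.erase j₀, |B i j₀| * (V i r)^2
              ≤ ∑ i ∈ Finset.univ.erase j₀, |B i j₀| := by
            apply Finset.sum_le_sum
            intro i _
            exact mul_le_of_le_one_right (abs_nonneg _) (sq_le_one_of_abs _ (hVbound i r))
          rw [hQdef]
          linarith [hqa, h2, h3]
        have hb1 : V j₀ (R+1) = 0 := hall j₀ (R+1) (by linarith)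
        have hb2 : deriv (V j₀) (R+1) = 0 := by
          have hev : V j₀ =ᶠ[nhds (R+1)] (fun _ => (0:ℝ)) := by
            apply Filter.eventuallyEq_of_mem (isOpen_Ioi.mem_nhds (show R < R+1 by linarith))
            intro y hy
            exact hall j₀ y hy
          rw [hev.deriv_eq]
          simp
        exact uc (V j₀) q (hV1 j₀) (hV2 j₀) Q hQb hode' (R+1) hb1 hb2 r₀ hr₀pos
          (by linarith)
    · -- main argument
      push_neg at hall
      obtain ⟨j₁, r₁, hr₁R, hr₁ne⟩ := hall
      set s : Fin N → ℝ := fun j => if (∀ r, R < r → 0 ≤ V j r) then 1 else -1 with hsdef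
      have hs1 : ∀ j, s j = 1 ∨ s j = -1 := by
        intro j
        simp only [hsdef]
        split_ifs <;> simp
      have hcube : ∀ j (x : ℝ), (s j * x)^3 = s j * x^3 := by
        intro j x; rcases hs1 j with h|h <;> rw [h] <;> ring
      have hsq2 : ∀ j (x : ℝ), (s j * x)^2 = x^2 := by
        intro j x; rcases hs1 j with h|h <;> rw [h] <;> ring
      have hsV : ∀ j r, R < r → 0 ≤ s j * V j r := by
        intro j r hr
        by_cases hc : ∀ r', R < r' → 0 ≤ V j r'
        · have hsj : s j = 1 := by simp only [hsdef]; rw [if_pos hc]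
          rw [hsj, one_mul]
          exact hc r hr
        · have hsj : s j = -1 := by simp only [hsdef]; rw [if_neg hc]
          push_neg at hc
          obtain ⟨r', hr', hVr'⟩ := hc
          have hVr : V j r ≤ 0 := by
            by_contra hgt
            push_neg at hgt
            exact hRfp j r' r (lt_of_le_of_lt (hRj j) hr') (lt_of_le_of_lt (hRj j) hr)
              (mul_neg_of_neg_of_pos hVr' hgt)
          rw [hsj]; linarith
      have hode2 : ∀ r, R < r →
          (∑ j, s j * (2 * deriv (V j) r + r * deriv (deriv (V j)) r))
            ≤ -(μm/2) * r * ∑ j, (s j * V j r)^3 := by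
        intro r hr
        have h0 : (0:ℝ) < r := lt_of_le_of_lt hR0 hr
        set a : Fin N → ℝ := fun j => s j * V j r with hadef
        have ha0 : ∀ j, 0 ≤ a j := fun j => hsV j r hr
        set S : ℝ := ∑ j, (a j)^3 with hSdef
        have hterm : ∀ j, s j * (2 * deriv (V j) r + r * deriv (deriv (V j)) r)
            = -r * (μ j * (a j)^3
                + ∑ i ∈ Finset.univ.erase j, B i j * (a i)^2 * (a j)) := by
          intro j
          have h := hode j r h0
          have e1 : s j * (2 * deriv (V j) r + r * deriv (deriv (V j)) r)
              = s j * r * (deriv (deriv (V j)) r + 2 * (deriv (V j) r / r)) := by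
            field_simp; ring
          rw [e1, h]
          have e3 : ∀ i ∈ Finset.univ.erase j,
              B i j * (a i)^2 * (a j) = s j * (B i j * V i r^2 * V j r) := by
            intro i _
            show B i j * (s i * V i r)^2 * (s j * V j r) = _
            rw [hsq2 i]
            ring
          rw [Finset.sum_congr rfl e3,
            show (a j)^3 = s j * (V j r)^3 from hcube j (V j r), ← Finset.mul_sum]
          ring
        have hint : ∀ j, (-ε₀) * (∑ i ∈ Finset.univ.erase j, ((a i)^3 + (a j)^3))
            ≤ ∑ i ∈ Finset.univ.erase j, B i j * (a i)^2 * (a j) := by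
          intro j
          rw [Finset.mul_sum]
          apply Finset.sum_le_sum
          intro i hi
          have hij : i ≠ j := Finset.ne_of_mem_erase hi
          have hB := (hBrange i j hij).1
          have hcb : (a i)^2 * (a j) ≤ (a i)^3 + (a j)^3 :=
            cube_bound _ _ (ha0 i) (ha0 j)
          have h1 : 0 ≤ (a i)^2 * a j := mul_nonneg (sq_nonneg _) (ha0 j)
          nlinarith [hB, hcb, h1, hε₀pos]
        have hdouble : ∑ j, ∑ i ∈ Finset.univ.erase j, ((a i)^3 + (a j)^3)
            ≤ 2*(N:ℝ)*S := by
          have h1 : ∀ j : Fin N, ∑ i ∈ Finset.univ.erase j, ((a i)^3 + (a j)^3)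
              ≤ ∑ i : Fin N, ((a i)^3 + (a j)^3) :=
            fun j => Finset.sum_le_sum_of_subset_of_nonneg (Finset.erase_subset _ _)
              (fun i _ _ => add_nonneg (pow_nonneg (ha0 i) 3) (pow_nonneg (ha0 j) 3))
          calc ∑ j, ∑ i ∈ Finset.univ.erase j, ((a i)^3 + (a j)^3)
              ≤ ∑ j, ∑ i : Fin N, ((a i)^3 + (a j)^3) :=
                Finset.sum_le_sum (fun j _ => h1 j)
          _ = ∑ _j : Fin N, (S + (N:ℝ) * (a _j)^3) := by
              apply Finset.sum_congr rfl
              intro j _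
              rw [Finset.sum_add_distrib]
              congr 1
              rw [Finset.sum_const, Finset.card_univ, Fintype.card_fin, nsmul_eq_mul]
          _ = (N:ℝ)*S + (N:ℝ)*S := by
              rw [Finset.sum_add_distrib, Finset.sum_const, Finset.card_univ,
                Fintype.card_fin, nsmul_eq_mul, ← Finset.mul_sum, ← hSdef]
          _ = 2*(N:ℝ)*S := by ring
        have hTsum : ∑ j, (μ j * (a j)^3
              + ∑ i ∈ Finset.univ.erase j, B i j * (a i)^2 * (a j))
            = ∑ j, μ j * (a j)^3
              + ∑ j, ∑ i ∈ Finset.univ.erase j, B i j * (a i)^2 * (a j) :=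
          Finset.sum_add_distrib
        have h1 : ∑ j, μm * (a j)^3 ≤ ∑ j, μ j * (a j)^3 :=
          Finset.sum_le_sum (fun j _ =>
            mul_le_mul_of_nonneg_right (hμmle j) (pow_nonneg (ha0 j) 3))
        have h1' : ∑ j, μm * (a j)^3 = μm * S := by rw [← Finset.mul_sum]
        have h2 : ∑ j, (-ε₀) * (∑ i ∈ Finset.univ.erase j, ((a i)^3 + (a j)^3))
            ≤ ∑ j, ∑ i ∈ Finset.univ.erase j, B i j * (a i)^2 * (a j) :=
          Finset.sum_le_sum (fun j _ => hint j)
        have h3 : (-ε₀) * (2*(N:ℝ)*S)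
            ≤ ∑ j, (-ε₀) * (∑ i ∈ Finset.univ.erase j, ((a i)^3 + (a j)^3)) := by
          rw [← Finset.mul_sum]
          exact mul_le_mul_of_nonpos_left hdouble (by linarith [hε₀pos])
        have h4 : (-ε₀) * (2*(N:ℝ)*S) = -(μm/2) * S := by
          linear_combination (-S) * hε₀N
        have hsumT : (μm/2) * S ≤ ∑ j, (μ j * (a j)^3
            + ∑ i ∈ Finset.univ.erase j, B i j * (a i)^2 * (a j)) := by
          rw [hTsum]
          linarith [h1, h1', h2, h3, h4]
        have hW2eq : (∑ j, s j * (2 * deriv (V j) r + r * deriv (deriv (V j)) r))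
            = -r * ∑ j, (μ j * (a j)^3
                + ∑ i ∈ Finset.univ.erase j, B i j * (a i)^2 * (a j)) := by
          rw [Finset.sum_congr rfl (fun j _ => hterm j)]
          exact (Finset.mul_sum _ _ _).symm
        rw [hW2eq]
        nlinarith [mul_le_mul_of_nonneg_left hsumT h0.le]
      -- apply the core lemma
      have hppos : 0 < s j₁ * V j₁ r₁ := by
        have h1 := hsV j₁ r₁ hr₁R
        have h2 : s j₁ * V j₁ r₁ ≠ 0 := by
          apply mul_ne_zero _ hr₁ne
          rcases hs1 j₁ with h|h <;> rw [h] <;> norm_num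
        exact lt_of_le_of_ne h1 (Ne.symm h2)
      exact no_positive_bump N hNpos (μm/2) (by positivity) V hV1 hV2 R hR0 s hsV
        hode2 r₁ hr₁R j₁ hppos
  -- wrap up
  intro j x
  rw [hval j x]
  rcases eq_or_lt_of_le (norm_nonneg x) with h0 | hpos'
  · rw [← h0]
    have hcont : Continuous (V j) := (hVcont2 j).continuous
    have h1 : Filter.Tendsto (V j) (nhdsWithin 0 (Set.Ioi 0)) (nhds (V j 0)) :=
      (hcont.tendsto 0).mono_left nhdsWithin_le_nhds
    have h2 : Filter.Tendsto (V j) (nhdsWithin 0 (Set.Ioi 0)) (nhds 0) := by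
      apply Filter.Tendsto.congr' _ tendsto_const_nhds
      filter_upwards [self_mem_nhdsWithin] with y hy
      exact (hV0 j y hy).symm
    exact tendsto_nhds_unique h1 h2
  · exact hV0 j ‖x‖ hpos'
end

section
/- Let N ≥ 2, let μ₁,…,μ_N > 0 be constants, let P₁,…,P_N ∈ ℕ, and suppose the real constants β_{ij} = β_{ji} (for i ≠ j) satisfy β_{ij} ≥ 0. If u₁,…,u_N : ℝ³ → ℝ are radial functions of class C² such that for every j one has |u_j(x)| ≤ 1 for all x ∈ ℝ³, u_j is either identically zero or changes sign at most P_j times, and −Δu_j = μ_j u_j³ + Σ_{i≠j} β_{ij} u_i² u_j holds pointwise in ℝ³, then u_j ≡ 0 for every j = 1,…,N. -/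
open scoped BigOperators

open Set

section AuxLiouville


def AltChainR (v : ℝ → ℝ) (k : ℕ) : Prop :=
  ∃ r : Fin (k + 1) → ℝ, (∀ i, 0 < r i) ∧ (∀ i j, i < j → r i < r j) ∧
    ∀ i : Fin k, v (r i.castSucc) * v (r i.succ) < 0

lemma opp_sign {x y z : ℝ} (hxy : x * y < 0) (hz : z ≠ 0) (hx : ¬ (x * z < 0)) : y * z < 0 := by
  push_neg at hx
  rcases lt_or_gt_of_ne hz with h | h <;> rcases lt_trichotomy x 0 with h1 | h1 | h1 <;>
    nlinarith

lemma chain_build {v : ℝ → ℝ} {S : Set ℝ} (hS0 : S ⊆ Ioi 0)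
    (hS : ∀ a ∈ S, ∃ p ∈ S, ∃ q ∈ S, a < p ∧ a < q ∧ v p * v q < 0)
    {a₀ : ℝ} (ha₀ : a₀ ∈ S) (k : ℕ) : AltChainR v k := by
  have H : ∀ m : ℕ, ∃ r : ℕ → ℝ, (∀ i, r i ∈ S) ∧ (∀ i < m, r i < r (i + 1)) ∧
      (∀ i < m, v (r i) * v (r (i + 1)) < 0) ∧ v (r m) ≠ 0 := by
    intro m
    induction m with
    | zero =>
      obtain ⟨p, hp, q, hq, _, _, hpq⟩ := hS a₀ ha₀
      exact ⟨fun _ => p, fun _ => hp, fun i hi => absurd hi (Nat.not_lt_zero i),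
        fun i hi => absurd hi (Nat.not_lt_zero i), left_ne_zero_of_mul hpq.ne⟩
    | succ m ih =>
      obtain ⟨r, hrS, hrmono, hralt, hrne⟩ := ih
      obtain ⟨p, hp, q, hq, hp1, hq1, hpq⟩ := hS (r m) (hrS m)
      by_cases hcase : v (r m) * v p < 0
      · refine ⟨fun i => if i ≤ m then r i else p, fun i => ?_, fun i hi => ?_, fun i hi => ?_, ?_⟩
        · dsimp only; split <;> [exact hrS i; exact hp]
        · dsimp only
          rcases Nat.lt_or_ge i m with h | h
          · rw [if_pos (by omega), if_pos (by omega)]; exact hrmono i h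
          · have : i = m := by omega
            subst this
            rw [if_pos le_rfl, if_neg (by omega)]; exact hp1
        · dsimp only
          rcases Nat.lt_or_ge i m with h | h
          · rw [if_pos (by omega), if_pos (by omega)]; exact hralt i h
          · have : i = m := by omega
            subst this
            rw [if_pos le_rfl, if_neg (by omega)]; exact hcase
        · dsimp only; rw [if_neg (by omega)]
          exact right_ne_zero_of_mul hcase.ne
      · have hq2 : v (r m) * v q < 0 := by
          have := opp_sign hpq hrne (by rw [mul_comm]; exact hcase)
          rw [mul_comm]; exact this
        refine ⟨fun i => if i ≤ m then r i else q, fun i => ?_, fun i hi => ?_, fun i hi => ?_, ?_⟩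
        · dsimp only; split <;> [exact hrS i; exact hq]
        · dsimp only
          rcases Nat.lt_or_ge i m with h | h
          · rw [if_pos (by omega), if_pos (by omega)]; exact hrmono i h
          · have : i = m := by omega
            subst this
            rw [if_pos le_rfl, if_neg (by omega)]; exact hq1
        · dsimp only
          rcases Nat.lt_or_ge i m with h | h
          · rw [if_pos (by omega), if_pos (by omega)]; exact hralt i h
          · have : i = m := by omega
            subst this
            rw [if_pos le_rfl, if_neg (by omega)]; exact hq2
        · dsimp only; rw [if_neg (by omega)]
          exact right_ne_zero_of_mul hq2.ne
  obtain ⟨r, hrS, hrmono, hralt, _⟩ := H k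
  have mono : ∀ j ≤ k, ∀ i < j, r i < r j := by
    intro j hj
    induction j with
    | zero => intro i hi; exact absurd hi (Nat.not_lt_zero i)
    | succ n ihn =>
      intro i hi
      have hn : r n < r (n + 1) := hrmono n (by omega)
      rcases Nat.lt_succ_iff_lt_or_eq.mp hi with h | h
      · exact (ihn (by omega) i h).trans hn
      · subst h; exact hn
  refine ⟨fun i => r i, fun i => hS0 (hrS i), fun i j hij => ?_, fun i => ?_⟩
  · exact mono j (by omega) i hij
  · have h1 : (i.castSucc : ℕ) = (i : ℕ) := rfl
    have h2 : (i.succ : ℕ) = (i : ℕ) + 1 := rfl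
    simp only [h1, h2]
    exact hralt i i.isLt

lemma altChain_witness {u : EuclideanSpace ℝ (Fin 3) → ℝ} {v : ℝ → ℝ}
    (huv : ∀ x, u x = v ‖x‖) {k : ℕ} (h : AltChainR v k) :
    SignChangeWitnessOn u Set.univ k := by
  obtain ⟨r, hpos, hmono, halt⟩ := h
  have hnorm : ∀ i, ‖(r i) • (EuclideanSpace.single 0 1 : EuclideanSpace ℝ (Fin 3))‖ = r i := by
    intro i
    rw [norm_smul, EuclideanSpace.norm_single]
    simp [abs_of_pos (hpos i)]
  refine ⟨fun i => (r i) • EuclideanSpace.single 0 1, fun _ => trivial, ?_, ?_, ?_⟩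
  · intro i; rw [hnorm i]; exact hpos i
  · intro i j hij; rw [hnorm i, hnorm j]; exact hmono i j hij
  · intro i
    rw [huv, huv, hnorm, hnorm]
    exact halt i

lemma sign_dichotomy {v : ℝ → ℝ} {s : Set ℝ} (h : ∀ p ∈ s, ∀ q ∈ s, ¬ (v p * v q < 0)) :
    (∀ p ∈ s, 0 ≤ v p) ∨ (∀ p ∈ s, v p ≤ 0) := by
  by_cases hp : ∃ p ∈ s, 0 < v p
  · obtain ⟨p, hps, hvp⟩ := hp
    left
    intro q hqs
    by_contra hneg
    push_neg at hneg
    exact h p hps q hqs (mul_neg_of_pos_of_neg hvp hneg)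
  · push_neg at hp
    right
    exact hp

lemma tailzero {μ R₀ : ℝ} (hμ : 0 < μ) (hR₀ : 0 < R₀) {w w' g : ℝ → ℝ}
    (hw : ∀ r, HasDerivAt w (w' r) r)
    (hw'' : ∀ r, R₀ < r → HasDerivAt w' (g r) r)
    (hg : ∀ r, R₀ < r → g r ≤ -(μ * w r ^ 3 / r ^ 2))
    (hg0 : ∀ r, R₀ < r → g r ≤ 0)
    (hwnn : ∀ r, R₀ < r → 0 ≤ w r) :
    ∀ r, R₀ < r → w r = 0 := by
  have hwc : Continuous w := by
    rw [continuous_iff_continuousAt]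
    exact fun r => (hw r).differentiableAt.continuousAt
  have hanti : ∀ t, R₀ < t → AntitoneOn w' (Ici t) := by
    intro t ht
    apply antitoneOn_of_deriv_nonpos (convex_Ici t)
    · exact fun r hr =>
        ((hw'' r (lt_of_lt_of_le ht hr)).differentiableAt.continuousAt).continuousWithinAt
    · intro r hr
      rw [interior_Ici] at hr
      exact (hw'' r (ht.trans hr)).differentiableAt.differentiableWithinAt
    · intro r hr
      rw [interior_Ici] at hr
      rw [(hw'' r (ht.trans hr)).deriv]
      exact hg0 r (ht.trans hr)
  have hw'nn : ∀ s, R₀ < s → 0 ≤ w' s := by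
    intro s hs
    by_contra hneg
    push_neg at hneg
    set t : ℝ := s + (w s + 1) / (-w' s) with htdef
    have hts : s < t := by
      have h1 : 0 < (w s + 1) / (-w' s) := by
        apply div_pos (by linarith [hwnn s hs]) (by linarith)
      simp only [htdef]; linarith
    obtain ⟨ξ, hξ, hslope⟩ := exists_hasDerivAt_eq_slope w w' hts hwc.continuousOn
      (fun x _ => hw x)
    have hξs : w' ξ ≤ w' s := hanti s hs self_mem_Ici (mem_Ici.mpr hξ.1.le) hξ.1.le
    have h1 : w' ξ * (t - s) = w t - w s := by
      rw [hslope]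
      field_simp
      rw [mul_div_assoc, div_self (sub_ne_zero.mpr hts.ne'), mul_one]
    have h2 : w t ≤ w s + w' s * (t - s) := by
      nlinarith [mul_le_mul_of_nonneg_right hξs (by linarith : (0:ℝ) ≤ t - s)]
    have hts' : t - s = (w s + 1) / (-w' s) := by simp only [htdef]; ring
    have h3 : w' s * (t - s) = -(w s + 1) := by
      rw [hts']
      field_simp
      rw [mul_div_right_comm, div_self hneg.ne]
      ring
    have h4 : w t ≤ -1 := by rw [h3] at h2; linarith
    have := hwnn t (hs.trans hts)
    linarith
  by_cases hex : ∃ r₁, R₀ < r₁ ∧ 0 < w r₁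
  swap
  · intro r hr
    push_neg at hex
    exact le_antisymm (hex r hr) (hwnn r hr)
  exfalso
  obtain ⟨r₁, hr₁, hδ⟩ := hex
  have hr₁0 : 0 < r₁ := hR₀.trans hr₁
  have hmono : MonotoneOn w (Ici r₁) := by
    apply monotoneOn_of_deriv_nonneg (convex_Ici r₁)
    · exact hwc.continuousOn
    · exact fun r _ => (hw r).differentiableAt.differentiableWithinAt
    · intro r hr
      rw [interior_Ici] at hr
      rw [(hw r).deriv]
      exact hw'nn r (hr₁.trans hr)
  have hlb : ∀ t, r₁ ≤ t → w r₁ ≤ w t := fun t ht => hmono self_mem_Ici (mem_Ici.mpr ht) ht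
  have hwpos : ∀ t, r₁ ≤ t → 0 < w t := fun t ht => lt_of_lt_of_le hδ (hlb t ht)
  -- key differential inequality : w' r ≥ μ w(r)^3 / (2r) for r ≥ r₁
  have hkey : ∀ r, r₁ ≤ r → μ * w r ^ 3 / (2 * r) ≤ w' r := by
    intro r hr
    have hr0 : 0 < r := hr₁0.trans_le hr
    have hrR₀ : R₀ < r := hr₁.trans_le hr
    set C := μ * w r ^ 3 with hC
    set φ : ℝ → ℝ := fun t => w' t - C * t⁻¹ with hφ
    have hφd : ∀ t ∈ Ioo r (2 * r), HasDerivAt φ (g t - C * (-(t ^ 2)⁻¹)) t := by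
      intro t ht
      have ht0 : (0:ℝ) < t := hr0.trans ht.1
      exact (hw'' t (hrR₀.trans ht.1)).sub ((hasDerivAt_inv ht0.ne').const_mul C)
    have hφanti : AntitoneOn φ (Icc r (2 * r)) := by
      apply antitoneOn_of_deriv_nonpos (convex_Icc r (2 * r))
      · apply ContinuousOn.sub
        · intro t ht
          have : R₀ < t := hrR₀.trans_le ht.1
          exact ((hw'' t this).differentiableAt.continuousAt).continuousWithinAt
        · apply ContinuousOn.mul continuousOn_const
          apply ContinuousOn.inv₀ continuousOn_id
          intro t ht
          exact (hr0.trans_le ht.1).ne'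
      · intro t ht
        rw [interior_Icc] at ht
        exact (hφd t ht).differentiableAt.differentiableWithinAt
      · intro t ht
        rw [interior_Icc] at ht
        rw [(hφd t ht).deriv]
        have ht0 : (0:ℝ) < t := hr0.trans ht.1
        have hgt := hg t (hrR₀.trans ht.1)
        have hcube : w r ^ 3 ≤ w t ^ 3 :=
          pow_le_pow_left₀ (hwpos r hr).le
            (hmono (mem_Ici.mpr hr) (mem_Ici.mpr (hr.trans ht.1.le)) ht.1.le) 3
        have h1 : C * (t ^ 2)⁻¹ ≤ μ * w t ^ 3 * (t ^ 2)⁻¹ := by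
          apply mul_le_mul_of_nonneg_right _ (by positivity)
          exact mul_le_mul_of_nonneg_left hcube hμ.le
        have h2 : -(μ * w t ^ 3 / t ^ 2) = -(μ * w t ^ 3 * (t ^ 2)⁻¹) := by
          rw [div_eq_mul_inv]
        rw [h2] at hgt
        linarith
    have hmem1 : r ∈ Icc r (2 * r) := ⟨le_refl r, by linarith⟩
    have hmem2 : 2 * r ∈ Icc r (2 * r) := ⟨by linarith, le_refl _⟩
    have h5 : φ (2 * r) ≤ φ r := hφanti hmem1 hmem2 (by linarith)
    have h6 : 0 ≤ w' (2 * r) := hw'nn (2 * r) (by linarith)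
    have h7 : C * r⁻¹ - C * (2 * r)⁻¹ = μ * w r ^ 3 / (2 * r) := by
      rw [hC]; field_simp; ring
    simp only [hφ] at h5
    linarith
  -- blow-up
  set h : ℝ → ℝ := fun t => (w t ^ 2)⁻¹ + μ / 2 * Real.log t with hh
  have hanti2 : AntitoneOn h (Ici r₁) := by
    apply antitoneOn_of_deriv_nonpos (convex_Ici r₁)
    · apply ContinuousOn.add
      · apply ContinuousOn.inv₀ ((hwc.pow 2).continuousOn)
        intro t ht
        exact pow_ne_zero 2 (hwpos t ht).ne'
      · apply ContinuousOn.mul continuousOn_const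
        apply Real.continuousOn_log.mono
        intro t ht
        exact (hr₁0.trans_le ht).ne'
    · intro t ht
      rw [interior_Ici] at ht
      have ht0 : (0:ℝ) < t := hr₁0.trans ht
      have hwt : w t ≠ 0 := (hwpos t ht.le).ne'
      exact ((((hw t).pow 2).inv (pow_ne_zero 2 hwt)).add
        ((Real.hasDerivAt_log ht0.ne').const_mul (μ / 2))).differentiableAt.differentiableWithinAt
    · intro t ht
      rw [interior_Ici] at ht
      have ht0 : (0:ℝ) < t := hr₁0.trans ht
      have hwt : 0 < w t := hwpos t ht.le
      have hD : HasDerivAt h (-((2:ℕ) * w t ^ (2 - 1) * w' t) / (w t ^ 2) ^ 2 + μ / 2 * t⁻¹) t :=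
        (((hw t).pow 2).inv (pow_ne_zero 2 hwt.ne')).add
          ((Real.hasDerivAt_log ht0.ne').const_mul (μ / 2))
      rw [hD.deriv]
      have hk := hkey t ht.le
      have e1 : -((2:ℕ) * w t ^ (2 - 1) * w' t) / (w t ^ 2) ^ 2 = -(2 * w' t / w t ^ 3) := by
        field_simp
        ring
      have e2 : μ / 2 * t⁻¹ = μ / (2 * t) := by
        field_simp
      rw [e1, e2]
      have e3 : μ / (2 * t) ≤ 2 * w' t / w t ^ 3 := by
        rw [div_le_div_iff₀ (by positivity) (by positivity)]
        have h9 := mul_le_mul_of_nonneg_right hk (by positivity : (0:ℝ) ≤ 2 * t)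
        rw [div_mul_cancel₀ _ (by positivity : (2 * t : ℝ) ≠ 0)] at h9
        nlinarith [pow_pos hwt 3]
      linarith
  -- conclude
  have hKdef : ∀ t, r₁ ≤ t → h t ≤ h r₁ := fun t ht => hanti2 self_mem_Ici (mem_Ici.mpr ht) ht
  set K := h r₁ with hK
  set t₀ : ℝ := max r₁ (Real.exp ((K + 1) * (2 / μ))) with ht₀
  have ht₀1 : r₁ ≤ t₀ := le_max_left _ _
  have ht₀0 : 0 < t₀ := hr₁0.trans_le ht₀1
  have hlog : (K + 1) * (2 / μ) ≤ Real.log t₀ := by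
    rw [Real.le_log_iff_exp_le ht₀0]
    exact le_max_right _ _
  have h10 : K + 1 ≤ μ / 2 * Real.log t₀ := by
    have := mul_le_mul_of_nonneg_left hlog (by positivity : (0:ℝ) ≤ μ / 2)
    calc K + 1 = μ / 2 * ((K + 1) * (2 / μ)) := by field_simp
    _ ≤ μ / 2 * Real.log t₀ := this
  have h11 := hKdef t₀ ht₀1
  have h12 : 0 < (w t₀ ^ 2)⁻¹ := by
    have := hwpos t₀ ht₀1
    positivity
  simp only [hh] at h11
  linarith

lemma leftzero {a ρ : ℝ} (ha : 0 < a) (haρ : a < ρ) {w w' g : ℝ → ℝ}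
    (hw : ∀ r, HasDerivAt w (w' r) r)
    (hw'c : Continuous w')
    (hw'' : ∀ r, r ∈ Ioo a ρ → HasDerivAt w' (g r) r)
    (hg0 : ∀ r, r ∈ Ioo a ρ → g r ≤ 0)
    (hwnn : ∀ r, r ∈ Ioo a ρ → 0 ≤ w r)
    (hwρ : w ρ = 0) (hw'ρ : w' ρ = 0) :
    ∀ r, r ∈ Ioo a ρ → w r = 0 := by
  intro r hr
  have hwc : Continuous w := by
    rw [continuous_iff_continuousAt]
    exact fun s => (hw s).differentiableAt.continuousAt
  have hanti : AntitoneOn w' (Icc r ρ) := by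
    apply antitoneOn_of_deriv_nonpos (convex_Icc r ρ)
    · exact hw'c.continuousOn
    · intro t ht
      rw [interior_Icc] at ht
      exact (hw'' t ⟨hr.1.trans ht.1, ht.2⟩).differentiableAt.differentiableWithinAt
    · intro t ht
      rw [interior_Icc] at ht
      rw [(hw'' t ⟨hr.1.trans ht.1, ht.2⟩).deriv]
      exact hg0 t ⟨hr.1.trans ht.1, ht.2⟩
  have hw'nn : ∀ t, t ∈ Icc r ρ → 0 ≤ w' t := by
    intro t ht
    have := hanti ht (right_mem_Icc.mpr hr.2.le) ht.2
    rw [hw'ρ] at this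
    exact this
  have hmono : MonotoneOn w (Icc r ρ) := by
    apply monotoneOn_of_deriv_nonneg (convex_Icc r ρ)
    · exact hwc.continuousOn
    · exact fun t _ => (hw t).differentiableAt.differentiableWithinAt
    · intro t ht
      rw [interior_Icc] at ht
      rw [(hw t).deriv]
      exact hw'nn t ⟨ht.1.le, ht.2.le⟩
  have h1 : w r ≤ w ρ := hmono (left_mem_Icc.mpr hr.2.le) (right_mem_Icc.mpr hr.2.le) hr.2.le
  rw [hwρ] at h1
  exact le_antisymm h1 (hwnn r hr)

abbrev E3 := EuclideanSpace ℝ (Fin 3)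

lemma norm_hasFDerivAt {y : E3} (hy : y ≠ 0) :
    HasFDerivAt (fun z : E3 => ‖z‖) (‖y‖⁻¹ • innerSL ℝ y) y := by
  have hn : (0:ℝ) < ‖y‖ := norm_pos_iff.mpr hy
  have h1 : HasFDerivAt (fun z : E3 => ‖z‖ ^ 2) (2 • innerSL ℝ y) y :=
    (hasStrictFDerivAt_norm_sq y).hasFDerivAt
  have h2 : HasDerivAt Real.sqrt (1 / (2 * Real.sqrt (‖y‖ ^ 2))) (‖y‖ ^ 2) :=
    Real.hasDerivAt_sqrt (by positivity)
  have h3 := h2.comp_hasFDerivAt y h1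
  have h4 : (Real.sqrt ∘ fun z : E3 => ‖z‖ ^ 2) = fun z : E3 => ‖z‖ := by
    funext z; simp [Function.comp, Real.sqrt_sq (norm_nonneg z)]
  rw [h4] at h3
  refine h3.congr_fderiv ?_
  rw [Real.sqrt_sq (norm_nonneg y)]
  ext z
  simp only [ContinuousLinearMap.coe_smul', Pi.smul_apply, smul_eq_mul,
    ContinuousLinearMap.smul_apply]
  field_simp
  ring

lemma radial_fderiv {v : ℝ → ℝ} (hvd : Differentiable ℝ v) {y : E3} (hy : y ≠ 0) :
    HasFDerivAt (fun z : E3 => v ‖z‖) ((deriv v ‖y‖ * ‖y‖⁻¹) • innerSL ℝ y) y := by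
  have h := ((hvd ‖y‖).hasDerivAt).comp_hasFDerivAt y (norm_hasFDerivAt hy)
  refine h.congr_fderiv ?_
  rw [smul_smul]

lemma radial_fderiv_apply {v : ℝ → ℝ} (hvd : Differentiable ℝ v) {y : E3} (hy : y ≠ 0)
    (i : Fin 3) :
    fderiv ℝ (fun z : E3 => v ‖z‖) y (EuclideanSpace.single i 1)
      = deriv v ‖y‖ * ‖y‖⁻¹ * y i := by
  rw [(radial_fderiv hvd hy).fderiv]
  simp only [ContinuousLinearMap.smul_apply, innerSL_apply_apply, smul_eq_mul]
  rw [EuclideanSpace.inner_single_right]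
  simp [mul_comm]

lemma radial_lap {v : ℝ → ℝ} (hv : ContDiff ℝ 2 v) {x : E3} (hx : x ≠ 0) :
    lap3 (fun z : E3 => v ‖z‖) x = deriv (deriv v) ‖x‖ + 2 * deriv v ‖x‖ / ‖x‖ := by
  have hv' : ContDiff ℝ (1 + 1) v := by rw [one_add_one_eq_two]; exact hv
  obtain ⟨hvd, -, hv1⟩ := contDiff_succ_iff_deriv.mp hv'
  have hdvd : Differentiable ℝ (deriv v) := hv1.differentiable one_ne_zero
  have hn : (0:ℝ) < ‖x‖ := norm_pos_iff.mpr hx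
  set A := deriv v ‖x‖ with hA0
  set D := deriv (deriv v) ‖x‖ with hD0
  have hopen : {z : E3 | z ≠ 0} ∈ nhds x := by
    have : IsOpen {z : E3 | z ≠ 0} := isOpen_compl_singleton
    exact this.mem_nhds hx
  have hfd : ∀ i : Fin 3,
      (fun z : E3 => fderiv ℝ (fun z : E3 => v ‖z‖) z (EuclideanSpace.single i 1))
        =ᶠ[nhds x] (fun z : E3 => deriv v ‖z‖ * ‖z‖⁻¹ * z i) := by
    intro i
    filter_upwards [hopen] with z hz
    exact radial_fderiv_apply hvd hz i
  have key : ∀ i : Fin 3,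
      fderiv ℝ (fun z : E3 => fderiv ℝ (fun z : E3 => v ‖z‖) z (EuclideanSpace.single i 1)) x
        (EuclideanSpace.single i 1)
      = A * ‖x‖⁻¹ + (D * ‖x‖⁻¹ * ‖x‖⁻¹ + A * (-(‖x‖ ^ 2)⁻¹ * ‖x‖⁻¹)) * (x i) ^ 2 := by
    intro i
    rw [(hfd i).fderiv_eq]
    have hAd : HasFDerivAt (fun z : E3 => deriv v ‖z‖) ((D * ‖x‖⁻¹) • innerSL ℝ x) x :=
      radial_fderiv hdvd hx
    have hBd : HasFDerivAt (fun z : E3 => ‖z‖⁻¹) ((-(‖x‖ ^ 2)⁻¹ * ‖x‖⁻¹) • innerSL ℝ x) x := by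
      have h := (hasDerivAt_inv hn.ne').comp_hasFDerivAt x (norm_hasFDerivAt hx)
      refine h.congr_fderiv ?_
      rw [smul_smul]
    have hCd : HasFDerivAt (fun z : E3 => z i)
        (PiLp.proj (𝕜 := ℝ) 2 (fun _ : Fin 3 => ℝ) i) x := by
      have h := (PiLp.proj (𝕜 := ℝ) 2 (fun _ : Fin 3 => ℝ) i).hasFDerivAt (x := x)
      exact h
    have hprod := (hAd.mul hBd).mul hCd
    rw [HasFDerivAt.fderiv (f := fun z : E3 => deriv v ‖z‖ * ‖z‖⁻¹ * z i) hprod]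
    simp only [ContinuousLinearMap.add_apply, ContinuousLinearMap.smul_apply,
      ContinuousLinearMap.coe_smul', Pi.smul_apply, innerSL_apply_apply, smul_eq_mul,
      PiLp.proj_apply, EuclideanSpace.single_apply, if_pos rfl, Pi.mul_apply]
    rw [EuclideanSpace.inner_single_right]
    simp only [RCLike.inner_apply, map_one, one_mul, conj_trivial, if_true]
    ring
  have hsum : ∑ i : Fin 3, (x i) ^ 2 = ‖x‖ ^ 2 := by
    have h := real_inner_self_eq_norm_sq x
    rw [← h, PiLp.inner_apply]
    simp [sq, RCLike.inner_apply]
  have hstep : lap3 (fun z : E3 => v ‖z‖) x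
      = ∑ i : Fin 3, (A * ‖x‖⁻¹ + (D * ‖x‖⁻¹ * ‖x‖⁻¹ + A * (-(‖x‖ ^ 2)⁻¹ * ‖x‖⁻¹)) * (x i) ^ 2) := by
    rw [lap3]
    exact Finset.sum_congr rfl fun i _ => key i
  rw [hstep, Finset.sum_add_distrib, Finset.sum_const, ← Finset.mul_sum, hsum]
  simp only [Finset.card_univ, Fintype.card_fin, nsmul_eq_mul, Nat.cast_ofNat]
  field_simp
  ring

lemma core {μQ : ℝ} (hμ : 0 < μQ) {v c : ℝ → ℝ} (hv : ContDiff ℝ 2 v)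
    (hcle : ∀ r, 0 < r → μQ * v r ^ 2 ≤ c r)
    (heqn : ∀ r, 0 < r → deriv (deriv v) r + 2 * deriv v r / r = -(c r * v r))
    {Q : ℕ} (hchain : ¬ AltChainR v Q) :
    ∀ t, 0 ≤ t → v t = 0 := by
  have hv' : ContDiff ℝ (1 + 1) v := by rw [one_add_one_eq_two]; exact hv
  obtain ⟨hvd, -, hv1⟩ := contDiff_succ_iff_deriv.mp hv'
  have hdvd : Differentiable ℝ (deriv v) := hv1.differentiable one_ne_zero
  have hvc : Continuous v := hv.continuous
  have hdvc : Continuous (deriv v) := hv1.continuous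
  set w : ℝ → ℝ := fun r => r * v r with hwdef
  set w' : ℝ → ℝ := fun r => v r + r * deriv v r with hw'def
  have hw : ∀ r, HasDerivAt w (w' r) r := by
    intro r
    have h := (hasDerivAt_id r).mul (hvd r).hasDerivAt
    exact h.congr_deriv (by simp [hw'def])
  have hw'd : ∀ r, HasDerivAt w' (2 * deriv v r + r * deriv (deriv v) r) r := by
    intro r
    have h := ((hvd r).hasDerivAt).add ((hasDerivAt_id r).mul (hdvd r).hasDerivAt)
    refine h.congr_deriv ?_
    simp only [id_eq]
    ring
  have hw'' : ∀ r, 0 < r → HasDerivAt w' (-(c r * w r)) r := by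
    intro r hr
    have h := hw'd r
    have he := heqn r hr
    have hval : 2 * deriv v r + r * deriv (deriv v) r = -(c r * w r) := by
      field_simp at he
      simp only [hwdef]
      linear_combination he
    rwa [hval] at h
  have hc0 : ∀ r, 0 < r → 0 ≤ c r := fun r hr => le_trans (by positivity) (hcle r hr)
  have hchain' : ¬ AltChainR (fun t => -v t) Q := by
    intro ⟨r, h1, h2, h3⟩
    exact hchain ⟨r, h1, h2, fun i => by have := h3 i; simpa [neg_mul_neg] using this⟩
  -- tail : constant sign far out
  have htail : ∃ R₀, 0 < R₀ ∧ ∀ p q, R₀ < p → R₀ < q → ¬ (v p * v q < 0) := by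
    by_contra hcon
    push_neg at hcon
    apply hchain
    apply chain_build (S := Ioi 0) subset_rfl ?_ (mem_Ioi.mpr one_pos) Q
    intro a ha
    obtain ⟨p, q, hp, hq, hpq⟩ := hcon a ha
    exact ⟨p, ha.trans hp, q, ha.trans hq, hp, hq, hpq⟩
  obtain ⟨R₀, hR₀, hsgn⟩ := htail
  have hvtail : ∀ r, R₀ < r → v r = 0 := by
    have hdich := sign_dichotomy (s := Ioi R₀) (fun p hp q hq => hsgn p q hp hq)
    rcases hdich with hnn | hnp
    · intro r hr
      have hr0 : 0 < r := hR₀.trans hr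
      have := tailzero hμ hR₀ (w := w) (w' := w') (g := fun r => -(c r * w r)) hw
        (fun s hs => hw'' s (hR₀.trans hs)) ?_ ?_ ?_ r hr
      · simp only [hwdef] at this
        rcases mul_eq_zero.mp this with h | h
        · exact absurd h hr0.ne'
        · exact h
      · intro s hs
        have hs0 : 0 < s := hR₀.trans hs
        have hvs : 0 ≤ v s := hnn s hs
        have h1 := hcle s hs0
        have e : μQ * (s * v s) ^ 3 / s ^ 2 = μQ * (s * v s ^ 3) := by
          field_simp
        simp only [hwdef]
        rw [e]
        nlinarith [mul_nonneg (sub_nonneg.mpr h1) (mul_nonneg hs0.le hvs)]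
      · intro s hs
        have hs0 : 0 < s := hR₀.trans hs
        have h5 : 0 ≤ c s * w s := mul_nonneg (hc0 s hs0)
          (by simp only [hwdef]; exact mul_nonneg hs0.le (hnn s hs))
        show -(c s * w s) ≤ 0
        linarith
      · intro s hs
        have hs0 : 0 < s := hR₀.trans hs
        show 0 ≤ w s
        simp only [hwdef]
        exact mul_nonneg hs0.le (hnn s hs)
    · intro r hr
      have hr0 : 0 < r := hR₀.trans hr
      have := tailzero hμ hR₀ (w := fun s => -(w s)) (w' := fun s => -(w' s))
        (g := fun s => c s * w s) (fun s => (hw s).neg)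
        (fun s hs => (hw'' s (hR₀.trans hs)).neg.congr_deriv (neg_neg _)) ?_ ?_ ?_ r hr
      · simp only [hwdef, neg_eq_zero] at this
        rcases mul_eq_zero.mp this with h | h
        · exact absurd h hr0.ne'
        · exact h
      · intro s hs
        have hs0 : 0 < s := hR₀.trans hs
        have hvs : v s ≤ 0 := hnp s hs
        have h1 := hcle s hs0
        have e2 : -(μQ * (-(s * v s)) ^ 3 / s ^ 2) = μQ * (s * v s ^ 3) := by
          field_simp
        simp only [hwdef]
        rw [e2]
        nlinarith [mul_nonneg (sub_nonneg.mpr h1) (mul_nonneg hs0.le (neg_nonneg.mpr hvs))]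
      · intro s hs
        have hs0 : 0 < s := hR₀.trans hs
        have h5 : c s * w s ≤ 0 := mul_nonpos_of_nonneg_of_nonpos (hc0 s hs0)
          (by simp only [hwdef]; exact mul_nonpos_of_nonneg_of_nonpos hs0.le (hnp s hs))
        show c s * w s ≤ 0
        linarith
      · intro s hs
        have hs0 : 0 < s := hR₀.trans hs
        show 0 ≤ -(w s)
        simp only [hwdef, neg_nonneg]
        exact mul_nonpos_of_nonneg_of_nonpos hs0.le (hnp s hs)
  -- now kill everything in (0, ∞)
  have hpos : ∀ t, 0 < t → v t = 0 := by
    by_contra hcon2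
    push_neg at hcon2
    obtain ⟨t₀, ht₀, hvt₀⟩ := hcon2
    set T := {t : ℝ | 0 < t ∧ v t ≠ 0} with hT
    have hTne : T.Nonempty := ⟨t₀, ht₀, hvt₀⟩
    have hTbdd : BddAbove T := ⟨R₀, fun s hs => by
      by_contra hltn
      push_neg at hltn
      exact hs.2 (hvtail s hltn)⟩
    set ρ := sSup T with hρdef
    have hρt₀ : t₀ ≤ ρ := le_csSup hTbdd ⟨ht₀, hvt₀⟩
    have hρ0 : 0 < ρ := lt_of_lt_of_le ht₀ hρt₀
    have hafter : ∀ t, ρ < t → v t = 0 := by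
      intro t ht
      by_contra hne
      have : t ≤ ρ := le_csSup hTbdd ⟨hρ0.trans ht, hne⟩
      linarith
    have hvρ : v ρ = 0 := by
      have hcl : Ioi ρ ⊆ v ⁻¹' {0} := fun t ht => hafter t ht
      have hclosed : IsClosed (v ⁻¹' {0}) := isClosed_singleton.preimage hvc
      have hsub : closure (Ioi ρ) ⊆ v ⁻¹' {0} := closure_minimal hcl hclosed
      have hmem : ρ ∈ closure (Ioi ρ) := by rw [closure_Ioi]; exact self_mem_Ici
      exact hsub hmem
    have hdvρ : deriv v ρ = 0 := by
      have h1 : HasDerivWithinAt v (deriv v ρ) (Ici ρ) ρ :=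
        ((hvd ρ).hasDerivAt).hasDerivWithinAt
      have h2 : HasDerivWithinAt v 0 (Ici ρ) ρ := by
        apply (hasDerivWithinAt_const ρ (Ici ρ) (0:ℝ)).congr
        · intro t ht
          rcases eq_or_lt_of_le (mem_Ici.mp ht) with h | h
          · rw [← h]; exact hvρ
          · exact hafter t h
        · exact hvρ
      have h3 := ((uniqueDiffOn_Ici ρ) ρ self_mem_Ici).eq h1.hasFDerivWithinAt h2.hasFDerivWithinAt
      have h4 := DFunLike.congr_fun h3 (1:ℝ)
      simpa using h4
    have hwρ : w ρ = 0 := by simp [hwdef, hvρ]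
    have hw'ρ : w' ρ = 0 := by simp [hw'def, hvρ, hdvρ]
    have hw'c : Continuous w' := hvc.add (continuous_id.mul hdvc)
    have hnear : ∃ a, 0 < a ∧ a < ρ ∧ ∀ p ∈ Ioo a ρ, ∀ q ∈ Ioo a ρ, ¬ (v p * v q < 0) := by
      by_contra hcon3
      push_neg at hcon3
      apply hchain
      apply chain_build (S := Ioo 0 ρ) (a₀ := ρ / 2) (fun s hs => hs.1) ?_
        ⟨half_pos hρ0, half_lt_self hρ0⟩ Q
      intro a ha
      obtain ⟨p, hp, q, hq, hpq⟩ := hcon3 a ha.1 ha.2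
      exact ⟨p, ⟨ha.1.trans hp.1, hp.2⟩, q, ⟨ha.1.trans hq.1, hq.2⟩, hp.1, hq.1, hpq⟩
    obtain ⟨a, ha0, haρ, hns⟩ := hnear
    have hdich := sign_dichotomy (s := Ioo a ρ) hns
    have hvan : ∀ r ∈ Ioo a ρ, v r = 0 := by
      rcases hdich with hnn | hnp
      · intro r hr
        have hr0 : 0 < r := ha0.trans hr.1
        have := leftzero ha0 haρ (w := w) (w' := w') (g := fun s => -(c s * w s))
          hw hw'c (fun s hs => hw'' s (ha0.trans hs.1)) ?_ ?_ hwρ hw'ρ r hr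
        · simp only [hwdef] at this
          rcases mul_eq_zero.mp this with h | h
          · exact absurd h hr0.ne'
          · exact h
        · intro s hs
          have hs0 : 0 < s := ha0.trans hs.1
          have h5 : 0 ≤ c s * w s := mul_nonneg (hc0 s hs0)
            (by simp only [hwdef]; exact mul_nonneg hs0.le (hnn s hs))
          show -(c s * w s) ≤ 0
          linarith
        · intro s hs
          have hs0 : 0 < s := ha0.trans hs.1
          show 0 ≤ w s
          simp only [hwdef]
          exact mul_nonneg hs0.le (hnn s hs)
      · intro r hr
        have hr0 : 0 < r := ha0.trans hr.1
        have := leftzero ha0 haρ (w := fun s => -(w s)) (w' := fun s => -(w' s))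
          (g := fun s => c s * w s) (fun s => (hw s).neg) hw'c.neg
          (fun s hs => (hw'' s (ha0.trans hs.1)).neg.congr_deriv (neg_neg _)) ?_ ?_
          (show -(w ρ) = 0 by rw [hwρ, neg_zero]) (show -(w' ρ) = 0 by rw [hw'ρ, neg_zero]) r hr
        · simp only [hwdef, neg_eq_zero] at this
          rcases mul_eq_zero.mp this with h | h
          · exact absurd h hr0.ne'
          · exact h
        · intro s hs
          have hs0 : 0 < s := ha0.trans hs.1
          show c s * w s ≤ 0
          exact mul_nonpos_of_nonneg_of_nonpos (hc0 s hs0)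
            (by simp only [hwdef]; exact mul_nonpos_of_nonneg_of_nonpos hs0.le (hnp s hs))
        · intro s hs
          have hs0 : 0 < s := ha0.trans hs.1
          show 0 ≤ -(w s)
          simp only [hwdef, neg_nonneg]
          exact mul_nonpos_of_nonneg_of_nonpos hs0.le (hnp s hs)
    obtain ⟨s, hsT, hsgt⟩ := exists_lt_of_lt_csSup hTne (show a < sSup T from haρ)
    have hsρ : s ≤ ρ := le_csSup hTbdd hsT
    have hsne : s ≠ ρ := fun h => hsT.2 (h ▸ hvρ)
    exact hsT.2 (hvan s ⟨hsgt, lt_of_le_of_ne hsρ hsne⟩)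
  intro t ht
  rcases eq_or_lt_of_le ht with h | h
  · have hcl : Ioi (0:ℝ) ⊆ v ⁻¹' {0} := fun s hs => hpos s hs
    have hclosed : IsClosed (v ⁻¹' {0}) := isClosed_singleton.preimage hvc
    have hsub : closure (Ioi (0:ℝ)) ⊆ v ⁻¹' {0} := closure_minimal hcl hclosed
    have hmem : (0:ℝ) ∈ closure (Ioi (0:ℝ)) := by rw [closure_Ioi]; exact self_mem_Ici
    have := hsub hmem
    rw [← h]
    exact this
  · exact hpos t h

end AuxLiouville

theorem liouville_R3_nonneg (N : ℕ) (hN : 2 ≤ N) (μ : Fin N → ℝ) (hμ : ∀ j, 0 < μ j)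
    (P : Fin N → ℕ) (B : Fin N → Fin N → ℝ)
    (hBsymm : ∀ i j, i ≠ j → B i j = B j i)
    (hBpos : ∀ i j, i ≠ j → 0 ≤ B i j) :
        ∀ u : Fin N → EuclideanSpace ℝ (Fin 3) → ℝ,
          (∀ j, IsRadial (u j)) →
          (∀ j, ContDiff ℝ 2 (u j)) →
          (∀ j x, |u j x| ≤ 1) →
          (∀ j, (∀ x, u j x = 0) ∨ ChangesSignAtMostOn (u j) Set.univ (P j)) →
          (∀ j x, -lap3 (u j) x =
              μ j * u j x ^ 3 + ∑ i ∈ Finset.univ.erase j, B i j * u i x ^ 2 * u j x) →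
          ∀ j x, u j x = 0 := by
  intro u hrad hC2 hbound hsign hpde j x
  classical
  set e0 : EuclideanSpace ℝ (Fin 3) := EuclideanSpace.single 0 1 with he0
  have he0n : ‖e0‖ = 1 := by rw [he0, EuclideanSpace.norm_single, norm_one]
  set vv : Fin N → ℝ → ℝ := fun i t => u i (t • e0) with hvv
  have huvv : ∀ i z, u i z = vv i ‖z‖ := by
    intro i z
    obtain ⟨V, hV⟩ := hrad i
    simp only [hvv]
    calc u i z = V ‖z‖ := hV z
      _ = V ‖(‖z‖ : ℝ) • e0‖ := by
          rw [norm_smul, he0n, mul_one, Real.norm_eq_abs, abs_norm]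
      _ = u i ((‖z‖ : ℝ) • e0) := (hV _).symm
  have hsm : ∀ i, ContDiff ℝ 2 (vv i) := by
    intro i
    exact (hC2 i).comp ((contDiff_id (E := ℝ)).smul contDiff_const)
  rcases hsign j with hzero | hsig
  · exact hzero x
  set v : ℝ → ℝ := vv j with hvdef
  set cc : ℝ → ℝ :=
    fun r => μ j * v r ^ 2 + ∑ i ∈ Finset.univ.erase j, B i j * vv i r ^ 2 with hcc
  have hcle : ∀ r, 0 < r → μ j * v r ^ 2 ≤ cc r := by
    intro r _
    have h1 : 0 ≤ ∑ i ∈ Finset.univ.erase j, B i j * vv i r ^ 2 :=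
      Finset.sum_nonneg fun i hi =>
        mul_nonneg (hBpos i j (Finset.ne_of_mem_erase hi)) (sq_nonneg _)
    simp only [hcc]
    linarith
  have heqn : ∀ r, 0 < r → deriv (deriv v) r + 2 * deriv v r / r = -(cc r * v r) := by
    intro r hr
    set xr : EuclideanSpace ℝ (Fin 3) := r • e0 with hxr
    have hxrn : ‖xr‖ = r := by
      rw [hxr, norm_smul, he0n, mul_one, Real.norm_eq_abs, abs_of_pos hr]
    have hxne : xr ≠ 0 := by
      intro h
      rw [h, norm_zero] at hxrn
      exact absurd hxrn.symm hr.ne'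
    have hueq : u j = fun z => v ‖z‖ := funext (huvv j)
    have hlap := radial_lap (v := v) (hsm j) hxne
    have hp := hpde j xr
    rw [hueq] at hp
    simp only [huvv] at hp
    rw [hxrn] at hp hlap
    have hs : cc r * v r
        = μ j * v r ^ 3 + ∑ i ∈ Finset.univ.erase j, B i j * vv i r ^ 2 * v r := by
      simp only [hcc]
      rw [add_mul, Finset.sum_mul]
      ring_nf
    rw [hs]
    linarith [hp, hlap]
  have hchain : ¬ AltChainR v (P j + 1) := fun hch => hsig (altChain_witness (huvv j) hch)
  have hz := core (hμ j) (hsm j) hcle heqn hchain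
  rw [huvv j x]
  exact hz ‖x‖ (norm_nonneg x)
end

section
/- Let N ≥ 2, let μ₁,…,μ_N > 0 be constants and let P₁,…,P_N ∈ ℕ. Then there exists a constant ε₁ = ε₁(μ₁,…,μ_N; P₁,…,P_N) > 0 with the following property: whenever real constants β_{ij} = β_{ji} (for i ≠ j) satisfy |β_{ij}| < ε₁, and u₁,…,u_N : ℝ³ → ℝ are radial functions of class C² such that for every j one has |u_j(x)| ≤ 1 for all x ∈ ℝ³, u_j is either identically zero or changes sign at most P_j times, and −Δu_j = μ_j u_j³ + Σ_{i≠j} β_{ij} u_i² u_j holds pointwise in ℝ³, then u_j ≡ 0 for every j = 1,…,N. -/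
open scoped BigOperators

section LiouvilleAux
open Set

noncomputable abbrev ee (i : Fin 3) : E3 := EuclideanSpace.single i (1:ℝ)

noncomputable def Fd (u : E3 → ℝ) : E3 → (E3 →L[ℝ] ℝ) := fderiv ℝ u
noncomputable def Fd2 (u : E3 → ℝ) : E3 → (E3 →L[ℝ] (E3 →L[ℝ] ℝ)) := fderiv ℝ (Fd u)

lemma Fd_contDiff (u : E3 → ℝ) (hu : ContDiff ℝ 2 u) : ContDiff ℝ 1 (Fd u) :=
  hu.fderiv_right (by norm_num)

lemma hasFDerivAt_Fd (u : E3 → ℝ) (hu : ContDiff ℝ 2 u) (x : E3) :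
    HasFDerivAt (Fd u) (Fd2 u x) x :=
  (((Fd_contDiff u hu).differentiable (by norm_num)) x).hasFDerivAt

lemma hasFDerivAt_u (u : E3 → ℝ) (hu : ContDiff ℝ 2 u) (x : E3) :
    HasFDerivAt u (Fd u x) x :=
  ((hu.differentiable (by norm_num)) x).hasFDerivAt

lemma lap3_entry (u : E3 → ℝ) (hu : ContDiff ℝ 2 u) (x : E3) (i : Fin 3) :
    fderiv ℝ (fun y => fderiv ℝ u y (ee i)) x (ee i) = Fd2 u x (ee i) (ee i) := by
  have h : HasFDerivAt (fun y => Fd u y (ee i))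
      (((ContinuousLinearMap.apply ℝ ℝ (ee i)).comp (Fd2 u x))) x :=
    (ContinuousLinearMap.apply ℝ ℝ (ee i)).hasFDerivAt.comp x (hasFDerivAt_Fd u hu x)
  have := h.fderiv
  simp only [Fd] at this
  rw [this]; rfl

lemma norm_combo (i : Fin 3) (hi : i ≠ 0) (a b : ℝ) :
    ‖a • ee 0 + b • ee i‖^2 = a^2 + b^2 := by
  rw [EuclideanSpace.norm_eq, Real.sq_sqrt (by positivity)]
  have : ∀ j, (a • ee 0 + b • ee i) j = a * (if j = 0 then 1 else 0) + b * (if j = i then 1 else 0) := by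
    intro j
    simp [EuclideanSpace.single_apply, PiLp.add_apply, PiLp.smul_apply, smul_eq_mul]
  fin_cases i <;> simp_all [Fin.sum_univ_three]

lemma cross_second_deriv (u : E3 → ℝ) (hu : ContDiff ℝ 2 u) (V : ℝ → ℝ)
    (hV : ∀ x, u x = V ‖x‖) (r : ℝ) (hr : 0 < r) (i : Fin 3) (hi : i ≠ 0) :
    Fd2 u (r • ee 0) (ee i) (ee i) = Fd u (r • ee 0) (ee 0) / r := by
  set γ : ℝ → E3 := fun θ => (r * Real.cos θ) • ee 0 + (r * Real.sin θ) • ee i with hγ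
  set γ' : ℝ → E3 := fun θ => (-(r * Real.sin θ)) • ee 0 + (r * Real.cos θ) • ee i with hγ'
  have hdγ : ∀ θ, HasDerivAt γ (γ' θ) θ := by
    intro θ
    have h1 : HasDerivAt (fun θ => (r * Real.cos θ) • ee 0) ((r * -Real.sin θ) • ee 0) θ :=
      ((Real.hasDerivAt_cos θ).const_mul r).smul_const (ee 0)
    have h2 : HasDerivAt (fun θ => (r * Real.sin θ) • ee i) ((r * Real.cos θ) • ee i) θ :=
      ((Real.hasDerivAt_sin θ).const_mul r).smul_const (ee i)
    have := h1.add h2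
    rw [hγ']
    simp only [mul_neg, neg_smul] at this ⊢
    exact this
  have hnorm : ∀ θ, ‖γ θ‖ = r := by
    intro θ
    have h2 : ‖γ θ‖^2 = r^2 := by
      rw [hγ]; rw [norm_combo i hi]
      have := Real.sin_sq_add_cos_sq θ
      nlinarith [this]
    nlinarith [norm_nonneg (γ θ), h2]
  have hconst : (fun θ => u (γ θ)) = fun _ => V r := by
    funext θ; rw [hV, hnorm]
  have hzero : ∀ θ, Fd u (γ θ) (γ' θ) = 0 := by
    intro θ
    have hc : HasDerivAt (fun θ => u (γ θ)) (Fd u (γ θ) (γ' θ)) θ :=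
      (hasFDerivAt_u u hu (γ θ)).comp_hasDerivAt θ (hdγ θ)
    have hc0 : HasDerivAt (fun θ => u (γ θ)) 0 θ := by
      rw [hconst]; exact hasDerivAt_const θ _
    exact hc.unique hc0
  -- differentiate G θ = Fd u (γ θ) (γ' θ) at θ = 0
  have hγ0 : γ 0 = r • ee 0 := by simp [hγ]
  have hγ'0 : γ' 0 = r • ee i := by simp [hγ']
  have hdγ' : HasDerivAt γ' ((-r) • ee 0) 0 := by
    have h1 : HasDerivAt (fun θ => (-(r * Real.sin θ))) (-(r * Real.cos 0)) 0 := by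
      exact ((Real.hasDerivAt_sin 0).const_mul r).neg
    have h1' : HasDerivAt (fun θ => (-(r * Real.sin θ)) • ee 0) ((-(r * Real.cos 0)) • ee 0) 0 :=
      h1.smul_const (ee 0)
    have h2 : HasDerivAt (fun θ => (r * Real.cos θ) • ee i) ((r * -Real.sin 0) • ee i) 0 :=
      ((Real.hasDerivAt_cos 0).const_mul r).smul_const (ee i)
    have := h1'.add h2
    simpa [hγ', Pi.add_def] using this
  have hdF : HasDerivAt (fun θ => Fd u (γ θ)) (Fd2 u (γ 0) (γ' 0)) 0 :=
    (hasFDerivAt_Fd u hu (γ 0)).comp_hasDerivAt 0 (hdγ 0)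
  have hG : HasDerivAt (fun θ => Fd u (γ θ) (γ' θ))
      ((Fd2 u (γ 0) (γ' 0)) (γ' 0) + (Fd u (γ 0)) ((-r) • ee 0)) 0 :=
    hdF.clm_apply hdγ'
  have hG0 : HasDerivAt (fun θ => Fd u (γ θ) (γ' θ)) 0 0 := by
    have : (fun θ => Fd u (γ θ) (γ' θ)) = fun _ => (0:ℝ) := funext hzero
    rw [this]; exact hasDerivAt_const 0 _
  have key := hG.unique hG0
  rw [hγ0, hγ'0] at key
  have expand : (Fd2 u (r • ee 0) (r • ee i)) (r • ee i) = r^2 * Fd2 u (r • ee 0) (ee i) (ee i) := by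
    simp [map_smul, ContinuousLinearMap.smul_apply]; ring
  have expand2 : (Fd u (r • ee 0)) ((-r) • ee 0) = -r * Fd u (r • ee 0) (ee 0) := by
    simp [map_smul]
  rw [expand, expand2] at key
  field_simp
  nlinarith [key]

noncomputable def prof (u : E3 → ℝ) : ℝ → ℝ := fun r => u (r • ee 0)
noncomputable def prof1 (u : E3 → ℝ) : ℝ → ℝ := fun r => Fd u (r • ee 0) (ee 0)
noncomputable def prof2 (u : E3 → ℝ) : ℝ → ℝ := fun r => Fd2 u (r • ee 0) (ee 0) (ee 0)

lemma hasDerivAt_line (r : ℝ) : HasDerivAt (fun s : ℝ => s • (ee 0)) (ee 0) r := by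
  simpa using (hasDerivAt_id r).smul_const (ee 0)

lemma hasDerivAt_prof (u : E3 → ℝ) (hu : ContDiff ℝ 2 u) (r : ℝ) :
    HasDerivAt (prof u) (prof1 u r) r :=
  (hasFDerivAt_u u hu (r • ee 0)).comp_hasDerivAt r (hasDerivAt_line r)

lemma hasDerivAt_prof1 (u : E3 → ℝ) (hu : ContDiff ℝ 2 u) (r : ℝ) :
    HasDerivAt (prof1 u) (prof2 u r) r := by
  have hdF : HasDerivAt (fun s : ℝ => Fd u (s • ee 0)) (Fd2 u (r • ee 0) (ee 0)) r :=
    (hasFDerivAt_Fd u hu (r • ee 0)).comp_hasDerivAt r (hasDerivAt_line r)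
  have := hdF.clm_apply (hasDerivAt_const r (ee 0))
  unfold prof1 prof2
  simpa using this

lemma lap3_radial_s2 (u : E3 → ℝ) (hu : ContDiff ℝ 2 u) (V : ℝ → ℝ)
    (hV : ∀ x, u x = V ‖x‖) (r : ℝ) (hr : 0 < r) :
    lap3 u (r • ee 0) = prof2 u r + 2 * prof1 u r / r := by
  have h0 : fderiv ℝ (fun y => fderiv ℝ u y (ee 0)) (r • ee 0) (ee 0) = prof2 u r :=
    lap3_entry u hu (r • ee 0) 0
  have h1 : ∀ i : Fin 3, i ≠ 0 →
      fderiv ℝ (fun y => fderiv ℝ u y (ee i)) (r • ee 0) (ee i) = prof1 u r / r := by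
    intro i hi
    rw [lap3_entry u hu (r • ee 0) i, cross_second_deriv u hu V hV r hr i hi]; rfl
  show (∑ i : Fin 3, fderiv ℝ (fun y => fderiv ℝ u y (ee i)) (r • ee 0) (ee i)) = _
  rw [Fin.sum_univ_three, h0, h1 1 (by decide), h1 2 (by decide)]
  ring


lemma mono_of_hasDeriv {s : Set ℝ} (hs : Convex ℝ s) (f f' : ℝ → ℝ)
    (hf : ∀ r ∈ s, HasDerivAt f (f' r) r) (h0 : ∀ r ∈ interior s, 0 ≤ f' r) :
    MonotoneOn f s :=
  monotoneOn_of_deriv_nonneg hs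
    (fun r hr => (hf r hr).continuousAt.continuousWithinAt)
    (fun r hr => ((hf r (interior_subset hr)).differentiableAt.differentiableWithinAt))
    (fun r hr => ((hf r (interior_subset hr)).deriv) ▸ h0 r hr)

lemma anti_of_hasDeriv {s : Set ℝ} (hs : Convex ℝ s) (f f' : ℝ → ℝ)
    (hf : ∀ r ∈ s, HasDerivAt f (f' r) r) (h0 : ∀ r ∈ interior s, f' r ≤ 0) :
    AntitoneOn f s :=
  antitoneOn_of_deriv_nonpos hs
    (fun r hr => (hf r hr).continuousAt.continuousWithinAt)
    (fun r hr => ((hf r (interior_subset hr)).differentiableAt.differentiableWithinAt))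
    (fun r hr => ((hf r (interior_subset hr)).deriv) ▸ h0 r hr)

lemma ode_vanish (c' R : ℝ) (hc : 0 < c') (hR : 0 < R) (w w1 w2 : ℝ → ℝ)
    (hd : ∀ r, R ≤ r → HasDerivAt w (w1 r) r)
    (hd1 : ∀ r, R ≤ r → HasDerivAt w1 (w2 r) r)
    (hw2 : ∀ r, R ≤ r → w2 r ≤ -c' * (w r)^3 / r^2)
    (hpos : ∀ r, R ≤ r → 0 ≤ w r) :
    ∀ r, R ≤ r → w r = 0 := by
  have h2neg : ∀ r, R ≤ r → w2 r ≤ 0 := by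
    intro r hr
    have hw3 : 0 ≤ (w r)^3 := pow_nonneg (hpos r hr) 3
    have hr2 : (0:ℝ) < r^2 := pow_pos (lt_of_lt_of_le hR hr) 2
    have h1 : -c' * (w r)^3 / r^2 ≤ 0 :=
      div_nonpos_of_nonpos_of_nonneg (by nlinarith) (le_of_lt hr2)
    exact le_trans (hw2 r hr) h1
  have hanti : AntitoneOn w1 (Ici R) := by
    apply anti_of_hasDeriv (convex_Ici R) w1 w2 (fun r hr => hd1 r hr)
    intro r hr
    rw [interior_Ici] at hr
    exact h2neg r (le_of_lt hr)
  have hw1nonneg : ∀ r, R ≤ r → 0 ≤ w1 r := by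
    intro r₁ hr₁
    by_contra hneg
    push_neg at hneg
    have hwr₁ : 0 ≤ w r₁ := hpos r₁ hr₁
    have hδpos : 0 < -w1 r₁ := by linarith
    have hDnn : 0 ≤ (w r₁ + 1) / (-w1 r₁) := div_nonneg (by linarith) (le_of_lt hδpos)
    have hTr₁ : r₁ ≤ r₁ + (w r₁ + 1) / (-w1 r₁) := by linarith
    have hφ : AntitoneOn (fun t => w t - w1 r₁ * t) (Ici r₁) := by
      apply anti_of_hasDeriv (convex_Ici r₁) _ (fun t => w1 t - w1 r₁)
      · intro t ht
        exact ((hd t (le_trans hr₁ ht)).sub ((hasDerivAt_id t).const_mul (w1 r₁))).congr_deriv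
          (by ring)
      · intro t ht
        rw [interior_Ici] at ht
        have := hanti (mem_Ici.mpr hr₁) (mem_Ici.mpr (le_trans hr₁ (le_of_lt ht))) (le_of_lt ht)
        linarith
    have hkey := hφ (mem_Ici.mpr (le_refl r₁)) (mem_Ici.mpr hTr₁) hTr₁
    simp only at hkey
    have hprod : w1 r₁ * ((w r₁ + 1) / (-w1 r₁)) = -(w r₁ + 1) := by
      have hne : w1 r₁ ≠ 0 := by linarith
      field_simp
    have hwT : w (r₁ + (w r₁ + 1) / (-w1 r₁)) ≤ -1 := by nlinarith [hkey, hprod]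
    have := hpos _ (le_trans hr₁ hTr₁)
    linarith
  have hmono : MonotoneOn w (Ici R) := by
    apply mono_of_hasDeriv (convex_Ici R) w w1 (fun r hr => hd r hr)
    intro r hr
    rw [interior_Ici] at hr
    exact hw1nonneg r (le_of_lt hr)
  have hlow : ∀ r, R ≤ r → c' * (w r)^3 / (4*r) ≤ w1 r := by
    intro r hr
    have hrpos : 0 < r := lt_of_lt_of_le hR hr
    have hwrnn : 0 ≤ w r := hpos r hr
    have hKnn : 0 ≤ c' * (w r)^3 / (4*r^2) :=
      div_nonneg (mul_nonneg hc.le (pow_nonneg hwrnn 3)) (by positivity)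
    have hφ : AntitoneOn (fun t => w1 t + (c' * (w r)^3 / (4*r^2)) * t) (Icc r (2*r)) := by
      apply anti_of_hasDeriv (convex_Icc _ _) _ (fun t => w2 t + c' * (w r)^3 / (4*r^2))
      · intro t ht
        exact ((hd1 t (le_trans hr ht.1)).add
          ((hasDerivAt_id t).const_mul (c' * (w r)^3 / (4*r^2)))).congr_deriv (by ring)
      · intro t ht
        rw [interior_Icc] at ht
        have htR : R ≤ t := le_trans hr (le_of_lt ht.1)
        have htpos : 0 < t := lt_of_lt_of_le hR htR
        have hwt : w r ≤ w t := hmono (mem_Ici.mpr hr) (mem_Ici.mpr htR) (le_of_lt ht.1)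
        have h1 : w2 t ≤ -c' * (w t)^3 / t^2 := hw2 t htR
        have h2 : c' * (w r)^3 / (4*r^2) ≤ c' * (w t)^3 / t^2 := by
          rw [div_le_div_iff₀ (by positivity) (by positivity)]
          have hcube : (w r)^3 ≤ (w t)^3 := pow_le_pow_left₀ hwrnn hwt 3
          have ht2sq : t^2 ≤ 4*r^2 := by nlinarith [ht.2, htpos]
          nlinarith [mul_le_mul hcube ht2sq (sq_nonneg t) (pow_nonneg (le_trans hwrnn hwt) 3), hc]
        have h3 : -c' * (w t)^3 / t^2 = -(c' * (w t)^3 / t^2) := by ring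
        rw [h3] at h1
        linarith
    have h2rR : R ≤ 2*r := by linarith
    have hstep := hφ (mem_Icc.mpr ⟨le_refl r, by linarith⟩)
      (mem_Icc.mpr ⟨by linarith, le_refl (2*r)⟩) (by linarith)
    simp only at hstep
    have hw12r : 0 ≤ w1 (2*r) := hw1nonneg (2*r) h2rR
    have heq : c' * (w r)^3 / (4*r) = (c' * (w r)^3 / (4*r^2)) * r := by
      field_simp
    rw [heq]
    nlinarith [hstep, hw12r]
  have hup : ∀ r, 2*R ≤ r → w1 r * (r/2) ≤ w r := by
    intro r hr
    have hrpos : 0 < r := by linarith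
    have hr2R : R ≤ r/2 := by linarith
    have hψ : MonotoneOn (fun t => w t - w1 r * t) (Icc (r/2) r) := by
      apply mono_of_hasDeriv (convex_Icc _ _) _ (fun t => w1 t - w1 r)
      · intro t ht
        exact ((hd t (le_trans hr2R ht.1)).sub ((hasDerivAt_id t).const_mul (w1 r))).congr_deriv
          (by ring)
      · intro t ht
        rw [interior_Icc] at ht
        have htR : R ≤ t := le_trans hr2R (le_of_lt ht.1)
        have := hanti (mem_Ici.mpr htR) (mem_Ici.mpr (by linarith : R ≤ r)) (le_of_lt ht.2)
        linarith
    have hstep := hψ (mem_Icc.mpr ⟨le_refl _, by linarith⟩)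
      (mem_Icc.mpr ⟨by linarith, le_refl _⟩) (by linarith)
    simp only at hstep
    have hwhalf : 0 ≤ w (r/2) := hpos (r/2) hr2R
    nlinarith [hstep, hwhalf]
  -- main contradiction
  intro r₀ hr₀
  by_contra hne
  have ha : 0 < w r₀ := lt_of_le_of_ne (hpos r₀ hr₀) (Ne.symm hne)
  have hr₀pos : 0 < r₀ := lt_of_lt_of_le hR hr₀
  have hbound : ∀ r, 2*r₀ ≤ r → c' * (w r)^2 ≤ 8 := by
    intro r hr
    have hrR : R ≤ r := by linarith
    have hrpos : 0 < r := lt_of_lt_of_le hR hrR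
    have h2Rr : 2*R ≤ r := by linarith
    have hwrge : w r₀ ≤ w r := hmono (mem_Ici.mpr hr₀) (mem_Ici.mpr hrR) (by linarith)
    have hwpos : 0 < w r := lt_of_lt_of_le ha hwrge
    have h1 := hlow r hrR
    have h2 := hup r h2Rr
    have h3 : c' * (w r)^3 / (4*r) * (r/2) ≤ w r :=
      le_trans (mul_le_mul_of_nonneg_right h1 (by linarith)) h2
    have h4 : c' * (w r)^3 / (4*r) * (r/2) = c' * (w r)^3 / 8 := by field_simp; ring
    rw [h4] at h3
    nlinarith [h3, hwpos]
  have hβpos : 0 < c' * (w r₀)^3 / 4 := by positivity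
  have hG : MonotoneOn (fun t => w t - (c' * (w r₀)^3 / 4) * Real.log t) (Ici r₀) := by
    apply mono_of_hasDeriv (convex_Ici _) _ (fun t => w1 t - (c' * (w r₀)^3 / 4) / t)
    · intro t ht
      have htpos : 0 < t := lt_of_lt_of_le hr₀pos ht
      exact ((hd t (le_trans hr₀ ht)).sub
        ((Real.hasDerivAt_log (ne_of_gt htpos)).const_mul (c' * (w r₀)^3 / 4))).congr_deriv
        (by field_simp)
    · intro t ht
      rw [interior_Ici] at ht
      have htr₀ : r₀ ≤ t := le_of_lt ht
      have htR : R ≤ t := le_trans hr₀ htr₀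
      have htpos : 0 < t := lt_of_lt_of_le hR htR
      have hwge : w r₀ ≤ w t := hmono (mem_Ici.mpr hr₀) (mem_Ici.mpr htR) htr₀
      have h1 := hlow t htR
      have h2 : (c' * (w r₀)^3 / 4) / t ≤ c' * (w t)^3 / (4*t) := by
        rw [div_le_div_iff₀ (by positivity) (by positivity)]
        have hcube : (w r₀)^3 ≤ (w t)^3 := pow_le_pow_left₀ ha.le hwge 3
        nlinarith [mul_le_mul_of_nonneg_right hcube (le_of_lt htpos), hc, htpos]
      linarith
  set A : ℝ := (8/c' + 2) / (c' * (w r₀)^3 / 4) with hA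
  have hApos : 0 < A := by
    rw [hA]; positivity
  have hexp1 : (1:ℝ) ≤ Real.exp A := by
    rw [Real.one_le_exp_iff]; exact hApos.le
  have hTge : 2*r₀ ≤ 2 * r₀ * Real.exp A := by nlinarith [hexp1, hr₀pos]
  have hTr₀ : r₀ ≤ 2 * r₀ * Real.exp A := by linarith
  have hlogT : Real.log (2 * r₀ * Real.exp A) = Real.log (2*r₀) + A := by
    rw [Real.log_mul (by positivity) (by positivity), Real.log_exp]
  have hlog2r₀ : Real.log r₀ ≤ Real.log (2*r₀) :=
    Real.log_le_log hr₀pos (by linarith)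
  have hGT := hG (mem_Ici.mpr (le_refl r₀)) (mem_Ici.mpr hTr₀) hTr₀
  simp only at hGT
  have hwT : w r₀ + (c' * (w r₀)^3 / 4) * (Real.log (2 * r₀ * Real.exp A) - Real.log r₀)
      ≤ w (2 * r₀ * Real.exp A) := by linarith [hGT]
  have hlogdiff : A ≤ Real.log (2 * r₀ * Real.exp A) - Real.log r₀ := by
    rw [hlogT]; linarith [hlog2r₀]
  have hAβ : (c' * (w r₀)^3 / 4) * A = 8/c' + 2 := by
    rw [hA]
    field_simp
  have hwTbig : 8/c' + 2 ≤ w (2 * r₀ * Real.exp A) := by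
    have h5 : (c' * (w r₀)^3 / 4) * A ≤ (c' * (w r₀)^3 / 4) *
        (Real.log (2 * r₀ * Real.exp A) - Real.log r₀) :=
      mul_le_mul_of_nonneg_left hlogdiff hβpos.le
    rw [hAβ] at h5
    linarith [hwT, ha]
  have hb := hbound (2 * r₀ * Real.exp A) hTge
  have h2le : (2:ℝ) ≤ w (2 * r₀ * Real.exp A) := by
    have : 0 < 8/c' := by positivity
    linarith
  have hcwT : 8 + 2*c' ≤ c' * w (2 * r₀ * Real.exp A) := by
    have h6 := mul_le_mul_of_nonneg_left hwTbig hc.le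
    have h7 : c' * (8/c' + 2) = 8 + 2*c' := by field_simp
    rw [h7] at h6
    linarith
  nlinarith [mul_le_mul hcwT h2le (by norm_num) (by positivity : (0:ℝ) ≤ c' * w (2 * r₀ * Real.exp A)), hb, hc]


lemma mono_of_hasDeriv' {s : Set ℝ} (hs : Convex ℝ s) (f f' : ℝ → ℝ)
    (hf : ∀ r ∈ s, HasDerivAt f (f' r) r) (h0 : ∀ r ∈ interior s, 0 ≤ f' r) :
    MonotoneOn f s :=
  monotoneOn_of_deriv_nonneg hs
    (fun r hr => (hf r hr).continuousAt.continuousWithinAt)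
    (fun r hr => ((hf r (interior_subset hr)).differentiableAt.differentiableWithinAt))
    (fun r hr => ((hf r (interior_subset hr)).deriv) ▸ h0 r hr)

lemma backward_vanish (N : ℕ) (K R : ℝ) (hK : 0 ≤ K) (hR : 0 < R)
    (w w1 : Fin N → ℝ → ℝ) (q : Fin N → ℝ → ℝ)
    (hd : ∀ j r, 0 < r → HasDerivAt (w j) (w1 j r) r)
    (hd1 : ∀ j r, 0 < r → HasDerivAt (w1 j) (-(q j r) * w j r) r)
    (hq : ∀ j r, 0 < r → |q j r| ≤ K)
    (hzero : ∀ j, w j R = 0 ∧ w1 j R = 0) :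
    ∀ j r, 0 < r → r ≤ R → w j r = 0 := by
  set E : ℝ → ℝ := fun r => ∑ j, ((w j r)^2 + (w1 j r)^2) with hE
  set E1 : ℝ → ℝ := fun r => ∑ j, (2 * w j r * w1 j r + 2 * w1 j r * (-(q j r) * w j r))
    with hE1
  have hdE : ∀ r, 0 < r → HasDerivAt E (E1 r) r := by
    intro r hr
    apply HasDerivAt.fun_sum
    intro j _
    have h1 : HasDerivAt (fun r => (w j r)^2) (2 * w j r * w1 j r) r := by
      have := (hd j r hr).fun_pow 2
      simpa [mul_comm] using this
    have h2 : HasDerivAt (fun r => (w1 j r)^2) (2 * w1 j r * (-(q j r) * w j r)) r := by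
      have := (hd1 j r hr).fun_pow 2
      simpa [mul_comm] using this
    exact h1.add h2
  have hEnn : ∀ r, 0 ≤ E r := by
    intro r
    apply Finset.sum_nonneg
    intro j _
    positivity
  have hER : E R = 0 := by
    rw [hE]
    apply Finset.sum_eq_zero
    intro j _
    rw [(hzero j).1, (hzero j).2]
    norm_num
  -- key: E1 r + (1+K) * E r ≥ 0 for r > 0
  have hkey : ∀ r, 0 < r → 0 ≤ E1 r + (1+K) * E r := by
    intro r hr
    rw [hE1, hE, Finset.mul_sum, ← Finset.sum_add_distrib]
    apply Finset.sum_nonneg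
    intro j _
    have habs := abs_le.mp (hq j r hr)
    have h1 : 0 ≤ (2 + K - q j r) * (w j r + w1 j r)^2 := by
      apply mul_nonneg (by linarith) (sq_nonneg _)
    have h2 : 0 ≤ (K + q j r) * (w j r - w1 j r)^2 := by
      apply mul_nonneg (by linarith) (sq_nonneg _)
    nlinarith [h1, h2]
  -- φ = E * exp ((1+K) r) is monotone on Icc ρ R
  intro j ρ hρ hρR
  have hφmono : MonotoneOn (fun r => E r * Real.exp ((1+K) * r)) (Icc ρ R) := by
    apply mono_of_hasDeriv' (convex_Icc _ _) _
      (fun r => E1 r * Real.exp ((1+K) * r) + E r * (Real.exp ((1+K) * r) * (1+K)))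
    · intro r hrm
      have hrpos : 0 < r := lt_of_lt_of_le hρ hrm.1
      have hexp : HasDerivAt (fun r : ℝ => Real.exp ((1+K) * r))
          (Real.exp ((1+K) * r) * (1+K)) r := by
        simpa [mul_comm] using ((hasDerivAt_id r).const_mul (1+K)).exp
      exact (hdE r hrpos).mul hexp
    · intro r hrm
      rw [interior_Icc] at hrm
      have hrpos : 0 < r := lt_of_lt_of_le hρ hrm.1.le
      have hexp : 0 < Real.exp ((1+K) * r) := Real.exp_pos _
      have := hkey r hrpos
      nlinarith [this, hexp]
  have hφ := hφmono (mem_Icc.mpr ⟨le_refl _, hρR⟩) (mem_Icc.mpr ⟨hρR, le_refl _⟩) hρR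
  simp only at hφ
  rw [hER] at hφ
  have hEρ : E ρ ≤ 0 := by
    have hexp : 0 < Real.exp ((1+K) * ρ) := Real.exp_pos _
    nlinarith [hφ, hexp]
  have hEρ0 : E ρ = 0 := le_antisymm hEρ (hEnn ρ)
  -- each summand is zero
  have : (w j ρ)^2 + (w1 j ρ)^2 = 0 := by
    have hall := Finset.sum_eq_zero_iff_of_nonneg
      (fun i (_ : i ∈ Finset.univ) => by positivity :
        ∀ i ∈ Finset.univ, 0 ≤ (w i ρ)^2 + (w1 i ρ)^2)
    rw [hE] at hEρ0
    exact (hall.mp hEρ0) j (Finset.mem_univ j)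
  nlinarith [sq_nonneg (w j ρ), sq_nonneg (w1 j ρ), this]

lemma eventual_sign_s2 (u : E3 → ℝ) (V : ℝ → ℝ) (hV : ∀ x, u x = V ‖x‖) (P : ℕ)
    (h : ¬ SignChangeWitnessOn u Set.univ (P + 1)) :
    ∃ σ : ℝ, (σ = 1 ∨ σ = -1) ∧ ∃ R : ℝ, 1 ≤ R ∧ ∀ r, R ≤ r → 0 ≤ σ * V r := by
  by_contra hcon
  push_neg at hcon
  have hneg : ∀ R : ℝ, ∃ r, max R 1 ≤ r ∧ V r < 0 := by
    intro R
    obtain ⟨r, hr1, hr2⟩ := hcon 1 (Or.inl rfl) (max R 1) (le_max_right _ _)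
    exact ⟨r, hr1, by linarith [hr2]⟩
  have hpos : ∀ R : ℝ, ∃ r, max R 1 ≤ r ∧ 0 < V r := by
    intro R
    obtain ⟨r, hr1, hr2⟩ := hcon (-1) (Or.inr rfl) (max R 1) (le_max_right _ _)
    exact ⟨r, hr1, by nlinarith [hr2]⟩
  choose fneg hneg1 hneg2 using hneg
  choose fpos hpos1 hpos2 using hpos
  set ρ : ℕ → ℝ := fun n => Nat.rec (fpos 1)
    (fun n prev => if n % 2 = 0 then fneg (prev + 1) else fpos (prev + 1)) n with hρ
  have hρ0 : ρ 0 = fpos 1 := rfl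
  have hρsucc : ∀ n, ρ (n+1) = if n % 2 = 0 then fneg (ρ n + 1) else fpos (ρ n + 1) :=
    fun n => rfl
  have hone : ∀ n, 1 ≤ ρ n := by
    intro n
    cases n with
    | zero => exact le_trans (le_max_right 1 1) (hpos1 1)
    | succ m =>
      rw [hρsucc]
      by_cases hm : m % 2 = 0
      · rw [if_pos hm]; exact le_trans (le_max_right _ 1) (hneg1 _)
      · rw [if_neg hm]; exact le_trans (le_max_right _ 1) (hpos1 _)
  have hstep : ∀ n, ρ n < ρ (n+1) := by
    intro n
    rw [hρsucc]
    by_cases hm : n % 2 = 0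
    · rw [if_pos hm]
      have := le_trans (le_max_left (ρ n + 1) 1) (hneg1 (ρ n + 1))
      linarith
    · rw [if_neg hm]
      have := le_trans (le_max_left (ρ n + 1) 1) (hpos1 (ρ n + 1))
      linarith
  have hmono : StrictMono ρ := strictMono_nat_of_lt_succ hstep
  have hsign : ∀ n, if n % 2 = 0 then 0 < V (ρ n) else V (ρ n) < 0 := by
    intro n
    cases n with
    | zero => simpa [hρ0] using hpos2 1
    | succ m =>
      rw [hρsucc]
      by_cases hm : m % 2 = 0
      · have h1 : (m+1) % 2 = 1 := by omega
        rw [if_pos hm, h1]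
        simpa using hneg2 (ρ m + 1)
      · have h1 : (m+1) % 2 = 0 := by omega
        rw [if_neg hm, h1]
        simpa using hpos2 (ρ m + 1)
  have halt : ∀ n, V (ρ n) * V (ρ (n+1)) < 0 := by
    intro n
    have h1 := hsign n
    have h2 := hsign (n+1)
    by_cases hm : n % 2 = 0
    · have h3 : (n+1) % 2 = 1 := by omega
      rw [if_pos hm] at h1
      rw [h3] at h2
      simp only [one_ne_zero, if_false] at h2
      exact mul_neg_of_pos_of_neg h1 h2
    · have h3 : (n+1) % 2 = 0 := by omega
      rw [if_neg hm] at h1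
      rw [h3, if_pos rfl] at h2
      exact mul_neg_of_neg_of_pos h1 h2
  have hnorm : ∀ n : ℕ, ‖(ρ n) • ee 0‖ = ρ n := by
    intro n
    rw [norm_smul, EuclideanSpace.norm_single, norm_one, mul_one, Real.norm_eq_abs,
      abs_of_nonneg (by linarith [hone n])]
  apply h
  refine ⟨fun i => (ρ i) • ee 0, fun i => mem_univ _, ?_, ?_, ?_⟩
  · intro i
    rw [hnorm]
    linarith [hone i]
  · intro i j hij
    rw [hnorm, hnorm]
    exact hmono (by exact_mod_cast hij)
  · intro i
    rw [hV, hV, hnorm, hnorm, Fin.coe_castSucc, Fin.val_succ]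
    exact halt i


lemma coupling_bound (N : ℕ) (hN : 0 < N) (μ : Fin N → ℝ) (ε : ℝ) (hε : 0 < ε)
    (hμ : ∀ j, 2 * (N:ℝ)^2 * ε ≤ μ j) (B : Fin N → Fin N → ℝ)
    (hB : ∀ i j, i ≠ j → |B i j| ≤ ε) (b : Fin N → ℝ) (hb : ∀ j, 0 ≤ b j) :
    ε * (∑ j, b j)^3 ≤
      ∑ j, (μ j * (b j)^3 + ∑ i ∈ Finset.univ.erase j, B i j * (b i)^2 * (b j)) := by
  have hsnn : 0 ≤ ∑ j, b j := Finset.sum_nonneg fun j _ => hb j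
  have h2 : (∑ j, b j)^3 / ((N:ℝ))^2 ≤ ∑ j, (b j)^3 := by
    have := pow_sum_div_card_le_sum_pow (s := Finset.univ) (f := b) (fun i _ => hb i) 2
    simpa [Finset.card_univ] using this
  have hNpos : (0:ℝ) < (N:ℝ)^2 := by positivity
  have h2' : (∑ j, b j)^3 ≤ (N:ℝ)^2 * ∑ j, (b j)^3 := by
    rw [div_le_iff₀ hNpos] at h2
    linarith
  have h1 : 2 * (N:ℝ)^2 * ε * ∑ j, (b j)^3 ≤ ∑ j, μ j * (b j)^3 := by
    rw [Finset.mul_sum]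
    apply Finset.sum_le_sum
    intro j _
    exact mul_le_mul_of_nonneg_right (hμ j) (pow_nonneg (hb j) 3)
  have hsumsq : ∑ i, (b i)^2 ≤ (∑ j, b j)^2 := by
    have : ∀ i ∈ Finset.univ, (b i)^2 ≤ b i * ∑ j, b j := by
      intro i _
      have hile : b i ≤ ∑ j, b j := Finset.single_le_sum (fun j _ => hb j) (Finset.mem_univ i)
      nlinarith [hb i]
    calc ∑ i, (b i)^2 ≤ ∑ i, b i * ∑ j, b j := Finset.sum_le_sum this
    _ = (∑ j, b j)^2 := by rw [← Finset.sum_mul]; ring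
  have h3 : ∀ j, -(ε * ((∑ i, (b i)^2) * b j)) ≤
      ∑ i ∈ Finset.univ.erase j, B i j * (b i)^2 * (b j) := by
    intro j
    have step1 : ∑ i ∈ Finset.univ.erase j, (-(ε * ((b i)^2 * b j))) ≤
        ∑ i ∈ Finset.univ.erase j, B i j * (b i)^2 * (b j) := by
      apply Finset.sum_le_sum
      intro i hi
      have hij : i ≠ j := Finset.ne_of_mem_erase hi
      have habs := abs_le.mp (hB i j hij)
      have hnn : 0 ≤ (b i)^2 * b j := mul_nonneg (sq_nonneg _) (hb j)
      nlinarith [habs.1, hnn]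
    have step2 : -(ε * ((∑ i, (b i)^2) * b j)) ≤
        ∑ i ∈ Finset.univ.erase j, (-(ε * ((b i)^2 * b j))) := by
      rw [Finset.sum_neg_distrib, neg_le_neg_iff]
      calc ∑ i ∈ Finset.univ.erase j, ε * ((b i)^2 * b j)
          ≤ ∑ i, ε * ((b i)^2 * b j) := by
            apply Finset.sum_le_sum_of_subset_of_nonneg (Finset.erase_subset _ _)
            intro i _ _
            exact mul_nonneg hε.le (mul_nonneg (sq_nonneg _) (hb j))
      _ = ∑ i, (b i)^2 * (ε * b j) := Finset.sum_congr rfl (by intros; ring)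
      _ = (∑ i, (b i)^2) * (ε * b j) := (Finset.sum_mul _ _ _).symm
      _ = ε * ((∑ i, (b i)^2) * b j) := by ring
    exact le_trans step2 step1
  have h4 : -(ε * (∑ j, b j)^3) ≤
      ∑ j, ∑ i ∈ Finset.univ.erase j, B i j * (b i)^2 * (b j) := by
    have hsum3 : ∑ j, -(ε * ((∑ i, (b i)^2) * b j)) = -(ε * ((∑ i, (b i)^2) * ∑ j, b j)) := by
      calc ∑ j, -(ε * ((∑ i, (b i)^2) * b j))
          = ∑ j, (-(ε * (∑ i, (b i)^2))) * b j :=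
            Finset.sum_congr rfl (by intros; ring)
      _ = (-(ε * (∑ i, (b i)^2))) * ∑ j, b j := (Finset.mul_sum _ _ _).symm
      _ = -(ε * ((∑ i, (b i)^2) * ∑ j, b j)) := by ring
    have step := Finset.sum_le_sum (fun j (_ : j ∈ Finset.univ) => h3 j)
    rw [hsum3] at step
    have : -(ε * (∑ j, b j)^3) ≤ -(ε * ((∑ i, (b i)^2) * ∑ j, b j)) := by
      rw [neg_le_neg_iff]
      apply mul_le_mul_of_nonneg_left _ hε.le
      calc (∑ i, (b i)^2) * ∑ j, b j ≤ (∑ j, b j)^2 * ∑ j, b j :=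
            mul_le_mul_of_nonneg_right hsumsq hsnn
      _ = (∑ j, b j)^3 := by ring
    exact le_trans this step
  rw [Finset.sum_add_distrib]
  have := h2'
  nlinarith [h1, h4, h2', hε, Finset.sum_nonneg (fun j (_ : j ∈ Finset.univ) => pow_nonneg (hb j) 3)]

lemma q_bound (N : ℕ) (μ : Fin N → ℝ) (ε : ℝ) (hε : 0 ≤ ε) (K : ℝ)
    (hK : ∀ j, μ j ≤ K) (hμnn : ∀ j, 0 ≤ μ j) (B : Fin N → Fin N → ℝ)
    (hB : ∀ i j, i ≠ j → |B i j| ≤ ε) (c : Fin N → ℝ) (hc : ∀ i, |c i| ≤ 1) (j : Fin N) :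
    |μ j * (c j)^2 + ∑ i ∈ Finset.univ.erase j, B i j * (c i)^2| ≤ K + ε * N := by
  have hcsq : ∀ i, (c i)^2 ≤ 1 := by
    intro i
    have := abs_le.mp (hc i)
    nlinarith [this.1, this.2]
  have h1 : |μ j * (c j)^2| ≤ K := by
    rw [abs_of_nonneg (mul_nonneg (hμnn j) (sq_nonneg _))]
    calc μ j * (c j)^2 ≤ μ j * 1 := mul_le_mul_of_nonneg_left (hcsq j) (hμnn j)
    _ = μ j := mul_one _
    _ ≤ K := hK j
  have h2 : |∑ i ∈ Finset.univ.erase j, B i j * (c i)^2| ≤ ε * N := by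
    calc |∑ i ∈ Finset.univ.erase j, B i j * (c i)^2|
        ≤ ∑ i ∈ Finset.univ.erase j, |B i j * (c i)^2| := Finset.abs_sum_le_sum_abs _ _
    _ ≤ ∑ i ∈ Finset.univ.erase j, ε := by
        apply Finset.sum_le_sum
        intro i hi
        have hij : i ≠ j := Finset.ne_of_mem_erase hi
        rw [abs_mul, abs_of_nonneg (sq_nonneg (c i))]
        calc |B i j| * (c i)^2 ≤ ε * 1 :=
              mul_le_mul (hB i j hij) (hcsq i) (sq_nonneg _) hε
        _ = ε := mul_one _
    _ = ε * (Finset.univ.erase j).card := by rw [Finset.sum_const, nsmul_eq_mul, mul_comm]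
    _ ≤ ε * N := by
        apply mul_le_mul_of_nonneg_left _ hε
        have hle := Finset.card_erase_le (a := j) (s := (Finset.univ : Finset (Fin N)))
        have h3 : (Finset.univ : Finset (Fin N)).card = N := by simp
        exact_mod_cast hle.trans h3.le
  calc |μ j * (c j)^2 + ∑ i ∈ Finset.univ.erase j, B i j * (c i)^2|
      ≤ |μ j * (c j)^2| + |∑ i ∈ Finset.univ.erase j, B i j * (c i)^2| := abs_add_le _ _
  _ ≤ K + ε * N := add_le_add h1 h2

end LiouvilleAux

theorem liouville_R3_small (N : ℕ) (hN : 2 ≤ N) (μ : Fin N → ℝ) (hμ : ∀ j, 0 < μ j)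
    (P : Fin N → ℕ) :
    ∃ ε₁ : ℝ, 0 < ε₁ ∧
      ∀ B : Fin N → Fin N → ℝ,
        (∀ i j, i ≠ j → B i j = B j i) →
        (∀ i j, i ≠ j → |B i j| < ε₁) →
        ∀ u : Fin N → EuclideanSpace ℝ (Fin 3) → ℝ,
          (∀ j, IsRadial (u j)) →
          (∀ j, ContDiff ℝ 2 (u j)) →
          (∀ j x, |u j x| ≤ 1) →
          (∀ j, (∀ x, u j x = 0) ∨ ChangesSignAtMostOn (u j) Set.univ (P j)) →
          (∀ j x, -lap3 (u j) x =
              μ j * u j x ^ 3 + ∑ i ∈ Finset.univ.erase j, B i j * u i x ^ 2 * u j x) →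
          ∀ j x, u j x = 0 := by
  have hNpos : 0 < N := by omega
  haveI : Nonempty (Fin N) := ⟨⟨0, hNpos⟩⟩
  have hne : (Finset.univ : Finset (Fin N)).Nonempty := Finset.univ_nonempty
  obtain ⟨jm, -, hjm⟩ := Finset.exists_mem_eq_inf' hne μ
  have hμminpos : 0 < Finset.univ.inf' hne μ := hjm ▸ hμ jm
  have hμminle : ∀ j, Finset.univ.inf' hne μ ≤ μ j :=
    fun j => Finset.inf'_le μ (Finset.mem_univ j)
  have hNR : (0:ℝ) < (N:ℝ) := by exact_mod_cast hNpos
  refine ⟨Finset.univ.inf' hne μ / (2 * (N:ℝ)^2), by positivity, ?_⟩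
  intro B hBsym hBsm u hrad hC2 hbd hsgn hpde
  set ε := Finset.univ.inf' hne μ / (2 * (N:ℝ)^2) with hεdef
  have hεpos : 0 < ε := by rw [hεdef]; positivity
  have hBle : ∀ i j, i ≠ j → |B i j| ≤ ε := fun i j h => (hBsm i j h).le
  have hμbig : ∀ j, 2 * (N:ℝ)^2 * ε ≤ μ j := by
    intro j
    have heq : 2 * (N:ℝ)^2 * ε = Finset.univ.inf' hne μ := by
      rw [hεdef]; field_simp
    rw [heq]; exact hμminle j
  -- profiles
  set v : Fin N → ℝ → ℝ := fun j => prof (u j) with hvdef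
  have hvu : ∀ j x, u j x = v j ‖x‖ := by
    intro j x
    obtain ⟨V, hV⟩ := hrad j
    rw [hV]
    have h1 : v j ‖x‖ = V ‖(‖x‖ : ℝ) • ee 0‖ := hV _
    rw [h1, norm_smul, EuclideanSpace.norm_single, norm_one, mul_one, Real.norm_eq_abs,
      abs_of_nonneg (norm_nonneg x)]
  have hdv : ∀ j r, HasDerivAt (v j) (prof1 (u j) r) r :=
    fun j r => hasDerivAt_prof (u j) (hC2 j) r
  have hdv1 : ∀ j r, HasDerivAt (prof1 (u j)) (prof2 (u j) r) r :=
    fun j r => hasDerivAt_prof1 (u j) (hC2 j) r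
  -- PDE for profiles
  have hprofile : ∀ j r, 0 < r →
      2 * prof1 (u j) r + r * prof2 (u j) r =
        -r * (μ j * (v j r)^3 + ∑ i ∈ Finset.univ.erase j, B i j * (v i r)^2 * (v j r)) := by
    intro j r hr
    have hr0 : r ≠ 0 := ne_of_gt hr
    have hlap := lap3_radial_s2 (u j) (hC2 j) (v j) (hvu j) r hr
    have hp : -lap3 (u j) (r • ee 0) =
        μ j * (v j r)^3 + ∑ i ∈ Finset.univ.erase j, B i j * (v i r)^2 * (v j r) := hpde j (r • ee 0)
    rw [hlap] at hp
    have h2 := congrArg (fun t : ℝ => r * t) hp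
    have hL : r * -(prof2 (u j) r + 2 * prof1 (u j) r / r) =
        -(2 * prof1 (u j) r + r * prof2 (u j) r) := by
      field_simp; ring
    rw [hL] at h2
    linarith [h2]
  -- signs
  have hsig : ∀ j, ∃ τ : ℝ, (τ = 1 ∨ τ = -1) ∧ ∃ R0 : ℝ, 1 ≤ R0 ∧ ∀ r, R0 ≤ r → 0 ≤ τ * v j r := by
    intro j
    rcases hsgn j with hzero | hch
    · refine ⟨1, Or.inl rfl, 1, le_refl 1, fun r _ => ?_⟩
      rw [one_mul]
      have : v j r = u j (r • ee 0) := rfl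
      rw [this, hzero]
    · exact eventual_sign_s2 (u j) (v j) (hvu j) (P j) hch
  choose σ hσpm R' hR'1 hsigv using hsig
  have hσsq : ∀ j, σ j ^ 2 = 1 := by
    intro j; rcases hσpm j with h | h <;> rw [h] <;> norm_num
  set R := Finset.univ.sup' hne R' with hRdef
  have hRj : ∀ j, R' j ≤ R := fun j => Finset.le_sup' R' (Finset.mem_univ j)
  have hR1 : 1 ≤ R := le_trans (hR'1 jm) (hRj jm)
  have hRpos : 0 < R := by linarith
  -- w and derivatives
  set s : ℝ → ℝ := fun r => ∑ j, σ j * v j r with hsdef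
  set w : ℝ → ℝ := fun r => r * s r with hwdef
  set w1 : ℝ → ℝ := fun r => s r + r * ∑ j, σ j * prof1 (u j) r with hw1def
  set w2 : ℝ → ℝ := fun r => 2 * (∑ j, σ j * prof1 (u j) r) + r * ∑ j, σ j * prof2 (u j) r
    with hw2def
  have hds : ∀ r, HasDerivAt s (∑ j, σ j * prof1 (u j) r) r := fun r =>
    HasDerivAt.fun_sum (fun j _ => (hdv j r).const_mul (σ j))
  have hds1 : ∀ r, HasDerivAt (fun r => ∑ j, σ j * prof1 (u j) r)
      (∑ j, σ j * prof2 (u j) r) r :=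
    fun r => HasDerivAt.fun_sum (fun j _ => (hdv1 j r).const_mul (σ j))
  have hdw : ∀ r, HasDerivAt w (w1 r) r := by
    intro r
    have h := (hasDerivAt_id r).mul (hds r)
    rw [hwdef, hw1def]
    exact h.congr_deriv (by simp only [id_eq, one_mul] <;> ring)
  have hdw1 : ∀ r, HasDerivAt w1 (w2 r) r := by
    intro r
    have h := (hds r).add ((hasDerivAt_id r).mul (hds1 r))
    rw [hw1def, hw2def]
    exact h.congr_deriv (by simp only [id_eq, one_mul] <;> ring)
  have hannR : ∀ j r, R ≤ r → 0 ≤ σ j * v j r :=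
    fun j r hr => hsigv j r (le_trans (hRj j) hr)
  have hsnnR : ∀ r, R ≤ r → 0 ≤ s r := fun r hr => Finset.sum_nonneg fun j _ => hannR j r hr
  have hwnnR : ∀ r, R ≤ r → 0 ≤ w r := by
    intro r hr
    have : w r = r * s r := rfl
    rw [this]
    exact mul_nonneg (by linarith) (hsnnR r hr)
  have hXbound : ∀ r, R ≤ r → w2 r ≤ -ε * (w r)^3 / r^2 := by
    intro r hr
    have hrpos : 0 < r := lt_of_lt_of_le hRpos hr
    have e1 : w2 r = ∑ j, σ j * (2 * prof1 (u j) r + r * prof2 (u j) r) := by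
      rw [hw2def]
      simp only
      rw [Finset.mul_sum, Finset.mul_sum, ← Finset.sum_add_distrib]
      apply Finset.sum_congr rfl; intros; ring
    have e2 : ∀ j : Fin N, σ j * (2 * prof1 (u j) r + r * prof2 (u j) r) =
        -r * (μ j * (σ j * v j r)^3 +
          ∑ i ∈ Finset.univ.erase j, B i j * (σ i * v i r)^2 * (σ j * v j r)) := by
      intro j
      rw [hprofile j r hrpos]
      have hT : ∑ i ∈ Finset.univ.erase j, B i j * (σ i * v i r)^2 * (σ j * v j r)
          = σ j * ∑ i ∈ Finset.univ.erase j, B i j * (v i r)^2 * (v j r) := by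
        rw [Finset.mul_sum]
        apply Finset.sum_congr rfl
        intro i _
        rw [mul_pow, hσsq i]
        ring
      have hμt : μ j * (σ j * v j r)^3 = σ j * (μ j * (v j r)^3) := by
        rw [mul_pow, pow_succ, hσsq j]
        ring
      rw [hT, hμt]
      ring
    have e3 : w2 r = -r * ∑ j, (μ j * (σ j * v j r)^3 +
        ∑ i ∈ Finset.univ.erase j, B i j * (σ i * v i r)^2 * (σ j * v j r)) := by
      rw [e1]
      calc ∑ j, σ j * (2 * prof1 (u j) r + r * prof2 (u j) r)
          = ∑ j, -r * (μ j * (σ j * v j r)^3 +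
              ∑ i ∈ Finset.univ.erase j, B i j * (σ i * v i r)^2 * (σ j * v j r)) :=
            Finset.sum_congr rfl (fun j _ => e2 j)
      _ = -r * ∑ j, (μ j * (σ j * v j r)^3 +
              ∑ i ∈ Finset.univ.erase j, B i j * (σ i * v i r)^2 * (σ j * v j r)) := by
            rw [Finset.mul_sum]
    have hcp := coupling_bound N hNpos μ ε hεpos hμbig B hBle
      (fun j => σ j * v j r) (fun j => hannR j r hr)
    have hsr : s r = ∑ j, σ j * v j r := rfl
    have hwr : w r = r * s r := rfl
    have e4 : -ε * (w r)^3 / r^2 = -r * (ε * (s r)^3) := by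
      rw [hwr]
      field_simp
    rw [e3, e4]
    have hmul := mul_le_mul_of_nonneg_left hcp (le_of_lt hrpos)
    rw [← hsr] at hmul
    nlinarith [hmul]
  have hvanish := ode_vanish ε R hεpos hRpos w w1 w2 (fun r _ => hdw r) (fun r _ => hdw1 r)
    hXbound hwnnR
  have hv0 : ∀ j r, R ≤ r → v j r = 0 := by
    intro j r hr
    have hrpos : 0 < r := lt_of_lt_of_le hRpos hr
    have hw0 : r * s r = 0 := hvanish r hr
    have hs0 : s r = 0 := by
      rcases mul_eq_zero.mp hw0 with h | h
      · exact absurd h (ne_of_gt hrpos)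
      · exact h
    have hterm : σ j * v j r = 0 := by
      have hsum : ∑ i, σ i * v i r = 0 := hs0
      exact (Finset.sum_eq_zero_iff_of_nonneg
        (fun i _ => hannR i r hr)).mp hsum j (Finset.mem_univ j)
    rcases hσpm j with h | h <;> rw [h] at hterm <;> linarith [hterm]
  have hv10 : ∀ j, prof1 (u j) R = 0 := by
    intro j
    have h1 : HasDerivWithinAt (v j) (prof1 (u j) R) (Set.Ici R) R :=
      (hdv j R).hasDerivWithinAt
    have h2 : HasDerivWithinAt (v j) 0 (Set.Ici R) R := by
      apply (hasDerivWithinAt_const R (Set.Ici R) (0:ℝ)).congr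
      · intro x hx; exact hv0 j x hx
      · exact hv0 j R (le_refl R)
    exact (uniqueDiffOn_Ici R R Set.self_mem_Ici).eq_deriv _ h1 h2
  -- backward uniqueness
  obtain ⟨jM, -, hjM⟩ := Finset.exists_mem_eq_sup' hne μ
  have hKnn : 0 ≤ Finset.univ.sup' hne μ + ε * N := by
    have h1 : 0 < Finset.univ.sup' hne μ := hjM ▸ hμ jM
    nlinarith [hεpos, hNR]
  have hdW : ∀ (j : Fin N) (r : ℝ), 0 < r →
      HasDerivAt (fun t => t * v j t) (v j r + r * prof1 (u j) r) r := by
    intro j r _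
    have h := (hasDerivAt_id r).mul (hdv j r)
    exact h.congr_deriv (by simp only [id_eq, one_mul] <;> ring)
  have hdW1 : ∀ (j : Fin N) (r : ℝ), 0 < r →
      HasDerivAt (fun t => v j t + t * prof1 (u j) t)
        (-(μ j * (v j r)^2 + ∑ i ∈ Finset.univ.erase j, B i j * (v i r)^2) * (r * v j r)) r := by
    intro j r hr
    have h := (hdv j r).add ((hasDerivAt_id r).mul (hdv1 j r))
    refine h.congr_deriv ?_
    simp only [id_eq]
    have hp := hprofile j r hr
    have hfact : ∑ i ∈ Finset.univ.erase j, B i j * (v i r)^2 * (v j r)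
        = (∑ i ∈ Finset.univ.erase j, B i j * (v i r)^2) * (v j r) := by
      rw [Finset.sum_mul]
    rw [hfact] at hp
    linear_combination hp
  have hqb : ∀ (j : Fin N) (r : ℝ), 0 < r →
      |μ j * (v j r)^2 + ∑ i ∈ Finset.univ.erase j, B i j * (v i r)^2|
        ≤ Finset.univ.sup' hne μ + ε * N := by
    intro j r _
    apply q_bound N μ ε hεpos.le _ (fun i => Finset.le_sup' μ (Finset.mem_univ i))
      (fun i => (hμ i).le) B hBle (fun i => v i r) _ j
    intro i
    exact hbd i (r • ee 0)
  have hzR : ∀ j : Fin N, (fun t => t * v j t) R = 0 ∧ (fun t => v j t + t * prof1 (u j) t) R = 0 := by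
    intro j
    constructor
    · simp only
      rw [hv0 j R (le_refl R), mul_zero]
    · simp only
      rw [hv0 j R (le_refl R), hv10 j, mul_zero, add_zero]
  have hback := backward_vanish N (Finset.univ.sup' hne μ + ε * N) R hKnn hRpos
    (fun j t => t * v j t) (fun j t => v j t + t * prof1 (u j) t)
    (fun j t => μ j * (v j t)^2 + ∑ i ∈ Finset.univ.erase j, B i j * (v i t)^2)
    hdW hdW1 hqb hzR
  have hvall : ∀ j r, 0 < r → v j r = 0 := by
    intro j r hr
    rcases le_or_gt r R with h | h
    · have hz := hback j r hr h
      rcases mul_eq_zero.mp hz with h' | h'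
      · exact absurd h' (ne_of_gt hr)
      · exact h'
    · exact hv0 j r h.le
  have hvzero : ∀ j, v j 0 = 0 := by
    intro j
    have h1 : Filter.Tendsto (v j) (nhdsWithin 0 (Set.Ioi 0)) (nhds (v j 0)) :=
      ((hdv j 0).continuousAt).continuousWithinAt
    have h2 : Filter.Tendsto (v j) (nhdsWithin 0 (Set.Ioi 0)) (nhds 0) := by
      apply Filter.Tendsto.congr' _ tendsto_const_nhds
      filter_upwards [self_mem_nhdsWithin] with r hr
      exact (hvall j r hr).symm
    exact tendsto_nhds_unique h1 h2
  intro j x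
  rw [hvu j x]
  rcases eq_or_lt_of_le (norm_nonneg x) with h | h
  · rw [← h]; exact hvzero j
  · exact hvall j ‖x‖ h
end

section
/- Let N ≥ 2, let μ₁,…,μ_N > 0 be constants, let P₁,…,P_N ∈ ℕ, and let β ≥ 0. Then there exists a constant ε₂ = ε₂(μ₁,…,μ_N; P₁,…,P_N; β) > 0 with the following property: whenever real constants β_{ij} = β_{ji} (for i ≠ j) satisfy β_{ij} ∈ [−ε₂, β], and u₁,…,u_N : ℝ → ℝ are functions of class C² such that for every j one has |u_j(t)| ≤ 1 for all t ∈ ℝ, u_j is either identically zero or changes sign at most P_j times, and −u_j'' = μ_j u_j³ + Σ_{i≠j} β_{ij} u_i² u_j holds pointwise on ℝ, then u_j ≡ 0 for every j = 1,…,N. -/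
open scoped BigOperators

/-- There are `k + 1` increasing points of `I` on which `u` successively changes sign
`k` times. -/
def SignChangeWitness1D (u : ℝ → ℝ) (I : Set ℝ) (k : ℕ) : Prop :=
  ∃ t : Fin (k + 1) → ℝ, (∀ i, t i ∈ I) ∧ StrictMono t ∧
    (∀ i : Fin k, u (t i.castSucc) * u (t i.succ) < 0)

/-- `u` changes sign at most `P` times on `I`. -/
def ChangesSignAtMost1D (u : ℝ → ℝ) (I : Set ℝ) (P : ℕ) : Prop :=
  ¬ SignChangeWitness1D u I (P + 1)

lemma tail_sign (u : ℝ → ℝ) (P : ℕ) (h : ChangesSignAtMost1D u Set.univ P) :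
    ∃ T : ℝ, (∀ t, T ≤ t → 0 ≤ u t) ∨ (∀ t, T ≤ t → u t ≤ 0) := by
  by_contra h'
  push_neg at h'
  have key : ∀ x : ℝ, u x ≠ 0 → ∃ y, x < y ∧ u x * u y < 0 := by
    intro x hx
    obtain ⟨⟨t1, ht1, ht1'⟩, ⟨t2, ht2, ht2'⟩⟩ := h' (x + 1)
    rcases lt_or_gt_of_ne hx with hneg | hpos
    · exact ⟨t2, by linarith, mul_neg_of_neg_of_pos hneg ht2'⟩
    · exact ⟨t1, by linarith, mul_neg_of_pos_of_neg hpos ht1'⟩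
  -- starting point with u ≠ 0
  obtain ⟨⟨t0, _, ht0⟩, _⟩ := h' 0
  have ht0' : u t0 ≠ 0 := ne_of_lt ht0
  -- iteration map
  let F : {x : ℝ // u x ≠ 0} → {x : ℝ // u x ≠ 0} := fun p =>
    ⟨(key p.1 p.2).choose, by
      have := (key p.1 p.2).choose_spec.2
      intro h0
      rw [h0, mul_zero] at this
      exact lt_irrefl 0 this⟩
  have hF : ∀ p : {x : ℝ // u x ≠ 0}, p.1 < (F p).1 ∧ u p.1 * u (F p).1 < 0 :=
    fun p => (key p.1 p.2).choose_spec
  let a : ℕ → {x : ℝ // u x ≠ 0} := fun n => F^[n] ⟨t0, ht0'⟩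
  have ha : ∀ n, (a n).1 < (a (n+1)).1 ∧ u (a n).1 * u (a (n+1)).1 < 0 := by
    intro n
    have : a (n+1) = F (a n) := Function.iterate_succ_apply' F n _
    rw [this]
    exact hF (a n)
  apply h
  refine ⟨fun i => (a i).1, fun i => Set.mem_univ _, ?_, ?_⟩
  · have mono : StrictMono fun n : ℕ => (a n).1 := strictMono_nat_of_lt_succ (fun n => (ha n).1)
    intro i j hij
    exact mono hij
  · intro i
    have := (ha i).2
    simpa using this

lemma vanish_backward (u g : ℝ → ℝ) (hu : ContDiff ℝ 2 u)
    (G : ℝ) (hG : ∀ t, |g t| ≤ G)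
    (heq : ∀ t, deriv (deriv u) t = -(g t) * u t)
    (a : ℝ) (ha : u a = 0) (ha' : deriv u a = 0) :
    ∀ t, t ≤ a → u t = 0 := by
  have hG0 : 0 ≤ G := le_trans (abs_nonneg _) (hG 0)
  have hd1 : Differentiable ℝ u := hu.differentiable (by norm_num)
  have hd2 : Differentiable ℝ (deriv u) := by
    have h2 : ContDiff ℝ ((1 : ℕ) + 1) u := by exact_mod_cast hu
    exact ((contDiff_succ_iff_deriv.mp h2).2.2).differentiable (by simp)
  set K := 1 + G with hK
  set E : ℝ → ℝ := fun t => u t * u t + deriv u t * deriv u t with hE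
  set F : ℝ → ℝ := fun t => E t * Real.exp (K * t) with hFdef
  have hEd : ∀ t, HasDerivAt E
      (deriv u t * u t + u t * deriv u t +
        (deriv (deriv u) t * deriv u t + deriv u t * deriv (deriv u) t)) t := by
    intro t
    exact ((hd1 t).hasDerivAt.mul (hd1 t).hasDerivAt).add
      ((hd2 t).hasDerivAt.mul (hd2 t).hasDerivAt)
  have hexp : ∀ t, HasDerivAt (fun t => Real.exp (K * t)) (Real.exp (K * t) * K) t := by
    intro t
    simpa using ((hasDerivAt_id t).const_mul K).exp
  have hFd : ∀ t, HasDerivAt F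
      ((deriv u t * u t + u t * deriv u t +
        (deriv (deriv u) t * deriv u t + deriv u t * deriv (deriv u) t)) * Real.exp (K * t)
        + E t * (Real.exp (K * t) * K)) t := by
    intro t
    exact (hEd t).mul (hexp t)
  have hF0 : ∀ t, 0 ≤ deriv F t := by
    intro t
    rw [(hFd t).deriv]
    have he : 0 < Real.exp (K * t) := Real.exp_pos _
    have hg1 : g t ≤ G := (abs_le.mp (hG t)).2
    have hg2 : -G ≤ g t := (abs_le.mp (hG t)).1
    have hdd := heq t
    set x := u t; set y := deriv u t
    rw [hdd]
    have key : 0 ≤ (y * x + x * y + (-(g t) * x * y + y * (-(g t) * x))) + E t * K := by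
      have hE' : E t = x * x + y * y := rfl
      rw [hE', hK]
      nlinarith [mul_nonneg (sub_nonneg.mpr hg1) (sq_nonneg (x + y)),
        mul_nonneg (sub_nonneg.mpr (neg_le.mp (neg_le.mpr hg2))) (sq_nonneg (x - y)),
        sq_nonneg (x + y), sq_nonneg (x - y)]
    calc (0:ℝ) = 0 * Real.exp (K*t) := by ring
    _ ≤ ((y * x + x * y + (-(g t) * x * y + y * (-(g t) * x))) + E t * K) * Real.exp (K*t) :=
        mul_le_mul_of_nonneg_right key he.le
    _ = (y * x + x * y + (-(g t) * x * y + y * (-(g t) * x))) * Real.exp (K * t)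
        + E t * (Real.exp (K * t) * K) := by ring
  have hmono : Monotone F := monotone_of_deriv_nonneg (fun t => (hFd t).differentiableAt) hF0
  intro t ht
  have h1 : F t ≤ F a := hmono ht
  have h2 : F a = 0 := by simp [hFdef, hE, ha, ha']
  have h3 : 0 ≤ E t := add_nonneg (mul_self_nonneg _) (mul_self_nonneg _)
  have h4 : 0 ≤ F t := mul_nonneg h3 (Real.exp_pos _).le
  have h5 : F t = 0 := le_antisymm (h2 ▸ h1) h4
  have h6 : E t = 0 := by
    rcases mul_eq_zero.mp h5 with h | h
    · exact h
    · exact absurd h (Real.exp_pos _).ne'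
  have h7 : u t * u t = 0 := by
    have h8 := mul_self_nonneg (u t)
    have h9 := mul_self_nonneg (deriv u t)
    have : E t = u t * u t + deriv u t * deriv u t := rfl
    linarith [this ▸ h6]
  exact mul_self_eq_zero.mp h7

lemma key_ineq (N : ℕ) (hN2 : 2 ≤ N) (μ : Fin N → ℝ) (B : Fin N → Fin N → ℝ) (m ε : ℝ)
    (hm : 0 < m) (hmle : ∀ j, m ≤ μ j) (hε : ε = m / (4 * N))
    (hBr : ∀ i j, i ≠ j → -ε ≤ B i j) (w : Fin N → ℝ) (hw0 : ∀ j, 0 ≤ w j) :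
    (m / 2) * ∑ j, w j ^ 3 ≤
      ∑ j, (μ j * w j ^ 3 + ∑ i ∈ Finset.univ.erase j, B i j * w i ^ 2 * w j) := by
  have hNpos : (0:ℝ) < N := by
    have : 0 < N := by omega
    exact_mod_cast this
  have hε0 : 0 ≤ ε := by rw [hε]; positivity
  set W := ∑ j, w j ^ 3 with hWdef
  have hW0 : 0 ≤ W := Finset.sum_nonneg fun j _ => pow_nonneg (hw0 j) 3
  have step1 : ∀ j : Fin N, m * w j ^ 3 - ε * W - ε * N * w j ^ 3 ≤
      μ j * w j ^ 3 + ∑ i ∈ Finset.univ.erase j, B i j * w i ^ 2 * w j := by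
    intro j
    have h1 : ∀ i ∈ Finset.univ.erase j, -(ε * (w i ^ 3 + w j ^ 3)) ≤ B i j * w i ^ 2 * w j := by
      intro i hi
      have hij : i ≠ j := Finset.ne_of_mem_erase hi
      have hB := hBr i j hij
      have h2 : w i ^ 2 * w j ≤ w i ^ 3 + w j ^ 3 := by
        nlinarith [hw0 i, hw0 j, sq_nonneg (w i - w j), mul_nonneg (hw0 i) (hw0 j)]
      have h3 : (0:ℝ) ≤ w i ^ 2 * w j := mul_nonneg (sq_nonneg _) (hw0 j)
      have h4 : (0:ℝ) ≤ (B i j + ε) * (w i ^ 2 * w j) :=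
        mul_nonneg (by linarith) h3
      have h5 : (0:ℝ) ≤ ε * (w i ^ 3 + w j ^ 3 - w i ^ 2 * w j) :=
        mul_nonneg hε0 (by linarith)
      nlinarith [h4, h5]
    have h4 : ∑ i ∈ Finset.univ.erase j, -(ε * (w i ^ 3 + w j ^ 3)) ≤
        ∑ i ∈ Finset.univ.erase j, B i j * w i ^ 2 * w j := Finset.sum_le_sum h1
    have h5 : ∑ i ∈ Finset.univ.erase j, ε * (w i ^ 3 + w j ^ 3) ≤ ε * (W + N * w j ^ 3) := by
      have hsub : ∑ i ∈ Finset.univ.erase j, (w i ^ 3 + w j ^ 3) ≤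
          ∑ i : Fin N, (w i ^ 3 + w j ^ 3) :=
        Finset.sum_le_sum_of_subset_of_nonneg (Finset.erase_subset _ _)
          (fun i _ _ => add_nonneg (pow_nonneg (hw0 i) 3) (pow_nonneg (hw0 j) 3))
      have heval : ∑ i : Fin N, (w i ^ 3 + w j ^ 3) = W + N * w j ^ 3 := by
        rw [Finset.sum_add_distrib, Finset.sum_const, Finset.card_univ, Fintype.card_fin,
          nsmul_eq_mul]
      calc ∑ i ∈ Finset.univ.erase j, ε * (w i ^ 3 + w j ^ 3)
          = ε * ∑ i ∈ Finset.univ.erase j, (w i ^ 3 + w j ^ 3) := by rw [Finset.mul_sum]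
        _ ≤ ε * (W + N * w j ^ 3) := by
            rw [← heval]; exact mul_le_mul_of_nonneg_left hsub hε0
    have hsumneg : ∑ i ∈ Finset.univ.erase j, -(ε * (w i ^ 3 + w j ^ 3)) =
        -∑ i ∈ Finset.univ.erase j, ε * (w i ^ 3 + w j ^ 3) := by
      rw [Finset.sum_neg_distrib]
    have hmu : m * w j ^ 3 ≤ μ j * w j ^ 3 :=
      mul_le_mul_of_nonneg_right (hmle j) (pow_nonneg (hw0 j) 3)
    rw [hsumneg] at h4
    linarith
  have hsum := Finset.sum_le_sum (s := Finset.univ) (fun j (_ : j ∈ Finset.univ) => step1 j)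
  have hlhs : ∑ j : Fin N, (m * w j ^ 3 - ε * W - ε * N * w j ^ 3) =
      m * W - ε * N * W - ε * N * W := by
    rw [Finset.sum_sub_distrib, Finset.sum_sub_distrib, Finset.sum_const, Finset.card_univ,
      Fintype.card_fin, nsmul_eq_mul, ← Finset.mul_sum, ← Finset.mul_sum, ← hWdef]
    ring
  have hεN : ε * N = m / 4 := by
    rw [hε]; field_simp
  rw [hlhs, hεN] at hsum
  linarith

section aux

variable {α : Type*}

lemma contDiff_two_deriv_diff (u : ℝ → ℝ) (hu : ContDiff ℝ 2 u) :
    Differentiable ℝ (deriv u) := by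
  have h2 : ContDiff ℝ ((1 : ℕ) + 1) u := by exact_mod_cast hu
  exact ((contDiff_succ_iff_deriv.mp h2).2.2).differentiable (by simp)

end aux

set_option maxHeartbeats 1000000 in
theorem main_analysis (N : ℕ) (hN : 2 ≤ N) (μ : Fin N → ℝ) (hμ : ∀ j, 0 < μ j)
    (β : ℝ) (hβ : 0 ≤ β)
    (m : ℝ) (hm : 0 < m) (hmle : ∀ j, m ≤ μ j)
    (B : Fin N → Fin N → ℝ)
    (hBr : ∀ i j, i ≠ j → -(m / (4 * N)) ≤ B i j ∧ B i j ≤ β)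
    (u : Fin N → ℝ → ℝ)
    (hC2 : ∀ j, ContDiff ℝ 2 (u j))
    (hb : ∀ j t, |u j t| ≤ 1)
    (heq : ∀ j t, -deriv (deriv (u j)) t =
        μ j * u j t ^ 3 + ∑ i ∈ Finset.univ.erase j, B i j * u i t ^ 2 * u j t)
    (σ : Fin N → ℝ) (T : Fin N → ℝ)
    (hσ : ∀ j, σ j = 1 ∨ σ j = -1)
    (hT : ∀ j t, T j ≤ t → 0 ≤ σ j * u j t) :
    ∀ j t, u j t = 0 := by
  haveI : Nonempty (Fin N) := ⟨⟨0, by omega⟩⟩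
  have hNpos : (0:ℝ) < N := by
    have : 0 < N := by omega
    exact_mod_cast this
  set ε : ℝ := m / (4 * N) with hεdef
  have hε0 : 0 ≤ ε := by positivity
  set T0 := Finset.univ.sup' Finset.univ_nonempty T with hT0def
  have hT0 : ∀ j, T j ≤ T0 := fun j => Finset.le_sup' T (Finset.mem_univ j)
  have hd1 : ∀ j, Differentiable ℝ (u j) := fun j => (hC2 j).differentiable (by norm_num)
  have hd2 : ∀ j, Differentiable ℝ (deriv (u j)) := fun j => contDiff_two_deriv_diff _ (hC2 j)
  set S : ℝ → ℝ := fun t => ∑ j, σ j * u j t with hSdef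
  set S' : ℝ → ℝ := fun t => ∑ j, σ j * deriv (u j) t with hS'def
  have hS : ∀ t, HasDerivAt S (S' t) t := fun t =>
    HasDerivAt.fun_sum (fun j _ => ((hd1 j t).hasDerivAt.const_mul (σ j)))
  have hS' : ∀ t, HasDerivAt S' (∑ j, σ j * deriv (deriv (u j)) t) t := fun t =>
    HasDerivAt.fun_sum (fun j _ => ((hd2 j t).hasDerivAt.const_mul (σ j)))
  have hv0 : ∀ j t, T0 ≤ t → 0 ≤ σ j * u j t := fun j t ht => hT j t ((hT0 j).trans ht)
  -- component rewrite
  have hcomp : ∀ (j : Fin N) (t : ℝ), σ j * deriv (deriv (u j)) t =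
      -(μ j * (σ j * u j t) ^ 3 +
        ∑ i ∈ Finset.univ.erase j, B i j * (σ i * u i t) ^ 2 * (σ j * u j t)) := by
    intro j t
    have h1 : deriv (deriv (u j)) t =
        -(μ j * u j t ^ 3 + ∑ i ∈ Finset.univ.erase j, B i j * u i t ^ 2 * u j t) := by
      have := heq j t; linarith
    rw [h1]
    rw [mul_neg, neg_inj, mul_add, Finset.mul_sum]
    congr 1
    · rcases hσ j with h | h <;> rw [h] <;> ring
    · refine Finset.sum_congr rfl fun i _ => ?_
      rcases hσ i with hi | hi <;> rcases hσ j with hj | hj <;> rw [hi, hj] <;> ring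
  -- key differential inequality
  have hkey : ∀ t, T0 ≤ t →
      (∑ j, σ j * deriv (deriv (u j)) t) ≤ -((m / 2) * ∑ j, (σ j * u j t) ^ 3) := by
    intro t ht
    have h1 : (∑ j, σ j * deriv (deriv (u j)) t) =
        -∑ j, (μ j * (σ j * u j t) ^ 3 +
          ∑ i ∈ Finset.univ.erase j, B i j * (σ i * u i t) ^ 2 * (σ j * u j t)) := by
      rw [← Finset.sum_neg_distrib]
      exact Finset.sum_congr rfl fun j _ => hcomp j t
    have h2 := key_ineq N hN μ B m ε hm hmle hεdef (fun i j hij => (hBr i j hij).1)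
      (fun j => σ j * u j t) (fun j => hv0 j t ht)
    rw [h1]
    linarith
  have hWnn : ∀ t, T0 ≤ t → 0 ≤ ∑ j, (σ j * u j t) ^ 3 := fun t ht =>
    Finset.sum_nonneg fun j _ => pow_nonneg (hv0 j t ht) 3
  have hSnn : ∀ t, T0 ≤ t → 0 ≤ S t := fun t ht =>
    Finset.sum_nonneg fun j _ => hv0 j t ht
  have hS'diff : Differentiable ℝ S' := fun t => (hS' t).differentiableAt
  have hSdiff : Differentiable ℝ S := fun t => (hS t).differentiableAt
  -- S' is antitone on [T0, ∞)
  have hanti : AntitoneOn S' (Set.Ici T0) := by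
    refine antitoneOn_of_deriv_nonpos (convex_Ici T0) hS'diff.continuous.continuousOn
      hS'diff.differentiableOn ?_
    intro x hx
    rw [interior_Ici] at hx
    rw [(hS' x).deriv]
    have h1 := hkey x (le_of_lt hx)
    have h2 := hWnn x (le_of_lt hx)
    nlinarith
  -- S' is nonnegative on [T0, ∞)
  have hS'nn : ∀ t, T0 ≤ t → 0 ≤ S' t := by
    intro t2 ht2
    by_contra hneg
    push_neg at hneg
    set c := S' t2 with hcdef
    have hL : AntitoneOn (fun t => S t - c * t) (Set.Ici t2) := by
      have hdf : Differentiable ℝ (fun t => S t - c * t) :=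
        hSdiff.sub (differentiable_id.const_mul c)
      refine antitoneOn_of_deriv_nonpos (convex_Ici t2)
        hdf.continuous.continuousOn hdf.differentiableOn ?_
      intro x hx
      rw [interior_Ici] at hx
      have hD : HasDerivAt (fun t => S t - c * t) (S' x - c) x := by
        simpa using (hS x).fun_sub ((hasDerivAt_id' x).const_mul c)
      rw [hD.deriv]
      have : S' x ≤ S' t2 := hanti ht2 (ht2.trans (le_of_lt hx)) (le_of_lt hx)
      simp only [hcdef]
      linarith
    set t3 := t2 + (S t2 + 1) / (-c) with ht3def
    have hc0 : 0 < -c := by linarith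
    have hS2nn : 0 ≤ S t2 := hSnn t2 ht2
    have ht23 : t2 ≤ t3 := by
      rw [ht3def]
      have : 0 ≤ (S t2 + 1) / (-c) := by positivity
      linarith
    have hLle : S t3 - c * t3 ≤ S t2 - c * t2 := hL (Set.self_mem_Ici) ht23 ht23
    have hval : c * (t3 - t2) = -(S t2 + 1) := by
      rw [ht3def]
      have hc' : c ≠ 0 := by linarith
      field_simp
      ring
    have : S t3 ≤ -1 := by nlinarith [hLle, hval]
    have := hSnn t3 (ht2.trans ht23)
    linarith
  -- S is monotone on [T0, ∞)
  have hSmono : MonotoneOn S (Set.Ici T0) := by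
    refine monotoneOn_of_deriv_nonneg (convex_Ici T0) hSdiff.continuous.continuousOn
      hSdiff.differentiableOn ?_
    intro x hx
    rw [interior_Ici] at hx
    rw [(hS x).deriv]
    exact hS'nn x (le_of_lt hx)
  -- S vanishes on [T0, ∞)
  have hS0 : ∀ t, T0 ≤ t → S t = 0 := by
    intro t1 ht1
    by_contra hne
    have hpos : 0 < S t1 := lt_of_le_of_ne (hSnn t1 ht1) (Ne.symm hne)
    set δ := S t1 with hδdef
    have hW : ∀ t, t1 ≤ t → (δ / N) ^ 3 ≤ ∑ j, (σ j * u j t) ^ 3 := by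
      intro t ht
      have htT0 : T0 ≤ t := ht1.trans ht
      have hSt : δ ≤ S t := hSmono ht1 htT0 ht
      have hex : ∃ j, δ / (N:ℝ) ≤ σ j * u j t := by
        by_contra hc
        push_neg at hc
        have hlt : S t < ∑ _j : Fin N, δ / N :=
          Finset.sum_lt_sum_of_nonempty Finset.univ_nonempty (fun j _ => hc j)
        have : (∑ _j : Fin N, δ / (N:ℝ)) = δ := by
          rw [Finset.sum_const, Finset.card_univ, Fintype.card_fin, nsmul_eq_mul]
          field_simp
        rw [this] at hlt
        linarith
      obtain ⟨j, hj⟩ := hex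
      calc (δ / N) ^ 3 ≤ (σ j * u j t) ^ 3 := pow_le_pow_left₀ (by positivity) hj 3
        _ ≤ ∑ i, (σ i * u i t) ^ 3 :=
          Finset.single_le_sum (fun i _ => pow_nonneg (hv0 i t htT0) 3) (Finset.mem_univ j)
    set c := (m / 2) * (δ / N) ^ 3 with hcdef
    have hc0 : 0 < c := by positivity
    have hg : AntitoneOn (fun t => S' t + c * t) (Set.Ici t1) := by
      have hdf : Differentiable ℝ (fun t => S' t + c * t) :=
        hS'diff.add (differentiable_id.const_mul c)
      refine antitoneOn_of_deriv_nonpos (convex_Ici t1)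
        hdf.continuous.continuousOn hdf.differentiableOn ?_
      intro x hx
      rw [interior_Ici] at hx
      have hD : HasDerivAt (fun t => S' t + c * t) ((∑ j, σ j * deriv (deriv (u j)) x) + c) x := by
        simpa using (hS' x).fun_add ((hasDerivAt_id' x).const_mul c)
      rw [hD.deriv]
      have h1 := hkey x (ht1.trans (le_of_lt hx))
      have h2 := hW x (le_of_lt hx)
      have h3 : (m / 2) * (δ / N) ^ 3 ≤ (m / 2) * ∑ j, (σ j * u j x) ^ 3 :=
        mul_le_mul_of_nonneg_left h2 (by positivity)
      simp only [hcdef]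
      linarith
    set t4 := t1 + (S' t1 + 1) / c with ht4def
    have hS'1 : 0 ≤ S' t1 := hS'nn t1 ht1
    have ht14 : t1 ≤ t4 := by
      rw [ht4def]
      have : 0 ≤ (S' t1 + 1) / c := by positivity
      linarith
    have hgle : S' t4 + c * t4 ≤ S' t1 + c * t1 := hg Set.self_mem_Ici ht14 ht14
    have hval : c * (t4 - t1) = S' t1 + 1 := by
      rw [ht4def]
      field_simp
      ring
    have : S' t4 ≤ -1 := by nlinarith [hgle, hval]
    have := hS'nn t4 (ht1.trans ht14)
    linarith
  -- each u j vanishes on [T0, ∞)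
  have huz : ∀ j t, T0 ≤ t → u j t = 0 := by
    intro j t ht
    have h0 : ∑ i, σ i * u i t = 0 := hS0 t ht
    have h1 := (Finset.sum_eq_zero_iff_of_nonneg (fun i _ => hv0 i t ht)).mp h0 j
      (Finset.mem_univ j)
    rcases hσ j with h | h <;> rw [h] at h1 <;> linarith
  -- conclude for all t by backward uniqueness
  intro j t
  rcases le_or_gt t (T0 + 1) with hle | hgt
  · -- use vanish_backward
    set g : ℝ → ℝ := fun s => μ j * u j s ^ 2 + ∑ i ∈ Finset.univ.erase j, B i j * u i s ^ 2
      with hgdef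
    set G : ℝ := μ j + N * (ε + β) with hGdef
    have hGb : ∀ s, |g s| ≤ G := by
      intro s
      have h1 : |μ j * u j s ^ 2| ≤ μ j := by
        rw [abs_mul, abs_of_pos (hμ j), abs_pow]
        have h0 : |u j s| ^ 2 ≤ 1 := by nlinarith [hb j s, abs_nonneg (u j s)]
        nlinarith [hμ j, h0]
      have h2 : |∑ i ∈ Finset.univ.erase j, B i j * u i s ^ 2| ≤ N * (ε + β) := by
        calc |∑ i ∈ Finset.univ.erase j, B i j * u i s ^ 2|
            ≤ ∑ i ∈ Finset.univ.erase j, |B i j * u i s ^ 2| :=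
              Finset.abs_sum_le_sum_abs _ _
          _ ≤ ∑ _i ∈ Finset.univ.erase j, (ε + β) := by
              refine Finset.sum_le_sum fun i hi => ?_
              have hij : i ≠ j := Finset.ne_of_mem_erase hi
              have hB := hBr i j hij
              have hBa : |B i j| ≤ ε + β := abs_le.mpr ⟨by linarith, by linarith⟩
              have hua : |u i s ^ 2| ≤ 1 := by
                rw [abs_pow]
                have := hb i s
                nlinarith [abs_nonneg (u i s)]
              calc |B i j * u i s ^ 2| = |B i j| * |u i s ^ 2| := abs_mul _ _
                _ ≤ (ε + β) * 1 := by
                    exact mul_le_mul hBa hua (abs_nonneg _) (by linarith [abs_nonneg (B i j)])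
                _ = ε + β := mul_one _
          _ ≤ N * (ε + β) := by
              rw [Finset.sum_const, nsmul_eq_mul]
              have hcard : ((Finset.univ.erase j).card : ℝ) ≤ N := by
                have h := Finset.card_erase_le (s := (Finset.univ : Finset (Fin N))) (a := j)
                have h2 : (Finset.univ : Finset (Fin N)).card = N := by simp
                have h3 : (Finset.univ.erase j).card ≤ N := le_trans h (le_of_eq h2)
                exact_mod_cast h3
              have : (0:ℝ) ≤ ε + β := by linarith
              nlinarith
      calc |g s| ≤ |μ j * u j s ^ 2| + |∑ i ∈ Finset.univ.erase j, B i j * u i s ^ 2| :=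
          abs_add_le _ _
        _ ≤ G := by rw [hGdef]; linarith
    have hgeq : ∀ s, deriv (deriv (u j)) s = -(g s) * u j s := by
      intro s
      have h1 : deriv (deriv (u j)) s =
          -(μ j * u j s ^ 3 + ∑ i ∈ Finset.univ.erase j, B i j * u i s ^ 2 * u j s) := by
        have := heq j s; linarith
      rw [h1, hgdef]
      rw [neg_mul, neg_inj, add_mul, Finset.sum_mul]
      congr 1
      · ring
    have ha : u j (T0 + 1) = 0 := huz j _ (by linarith)
    have ha' : deriv (u j) (T0 + 1) = 0 := by
      have hev : u j =ᶠ[nhds (T0 + 1)] (fun _ => 0) := by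
        refine Filter.eventually_of_mem (Ioi_mem_nhds (by linarith : T0 < T0 + 1)) ?_
        intro s hs
        exact huz j s (le_of_lt hs)
      rw [hev.deriv_eq]
      simp
    exact vanish_backward (u j) g (hC2 j) G hGb hgeq (T0 + 1) ha ha' t hle
  · exact huz j t (by linarith)

theorem liouville_1d_line (N : ℕ) (hN : 2 ≤ N) (μ : Fin N → ℝ) (hμ : ∀ j, 0 < μ j)
    (P : Fin N → ℕ) (β : ℝ) (hβ : 0 ≤ β) :
    ∃ ε₂ : ℝ, 0 < ε₂ ∧
      ∀ B : Fin N → Fin N → ℝ,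
        (∀ i j, i ≠ j → B i j = B j i) →
        (∀ i j, i ≠ j → -ε₂ ≤ B i j ∧ B i j ≤ β) →
        ∀ u : Fin N → ℝ → ℝ,
          (∀ j, ContDiff ℝ 2 (u j)) →
          (∀ j t, |u j t| ≤ 1) →
          (∀ j, (∀ t, u j t = 0) ∨ ChangesSignAtMost1D (u j) Set.univ (P j)) →
          (∀ j t, -deriv (deriv (u j)) t =
              μ j * u j t ^ 3 + ∑ i ∈ Finset.univ.erase j, B i j * u i t ^ 2 * u j t) →
          ∀ j t, u j t = 0 := by
  haveI : Nonempty (Fin N) := ⟨⟨0, by omega⟩⟩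
  set m := Finset.univ.inf' Finset.univ_nonempty μ with hmdef
  obtain ⟨j0, -, hj0⟩ := Finset.exists_mem_eq_inf' Finset.univ_nonempty μ
  have hm : 0 < m := by rw [hmdef, hj0]; exact hμ j0
  have hmle : ∀ j, m ≤ μ j := fun j => Finset.inf'_le μ (Finset.mem_univ j)
  have hNpos : (0:ℝ) < N := by
    have : 0 < N := by omega
    exact_mod_cast this
  refine ⟨m / (4 * N), by positivity, ?_⟩
  intro B _ hBr u hC2 hb hsign heq
  have hsgn : ∀ j, ∃ σ : ℝ, ∃ T : ℝ, (σ = 1 ∨ σ = -1) ∧ ∀ t, T ≤ t → 0 ≤ σ * u j t := by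
    intro j
    rcases hsign j with h0 | hcs
    · exact ⟨1, 0, Or.inl rfl, fun t _ => by rw [h0 t]; simp⟩
    · obtain ⟨T, hT⟩ := tail_sign _ _ hcs
      rcases hT with h | h
      · exact ⟨1, T, Or.inl rfl, fun t ht => by simpa using h t ht⟩
      · exact ⟨-1, T, Or.inr rfl, fun t ht => by have := h t ht; nlinarith⟩
  choose σ T hσ hT using hsgn
  exact main_analysis N hN μ hμ β hβ m hm hmle B hBr u hC2 hb heq σ T hσ hT
end

section
/- Let N ≥ 2, let μ₁,…,μ_N > 0 be constants, let P₁,…,P_N ∈ ℕ, and suppose the real constants β_{ij} = β_{ji} (for i ≠ j) satisfy β_{ij} ≥ 0. If u₁,…,u_N : ℝ → ℝ are functions of class C² such that for every j one has |u_j(t)| ≤ 1 for all t ∈ ℝ, u_j is either identically zero or changes sign at most P_j times, and −u_j'' = μ_j u_j³ + Σ_{i≠j} β_{ij} u_i² u_j holds pointwise on ℝ, then u_j ≡ 0 for every j = 1,…,N. -/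
open scoped BigOperators

lemma alt_witness_aux (u : ℝ → ℝ) (D : Set ℝ)
    (Hpos : ∀ x ∈ D, ∃ a ∈ D, x < a ∧ 0 < u a)
    (Hneg : ∀ x ∈ D, ∃ b ∈ D, x < b ∧ u b < 0)
    (hne : D.Nonempty) :
    ∀ k, ∃ t : Fin (k + 1) → ℝ, StrictMono t ∧
      (∀ i : Fin k, u (t i.castSucc) * u (t i.succ) < 0) ∧
      t (Fin.last k) ∈ D ∧ u (t (Fin.last k)) ≠ 0 := by
  intro k
  induction k with
  | zero =>
    obtain ⟨x, hx⟩ := hne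
    obtain ⟨a, haD, _, ha⟩ := Hpos x hx
    refine ⟨fun _ => a, ?_, fun i => i.elim0, haD, ne_of_gt ha⟩
    intro i j hij
    exact absurd hij (by omega)
  | succ k ih =>
    obtain ⟨t, hmono, halt, hD, hne0⟩ := ih
    set L := t (Fin.last k) with hL
    obtain ⟨c, hcD, hLc, hc⟩ : ∃ c ∈ D, L < c ∧ u L * u c < 0 := by
      rcases lt_or_gt_of_ne hne0 with hneg0 | hpos0
      · obtain ⟨a, haD, hLa, ha⟩ := Hpos L hD
        exact ⟨a, haD, hLa, mul_neg_of_neg_of_pos hneg0 ha⟩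
      · obtain ⟨b, hbD, hLb, hb⟩ := Hneg L hD
        exact ⟨b, hbD, hLb, mul_neg_of_pos_of_neg hpos0 hb⟩
    refine ⟨Fin.snoc t c, ?_, ?_, ?_, ?_⟩
    · rw [Fin.strictMono_iff_lt_succ]
      intro i
      refine Fin.lastCases ?_ ?_ i
      · rw [Fin.succ_last]
        simp only [Fin.snoc_castSucc, Fin.snoc_last]
        exact hLc
      · intro j
        rw [Fin.succ_castSucc]
        simp only [Fin.snoc_castSucc]
        exact hmono Fin.castSucc_lt_succ
    · intro i
      refine Fin.lastCases ?_ ?_ i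
      · rw [Fin.succ_last]
        simp only [Fin.snoc_castSucc, Fin.snoc_last]
        exact hc
      · intro j
        rw [Fin.succ_castSucc]
        simp only [Fin.snoc_castSucc]
        exact halt j
    · simp only [Fin.snoc_last]; exact hcD
    · simp only [Fin.snoc_last]
      intro h
      rw [h, mul_zero] at hc
      exact lt_irrefl _ hc

/-- A function with at most `P` sign changes eventually has a constant sign on a right ray. -/
lemma exists_ray_sign (u : ℝ → ℝ) (P : ℕ)
    (hP : ChangesSignAtMost1D u Set.univ P) :
    ∃ T : ℝ, (∀ t, T ≤ t → 0 ≤ u t) ∨ (∀ t, T ≤ t → u t ≤ 0) := by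
  by_contra h
  push_neg at h
  apply hP
  have Hpos : ∀ x ∈ (Set.univ : Set ℝ), ∃ a ∈ (Set.univ : Set ℝ), x < a ∧ 0 < u a := by
    intro x _
    obtain ⟨_, ⟨a, ha1, ha2⟩⟩ := h (x + 1)
    exact ⟨a, trivial, by linarith, ha2⟩
  have Hneg : ∀ x ∈ (Set.univ : Set ℝ), ∃ b ∈ (Set.univ : Set ℝ), x < b ∧ u b < 0 := by
    intro x _
    obtain ⟨⟨b, hb1, hb2⟩, _⟩ := h (x + 1)
    exact ⟨b, trivial, by linarith, hb2⟩
  obtain ⟨t, hm, halt, _, _⟩ := alt_witness_aux u Set.univ Hpos Hneg ⟨0, trivial⟩ (P + 1)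
  exact ⟨t, fun i => trivial, hm, halt⟩

/-- A function with at most `P` sign changes has constant sign on some interval `(T', S)`. -/
lemma exists_left_window (u : ℝ → ℝ) (P : ℕ) (S : ℝ)
    (hP : ChangesSignAtMost1D u Set.univ P) :
    ∃ T' : ℝ, T' < S ∧
      ((∀ t ∈ Set.Ioo T' S, 0 ≤ u t) ∨ (∀ t ∈ Set.Ioo T' S, u t ≤ 0)) := by
  by_contra h
  push_neg at h
  apply hP
  have Hpos : ∀ x ∈ Set.Iio S, ∃ a ∈ Set.Iio S, x < a ∧ 0 < u a := by
    intro x hx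
    obtain ⟨_, ⟨a, ha1, ha2⟩⟩ := h x hx
    exact ⟨a, ha1.2, ha1.1, ha2⟩
  have Hneg : ∀ x ∈ Set.Iio S, ∃ b ∈ Set.Iio S, x < b ∧ u b < 0 := by
    intro x hx
    obtain ⟨⟨b, hb1, hb2⟩, _⟩ := h x hx
    exact ⟨b, hb1.2, hb1.1, hb2⟩
  obtain ⟨t, hm, halt, _, _⟩ :=
    alt_witness_aux u (Set.Iio S) Hpos Hneg ⟨S - 1, Set.mem_Iio.mpr (by linarith)⟩ (P + 1)
  exact ⟨t, fun i => trivial, hm, halt⟩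

/-- Key ray lemma: a bounded function, nonnegative on a right ray and satisfying
`v'' ≤ -m v³` there, cannot be positive anywhere on the ray. -/
lemma ray_lemma (v : ℝ → ℝ) (hv : ContDiff ℝ 2 v) (hb : ∀ t, |v t| ≤ 1)
    (m : ℝ) (hm : 0 < m) (T : ℝ)
    (hsign : ∀ t, T ≤ t → 0 ≤ v t)
    (hineq : ∀ t, T ≤ t → deriv (deriv v) t ≤ -m * v t ^ 3)
    (t₀ : ℝ) (ht₀ : T ≤ t₀) (hpos : 0 < v t₀) : False := by
  have hvd : Differentiable ℝ v := hv.differentiable (by norm_num)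
  have hW : Differentiable ℝ (deriv v) := by
    have h2 : ContDiff ℝ ((1 : WithTop ℕ∞) + 1) v := by
      exact_mod_cast hv
    exact ((contDiff_succ_iff_deriv.mp h2).2.2).differentiable one_ne_zero
  -- deriv v is nonnegative on [T, ∞)
  have hWanti : AntitoneOn (deriv v) (Set.Ici T) := by
    apply antitoneOn_of_deriv_nonpos (convex_Ici T) hW.continuous.continuousOn
      (hW.differentiableOn)
    intro x hx
    rw [interior_Ici] at hx
    have h1 := hineq x hx.le
    have h2 : 0 ≤ v x ^ 3 := pow_nonneg (hsign x hx.le) 3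
    nlinarith
  have hW0 : ∀ s, T ≤ s → 0 ≤ deriv v s := by
    intro s hs
    by_contra hneg
    push_neg at hneg
    have hg : AntitoneOn (fun t => v t - deriv v s * t) (Set.Ici s) := by
      refine antitoneOn_of_deriv_nonpos (convex_Ici s) ?_ ?_ ?_
      · exact (hvd.continuous.sub (continuous_const.mul continuous_id)).continuousOn
      · exact (hvd.sub (differentiable_id.const_mul _)).differentiableOn
      intro x hx
      rw [interior_Ici] at hx
      have hder : HasDerivAt (fun t => v t - deriv v s * t)
          (deriv v x - deriv v s * 1) x :=
        (hvd x).hasDerivAt.sub ((hasDerivAt_id x).const_mul (deriv v s))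
      rw [hder.deriv]
      have := hWanti (Set.mem_Ici.mpr hs) (Set.mem_Ici.mpr (le_trans hs hx.le)) hx.le
      linarith
    have hlin : ∀ t', s ≤ t' → v t' ≤ v s + deriv v s * (t' - s) := by
      intro t' ht'
      have h0 := hg (Set.self_mem_Ici) (Set.mem_Ici.mpr ht') ht'
      simp only at h0
      have hr : deriv v s * (t' - s) = deriv v s * t' - deriv v s * s := by ring
      linarith
    set a := -deriv v s with ha
    have ha0 : 0 < a := by rw [ha]; linarith
    have hvs : -1 ≤ v s := (abs_le.mp (hb s)).1
    set t := s + (v s + 2) / a with htdef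
    have hnum : (0:ℝ) ≤ (v s + 2) / a := div_nonneg (by linarith) ha0.le
    have hts : s ≤ t := by rw [htdef]; exact le_add_of_nonneg_right hnum
    have e : deriv v s * (t - s) = -(v s + 2) := by
      rw [htdef, ha]
      field_simp
      rw [show s + -((v s + 2) / deriv v s) - s = -((v s + 2) / deriv v s) by ring, mul_neg,
        mul_div_cancel₀ _ hneg.ne]
    have hvt : v t ≤ -2 := by
      have := hlin t hts
      rw [e] at this
      linarith
    have := (abs_le.mp (hb t)).1
    linarith
  -- v is monotone on [T, ∞), hence v ≥ c := v t₀ > 0 beyond t₀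
  have hmono : MonotoneOn v (Set.Ici T) :=
    monotoneOn_of_deriv_nonneg (convex_Ici T) hvd.continuous.continuousOn
      hvd.differentiableOn
      (fun x hx => hW0 x (by rw [interior_Ici] at hx; exact hx.le))
  set c := v t₀ with hc
  have hge : ∀ t, t₀ ≤ t → c ≤ v t := fun t ht =>
    hmono (Set.mem_Ici.mpr ht₀) (Set.mem_Ici.mpr (le_trans ht₀ ht)) ht
  have hmc : 0 < m * c ^ 3 := by positivity
  -- second linear bound: deriv v eventually negative, contradiction
  have hg2 : AntitoneOn (fun t => deriv v t + m * c ^ 3 * t) (Set.Ici t₀) := by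
    refine antitoneOn_of_deriv_nonpos (convex_Ici t₀) ?_ ?_ ?_
    · exact (hW.continuous.add (continuous_const.mul continuous_id)).continuousOn
    · exact (hW.add (differentiable_id.const_mul _)).differentiableOn
    intro x hx
    rw [interior_Ici] at hx
    have hder : HasDerivAt (fun t => deriv v t + m * c ^ 3 * t)
        (deriv (deriv v) x + m * c ^ 3 * 1) x :=
      (hW x).hasDerivAt.add ((hasDerivAt_id x).const_mul (m * c ^ 3))
    rw [hder.deriv]
    have h1 := hineq x (le_trans ht₀ hx.le)
    have h2 : c ^ 3 ≤ v x ^ 3 := pow_le_pow_left₀ hpos.le (hge x hx.le) 3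
    nlinarith
  set t₁ := t₀ + (deriv v t₀ + 1) / (m * c ^ 3) with ht₁def
  have h0 := hW0 t₀ ht₀
  have hnum : (0:ℝ) ≤ (deriv v t₀ + 1) / (m * c ^ 3) := div_nonneg (by linarith) hmc.le
  have ht₁ : t₀ ≤ t₁ := by rw [ht₁def]; exact le_add_of_nonneg_right hnum
  have hineq3 := hg2 (Set.self_mem_Ici) (Set.mem_Ici.mpr ht₁) ht₁
  simp only at hineq3
  have key : m * c ^ 3 * (t₁ - t₀) = deriv v t₀ + 1 := by
    rw [ht₁def]
    field_simp
    ring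
  have : deriv v t₁ ≤ -1 := by nlinarith
  have := hW0 t₁ (le_trans ht₀ ht₁)
  linarith

/-- Core single-function lemma, positivity case. -/
lemma core_pos (v : ℝ → ℝ) (hv : ContDiff ℝ 2 v) (hb : ∀ t, |v t| ≤ 1)
    (m : ℝ) (hm : 0 < m)
    (h1 : ∀ t, 0 ≤ v t → deriv (deriv v) t ≤ -m * v t ^ 3)
    (h2 : ∀ t, v t ≤ 0 → -m * v t ^ 3 ≤ deriv (deriv v) t)
    (P : ℕ) (hP : ChangesSignAtMost1D v Set.univ P)
    (t₀ : ℝ) (ht₀ : 0 < v t₀) : False := by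
  have hvd : Differentiable ℝ v := hv.differentiable (by norm_num)
  have hW : Differentiable ℝ (deriv v) := by
    have h2' : ContDiff ℝ ((1 : WithTop ℕ∞) + 1) v := by exact_mod_cast hv
    exact ((contDiff_succ_iff_deriv.mp h2').2.2).differentiable one_ne_zero
  -- second derivative of -v
  have e1 : deriv (fun t => -v t) = fun t => -deriv v t := funext fun t => deriv.neg
  have e2 : ∀ t, deriv (deriv (fun t => -v t)) t = -deriv (deriv v) t := by
    intro t
    rw [e1]
    exact deriv.neg
  -- if v is nonneg on a right ray, it is zero there
  have noPos : ∀ T, (∀ t, T ≤ t → 0 ≤ v t) → ∀ s, T ≤ s → v s = 0 := by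
    intro T hT s hs
    by_contra hne
    have hpos : 0 < v s := lt_of_le_of_ne (hT s hs) (Ne.symm hne)
    exact ray_lemma v hv hb m hm T hT (fun t ht => h1 t (hT t ht)) s hs hpos
  -- if v is nonpos on a right ray, it is zero there
  have noNeg : ∀ T, (∀ t, T ≤ t → v t ≤ 0) → ∀ s, T ≤ s → v s = 0 := by
    intro T hT s hs
    by_contra hne
    have hneg : 0 < -v s := by
      have := lt_of_le_of_ne (hT s hs) hne
      linarith
    refine ray_lemma (fun t => -v t) hv.neg (fun t => by rw [abs_neg]; exact hb t)
      m hm T (fun t ht => by simpa using hT t ht) ?_ s hs hneg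
    intro t ht
    rw [e2 t]
    have := h2 t (hT t ht)
    have hcube : (-v t) ^ 3 = -(v t ^ 3) := by ring
    rw [hcube]
    linarith
  -- v vanishes on some right ray
  obtain ⟨T, hray⟩ := exists_ray_sign v P hP
  have hzeroT : ∀ t, T ≤ t → v t = 0 := by
    rcases hray with h | h
    · exact noPos T h
    · exact noNeg T h
  -- S := sup of the set where v is positive
  set A := {t : ℝ | 0 < v t} with hA
  have hAne : A.Nonempty := ⟨t₀, ht₀⟩
  have hAbdd : BddAbove A := by
    refine ⟨T, fun a ha => ?_⟩
    by_contra hc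
    push_neg at hc
    have := hzeroT a hc.le
    simp only [hA, Set.mem_setOf_eq] at ha
    linarith
  set S := sSup A with hS
  have hle : ∀ t, S < t → v t ≤ 0 := by
    intro t ht
    by_contra hc
    push_neg at hc
    have : t ≤ S := le_csSup hAbdd hc
    linarith
  have hS0 : v S ≤ 0 := by
    have htend : Filter.Tendsto v (nhdsWithin S (Set.Ioi S)) (nhds (v S)) :=
      (hvd.continuous.tendsto S).mono_left nhdsWithin_le_nhds
    refine le_of_tendsto htend ?_
    exact eventually_mem_nhdsWithin.mono fun t ht => hle t ht
  have hvS : ∀ t, S ≤ t → v t ≤ 0 := by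
    intro t ht
    rcases eq_or_lt_of_le ht with rfl | h
    · exact hS0
    · exact hle t h
  have hzeroS : ∀ t, S ≤ t → v t = 0 := noNeg S hvS
  -- deriv v S = 0
  have hderivS : deriv v S = 0 := by
    have hconst : HasDerivWithinAt v 0 (Set.Ici S) S := by
      exact (hasDerivWithinAt_const S (Set.Ici S) (0 : ℝ)).congr
        (fun y hy => hzeroS y hy) (hzeroS S le_rfl)
    have hd : HasDerivWithinAt v (deriv v S) (Set.Ici S) S :=
      (hvd S).hasDerivAt.hasDerivWithinAt
    have u1 := hconst.derivWithin (uniqueDiffOn_Ici S S Set.self_mem_Ici)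
    have u2 := hd.derivWithin (uniqueDiffOn_Ici S S Set.self_mem_Ici)
    rw [← u2, u1]
  -- constant sign window to the left of S
  obtain ⟨T', hT'S, hwin⟩ := exists_left_window v P S hP
  -- a point of A close below S
  obtain ⟨a, haA, hT'a⟩ := exists_lt_of_lt_csSup hAne hT'S
  have hva : 0 < v a := haA
  have haS : a < S := by
    rcases lt_or_ge a S with h | h
    · exact h
    · exfalso; have := hzeroS a h; linarith
  have hnn : ∀ t ∈ Set.Ioo T' S, 0 ≤ v t := by
    rcases hwin with h | h
    · exact h
    · exfalso
      have := h a ⟨hT'a, haS⟩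
      linarith
  have hnn' : ∀ t ∈ Set.Icc a S, 0 ≤ v t := by
    rintro t ⟨hta, htS⟩
    rcases eq_or_lt_of_le htS with heq | h
    · exact (hzeroS t heq.ge).ge
    · exact hnn t ⟨lt_of_lt_of_le hT'a hta, h⟩
  -- deriv v is antitone on [a,S]; since deriv v S = 0, deriv v ≥ 0 there
  have hanti : AntitoneOn (deriv v) (Set.Icc a S) := by
    apply antitoneOn_of_deriv_nonpos (convex_Icc a S) hW.continuous.continuousOn
      hW.differentiableOn
    intro x hx
    rw [interior_Icc] at hx
    have hx' : x ∈ Set.Icc a S := ⟨hx.1.le, hx.2.le⟩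
    have hvx := hnn' x hx'
    have := h1 x hvx
    have h3 : 0 ≤ v x ^ 3 := pow_nonneg hvx 3
    nlinarith
  have hWnn : ∀ x ∈ Set.Icc a S, 0 ≤ deriv v x := by
    intro x hx
    have := hanti hx (Set.right_mem_Icc.mpr haS.le) hx.2
    rw [hderivS] at this
    exact this
  have hmono2 : MonotoneOn v (Set.Icc a S) :=
    monotoneOn_of_deriv_nonneg (convex_Icc a S) hvd.continuous.continuousOn
      hvd.differentiableOn
      (fun x hx => hWnn x (by rw [interior_Icc] at hx; exact ⟨hx.1.le, hx.2.le⟩))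
  have : v a ≤ v S :=
    hmono2 (Set.left_mem_Icc.mpr haS.le) (Set.right_mem_Icc.mpr haS.le) haS.le
  have := hzeroS S le_rfl
  linarith

/-- Core single-function lemma. -/
lemma core_zero (v : ℝ → ℝ) (hv : ContDiff ℝ 2 v) (hb : ∀ t, |v t| ≤ 1)
    (m : ℝ) (hm : 0 < m)
    (h1 : ∀ t, 0 ≤ v t → deriv (deriv v) t ≤ -m * v t ^ 3)
    (h2 : ∀ t, v t ≤ 0 → -m * v t ^ 3 ≤ deriv (deriv v) t)
    (P : ℕ) (hP : ChangesSignAtMost1D v Set.univ P) :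
    ∀ t, v t = 0 := by
  intro t
  by_contra hne
  rcases lt_or_gt_of_ne hne with hlt | hgt
  · -- v t < 0 : apply core_pos to -v
    have e1 : deriv (fun s => -v s) = fun s => -deriv v s := funext fun s => deriv.neg
    have e2 : ∀ s, deriv (deriv (fun s => -v s)) s = -deriv (deriv v) s := by
      intro s
      rw [e1]
      exact deriv.neg
    refine core_pos (fun s => -v s) hv.neg (fun s => by rw [abs_neg]; exact hb s)
      m hm ?_ ?_ P ?_ t (by show (0:ℝ) < -v t; linarith)
    · intro s hs
      rw [e2 s]
      have hvs : v s ≤ 0 := by simpa using hs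
      have := h2 s hvs
      have hcube : (-v s) ^ 3 = -(v s ^ 3) := by ring
      rw [hcube]
      linarith
    · intro s hs
      rw [e2 s]
      have hvs : 0 ≤ v s := by simpa using hs
      have := h1 s hvs
      have hcube : (-v s) ^ 3 = -(v s ^ 3) := by ring
      rw [hcube]
      linarith
    · rintro ⟨tt, hmem, hm, half⟩
      exact hP ⟨tt, hmem, hm, fun i => by
        have := half i
        simpa [neg_mul_neg] using this⟩
  · exact core_pos v hv hb m hm h1 h2 P hP t hgt

theorem liouville_1d_line_nonneg (N : ℕ) (hN : 2 ≤ N) (μ : Fin N → ℝ) (hμ : ∀ j, 0 < μ j)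
    (P : Fin N → ℕ) (B : Fin N → Fin N → ℝ)
    (hBsymm : ∀ i j, i ≠ j → B i j = B j i)
    (hBpos : ∀ i j, i ≠ j → 0 ≤ B i j) :
        ∀ u : Fin N → ℝ → ℝ,
          (∀ j, ContDiff ℝ 2 (u j)) →
          (∀ j t, |u j t| ≤ 1) →
          (∀ j, (∀ t, u j t = 0) ∨ ChangesSignAtMost1D (u j) Set.univ (P j)) →
          (∀ j t, -deriv (deriv (u j)) t =
              μ j * u j t ^ 3 + ∑ i ∈ Finset.univ.erase j, B i j * u i t ^ 2 * u j t) →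
          ∀ j t, u j t = 0 := by
  intro u hu hb hsign heq j t
  rcases hsign j with h0 | hP
  · exact h0 t
  · refine core_zero (u j) (hu j) (hb j) (μ j) (hμ j) ?_ ?_ (P j) hP t
    · intro s hs
      have he := heq j s
      have hsum : 0 ≤ ∑ i ∈ Finset.univ.erase j, B i j * u i s ^ 2 * u j s := by
        apply Finset.sum_nonneg
        intro i hi
        have hij : i ≠ j := (Finset.mem_erase.mp hi).1
        exact mul_nonneg (mul_nonneg (hBpos i j hij) (sq_nonneg _)) hs
      linarith
    · intro s hs
      have he := heq j s
      have hsum : (∑ i ∈ Finset.univ.erase j, B i j * u i s ^ 2 * u j s) ≤ 0 := by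
        apply Finset.sum_nonpos
        intro i hi
        have hij : i ≠ j := (Finset.mem_erase.mp hi).1
        exact mul_nonpos_of_nonneg_of_nonpos (mul_nonneg (hBpos i j hij) (sq_nonneg _)) hs
      linarith
end
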